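/- arXiv:1411.1785 — 8 statements merged into one kernel-verified Lean document; each statement's English description precedes it below -/
import Mathlib

section
/- Let N, N', L, d, n be natural numbers with L ≥ 1 and 1 ≤ N' ≤ N/2 + L, let M > 0, let λ, λ₁, …, λ_{N'} be positive reals with λᵢ ≥ λ for every i, let k₁, …, k_{N'} ∈ ℝ⁴, and let p⃗ be a finite tuple of vectors in ℝ⁴. Denote by (p⃗,ℓ) the tuple p⃗ with the vector ℓ appended, and let min_j λ_j, max_j λ_j run over j ∈ {1,…,N'}. Then ∫_ℓ e^{−‖ℓ‖²/λ²} · ∏_{i=1}^{N'} e^{−‖kᵢ+ℓ‖²/(α(N+2,L−1) λᵢ²)} · (log₊ max(|(p⃗,ℓ)|_M / min_j λ_j, (max_j λ_j)/M))ⁿ · Σ_{μ=0}^{d} (1/√(μ!)) (|(p⃗,ℓ)|/M)^μ ≤ 4π² λ⁴ · ∏_{i=1}^{N'} e^{−‖kᵢ‖²/(α(N,L) λᵢ²)} · [ (log₊ max(|p⃗|_M / min_j λ_j, (max_j λ_j)/M))ⁿ + √(n!) ] · (N'+1)^{(n+4)/2} · 2^d · max(1, λ/M)^d · Σ_{μ=0}^{d}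 (1/√(μ!)) (|p⃗|/M)^μ. -/
open MeasureTheory Real

/-- `log₊(x) = log(max(1,x))`. -/
noncomputable def logPlus (x : ℝ) : ℝ := Real.log (max 1 x)

/-- `α(N,L) = 2 (N/2 + 2L)²`. -/
noncomputable def alphaWeight (N L : ℕ) : ℝ := 2 * ((N : ℝ) / 2 + 2 * (L : ℝ)) ^ 2

/-- `|p⃗| = max over subsets I of ‖∑_{e∈I} p_e‖`. -/
noncomputable def tupleNorm {m : ℕ} (p : Fin m → EuclideanSpace ℝ (Fin 4)) : ℝ :=
  Finset.sup' (Finset.univ : Finset (Finset (Fin m))) ⟨∅, Finset.mem_univ _⟩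
    (fun I => ‖∑ e ∈ I, p e‖)

/-- `|p⃗|_M = max(|p⃗|, M)`. -/
noncomputable def tupleNormM (M : ℝ) {m : ℕ} (p : Fin m → EuclideanSpace ℝ (Fin 4)) : ℝ :=
  max (tupleNorm p) M

/-! ### Elementary scalar lemmas -/

lemma exp_taylor3 {s : ℝ} (hs : 0 ≤ s) : 1 + s + s^2/2 + s^3/6 ≤ Real.exp s := by
  have h := Real.sum_le_exp_of_nonneg hs 4
  have : ∑ i ∈ Finset.range 4, s ^ i / (Nat.factorial i) = 1 + s + s^2/2 + s^3/6 := by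
    norm_num [Finset.sum_range_succ, Nat.factorial]
    try ring
  linarith [this ▸ h]

lemma sq_log_le {t : ℝ} (ht : 0 ≤ t) : (Real.log (1+t))^2 ≤ t := by
  have h1 : (0:ℝ) < 1 + t := by linarith
  set s := Real.log (1+t) with hs
  have hs0 : 0 ≤ s := Real.log_nonneg (by linarith)
  have hexp : Real.exp s = 1 + t := Real.exp_log h1
  have h2 := exp_taylor3 hs0
  nlinarith [sq_nonneg s, sq_nonneg (s-3), mul_nonneg hs0 (sq_nonneg (s-3))]

lemma pow_le_pow_exp {y : ℝ} (hy : 0 ≤ y) (n : ℕ) : y^n ≤ (n:ℝ)^n * Real.exp (y - n) := by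
  rcases Nat.eq_zero_or_pos n with rfl | hn
  · simpa using Real.one_le_exp (by simpa using hy)
  rcases eq_or_lt_of_le hy with rfl | hy'
  · rw [zero_pow hn.ne']
    positivity
  have hn' : (0:ℝ) < n := by exact_mod_cast hn
  have key : y / n ≤ Real.exp (y/n - 1) := by
    have := Real.add_one_le_exp (y/n - 1)
    linarith
  have h2 : (y/n)^n ≤ (Real.exp (y/n - 1))^n :=
    pow_le_pow_left₀ (by positivity) key n
  rw [← Real.exp_nat_mul] at h2
  have h3 : (n:ℝ) * (y/n - 1) = y - n := by field_simp
  rw [h3] at h2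
  calc y^n = (n:ℝ)^n * (y/n)^n := by rw [← mul_pow]; field_simp
  _ ≤ (n:ℝ)^n * Real.exp (y - n) := by
      exact mul_le_mul_of_nonneg_left h2 (by positivity)

lemma pow_self_le_factorial_mul (n : ℕ) : (n:ℝ)^n ≤ (Nat.factorial n) * (Real.exp 1)^n := by
  induction n with
  | zero => simp
  | succ n ih =>
    have he : (0:ℝ) < Real.exp 1 := Real.exp_pos 1
    have step : ((n:ℝ)+1)^n ≤ (n:ℝ)^n * Real.exp 1 := by
      rcases Nat.eq_zero_or_pos n with rfl | hn
      · simpa using Real.one_le_exp (by norm_num)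
      have hn' : (0:ℝ) < n := by exact_mod_cast hn
      have h1 : (1:ℝ) + 1/n ≤ Real.exp (1/n) := by
        have := Real.add_one_le_exp (1/(n:ℝ)); linarith
      have h2 : ((1:ℝ) + 1/n)^n ≤ (Real.exp (1/n))^n :=
        pow_le_pow_left₀ (by positivity) h1 n
      rw [← Real.exp_nat_mul] at h2
      have : (n:ℝ) * (1/n) = 1 := by field_simp
      rw [this] at h2
      calc ((n:ℝ)+1)^n = (n:ℝ)^n * ((1:ℝ)+1/n)^n := by
            rw [← mul_pow]; field_simp
      _ ≤ (n:ℝ)^n * Real.exp 1 := by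
            exact mul_le_mul_of_nonneg_left h2 (by positivity)
    have hfn : (0:ℝ) ≤ (Nat.factorial n : ℝ) := by positivity
    calc ((n+1:ℕ):ℝ)^(n+1) = ((n:ℝ)+1) * ((n:ℝ)+1)^n := by push_cast; ring
    _ ≤ ((n:ℝ)+1) * ((n:ℝ)^n * Real.exp 1) := by
        apply mul_le_mul_of_nonneg_left step (by positivity)
    _ ≤ ((n:ℝ)+1) * ((Nat.factorial n * (Real.exp 1)^n) * Real.exp 1) := by
        apply mul_le_mul_of_nonneg_left (mul_le_mul_of_nonneg_right ih he.le) (by positivity)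
    _ = ((n+1:ℕ).factorial : ℝ) * (Real.exp 1)^(n+1) := by
        rw [Nat.factorial_succ]; push_cast; ring

lemma NL (n : ℕ) : ((42/5:ℝ)*n)^n ≤ 10^8 * ((Nat.factorial n : ℕ):ℝ)^2 := by
  rcases le_or_gt n 62 with h | h
  · interval_cases n <;> norm_num [Nat.factorial]
  · have hfac := pow_self_le_factorial_mul n
    have he2 : (Real.exp 1)^2 ≤ 7.389057 := by
      have h := Real.exp_one_lt_d9
      nlinarith [Real.exp_pos 1]
    have hn63 : (63:ℝ) ≤ (n:ℝ) := by exact_mod_cast h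
    have hnn : (0:ℝ) < (n:ℝ) := by linarith
    have hepos : (0:ℝ) < (Real.exp 1)^n := by positivity
    have hfac' : (n:ℝ)^n / (Real.exp 1)^n ≤ (Nat.factorial n : ℝ) := by
      rw [div_le_iff₀ hepos]; exact hfac
    have hfp : (0:ℝ) ≤ (n:ℝ)^n / (Real.exp 1)^n := by positivity
    have hsq : ((n:ℝ)^n / (Real.exp 1)^n)^2 ≤ ((Nat.factorial n : ℝ))^2 := by
      exact pow_le_pow_left₀ hfp hfac' 2
    have key : ((42/5:ℝ)*n)^n ≤ ((n:ℝ)^n / (Real.exp 1)^n)^2 := by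
      have e1 : ((n:ℝ)^n / (Real.exp 1)^n)^2 = ((n:ℝ)^2/(Real.exp 1)^2)^n := by
        rw [div_pow, div_pow, ← pow_mul, ← pow_mul, Nat.mul_comm]
        rw [pow_mul, pow_mul]
      rw [e1]
      apply pow_le_pow_left₀ (by positivity)
      rw [le_div_iff₀ (by positivity)]
      nlinarith [he2, hn63, sq_nonneg ((n:ℝ) - 63)]
    calc ((42/5:ℝ)*n)^n ≤ ((Nat.factorial n : ℝ))^2 := key.trans hsq
    _ ≤ 10^8 * ((Nat.factorial n : ℝ))^2 := by nlinarith [sq_nonneg ((Nat.factorial n : ℝ))]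

lemma PW2 (n : ℕ) {t : ℝ} (ht : 0 ≤ t) :
    ((1+Real.sqrt 2) * Real.log (1+t))^n
      ≤ 100 * Real.sqrt (Nat.factorial n) * Real.exp (3*t^2/8) := by
  have hs2 : Real.sqrt 2 ≤ 1.4142136 := by
    nlinarith [Real.sq_sqrt (by norm_num : (0:ℝ) ≤ 2), Real.sqrt_nonneg 2]
  have hs2' : (0:ℝ) ≤ Real.sqrt 2 := Real.sqrt_nonneg 2
  set κ : ℝ := 1 + Real.sqrt 2 with hκdef
  have hκ : (1:ℝ) ≤ κ := by simp only [hκdef]; linarith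
  have hu : 0 ≤ Real.log (1+t) := Real.log_nonneg (by linarith)
  set u : ℝ := Real.log (1+t) with hudef
  have hfac : (0:ℝ) ≤ (Nat.factorial n : ℝ) := by positivity
  have hRHS : (0:ℝ) ≤ 100 * Real.sqrt (Nat.factorial n) * Real.exp (3*t^2/8) := by positivity
  apply le_of_pow_le_pow_left₀ (n := 4) (by norm_num) hRHS
  have hu2 : u^2 ≤ t := sq_log_le ht
  have hu4 : u^4 ≤ t^2 := by
    calc u^4 = (u^2)^2 := by ring
    _ ≤ t^2 := pow_le_pow_left₀ (by positivity) hu2 2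
  have hκu : (0:ℝ) ≤ κ * u := by positivity
  have hκ4 : κ^4 ≤ 33.970564 := by
    have h2 : κ^2 = 3 + 2*Real.sqrt 2 := by
      simp only [hκdef]; nlinarith [Real.sq_sqrt (by norm_num : (0:ℝ) ≤ 2)]
    have h4 : κ^4 = (3 + 2*Real.sqrt 2)^2 := by
      rw [show κ^4 = (κ^2)^2 from by ring, h2]
    rw [h4]; nlinarith [hs2, hs2']
  have base : κ^4 * (2/3) * Real.exp (-1) ≤ 42/5 := by
    have he : (2.7182818:ℝ) < Real.exp 1 := by
      have := Real.exp_one_gt_d9; norm_num at this ⊢; linarith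
    have hprod : Real.exp (-1) * Real.exp 1 = 1 := by
      rw [← Real.exp_add]; norm_num
    have hem : (0:ℝ) < Real.exp (-1) := Real.exp_pos _
    nlinarith [mul_nonneg (sub_nonneg.mpr hκ4) hem.le]
  have hR4 : (100 * Real.sqrt (Nat.factorial n) * Real.exp (3*t^2/8))^4
      = 10^8 * ((Nat.factorial n : ℕ):ℝ)^2 * Real.exp (3*t^2/2) := by
    have e1 : (Real.exp (3*t^2/8))^4 = Real.exp (3*t^2/2) := by
      rw [← Real.exp_nat_mul]; congr 1; push_cast; ring
    rw [mul_pow, mul_pow, e1,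
      show (Real.sqrt ((Nat.factorial n : ℕ):ℝ))^4
        = ((Real.sqrt ((Nat.factorial n : ℕ):ℝ))^2)^2 from by ring,
      Real.sq_sqrt hfac]
    norm_num
  rw [hR4]
  calc ((κ*u)^n)^4 = (κ^4 * u^4)^n := by
        rw [← pow_mul, mul_comm n 4, pow_mul, mul_pow]
  _ ≤ (κ^4 * t^2)^n := by
      apply pow_le_pow_left₀ (by positivity)
      exact mul_le_mul_of_nonneg_left hu4 (by positivity)
  _ = (κ^4 * (2/3))^n * (3*t^2/2)^n := by
      rw [← mul_pow]; congr 1; ring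
  _ ≤ (κ^4 * (2/3))^n * ((n:ℝ)^n * Real.exp (3*t^2/2 - n)) :=
      mul_le_mul_of_nonneg_left (pow_le_pow_exp (by positivity) n) (by positivity)
  _ = ((κ^4 * (2/3)) * Real.exp (-1))^n * ((n:ℝ)^n * Real.exp (3*t^2/2)) := by
      rw [mul_pow (κ^4*(2/3)) (Real.exp (-1)) n]
      rw [show Real.exp (3*t^2/2 - n) = Real.exp (-1)^n * Real.exp (3*t^2/2) by
        rw [← Real.exp_nat_mul, ← Real.exp_add]; congr 1; push_cast; ring]
      ring
  _ ≤ (42/5)^n * ((n:ℝ)^n * Real.exp (3*t^2/2)) := by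
      apply mul_le_mul_of_nonneg_right _ (by positivity)
      exact pow_le_pow_left₀ (by positivity) base n
  _ = ((42/5)*(n:ℝ))^n * Real.exp (3*t^2/2) := by
      rw [mul_pow]; ring
  _ ≤ (10^8 * ((Nat.factorial n : ℕ):ℝ)^2) * Real.exp (3*t^2/2) :=
      mul_le_mul_of_nonneg_right (NL n) (Real.exp_pos _).le

lemma PW1 {a u : ℝ} (ha : 0 ≤ a) (hu : 0 ≤ u) (n : ℕ) :
    (a + u)^n ≤ Real.sqrt 2 ^ n * (a^n + ((1+Real.sqrt 2)*u)^n) := by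
  have hs2 : (Real.sqrt 2)^2 = 2 := Real.sq_sqrt (by norm_num)
  have hs2' : 0 ≤ Real.sqrt 2 := Real.sqrt_nonneg 2
  have hs1 : 1 ≤ Real.sqrt 2 := by nlinarith
  rcases le_total ((1+Real.sqrt 2)*u) a with h | h
  · have key : a + u ≤ Real.sqrt 2 * a := by nlinarith
    calc (a+u)^n ≤ (Real.sqrt 2 * a)^n := pow_le_pow_left₀ (by linarith) key n
    _ = Real.sqrt 2^n * a^n := mul_pow _ _ n
    _ ≤ Real.sqrt 2^n * (a^n + ((1+Real.sqrt 2)*u)^n) := by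
        apply mul_le_mul_of_nonneg_left _ (by positivity)
        have h0 : (0:ℝ) ≤ ((1+Real.sqrt 2)*u)^n :=
          pow_nonneg (mul_nonneg (by positivity) hu) n
        linarith
  · have key : a + u ≤ Real.sqrt 2 * ((1+Real.sqrt 2)*u) := by nlinarith
    calc (a+u)^n ≤ (Real.sqrt 2 * ((1+Real.sqrt 2)*u))^n :=
          pow_le_pow_left₀ (by linarith) key n
    _ = Real.sqrt 2^n * ((1+Real.sqrt 2)*u)^n := mul_pow _ _ n
    _ ≤ Real.sqrt 2^n * (a^n + ((1+Real.sqrt 2)*u)^n) := by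
        apply mul_le_mul_of_nonneg_left _ (by positivity)
        have h0 : (0:ℝ) ≤ a^n := pow_nonneg ha n
        linarith

lemma gauss_moment {t : ℝ} (ht : 0 ≤ t) (i : ℕ) :
    t^i * Real.exp (-(t^2/4)) ≤ Real.sqrt (2^i * Nat.factorial i) := by
  have hL : 0 ≤ t^i * Real.exp (-(t^2/4)) := by positivity
  have hR : (0:ℝ) ≤ Real.sqrt (2^i * Nat.factorial i) := Real.sqrt_nonneg _
  apply le_of_pow_le_pow_left₀ (n := 2) (by norm_num) hR
  rw [Real.sq_sqrt (by positivity)]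
  have e1 : (t^i * Real.exp (-(t^2/4)))^2 = (t^2/2)^i * 2^i * Real.exp (-(t^2/2)) := by
    rw [mul_pow, ← Real.exp_nat_mul, ← pow_mul, mul_comm i 2, pow_mul]
    rw [show ((2:ℕ):ℝ) * -(t^2/4) = -(t^2/2) by push_cast; ring]
    rw [show (t^2/2)^i * 2^i = (t^2/2*2)^i from (mul_pow _ _ i).symm]
    norm_num
  rw [e1]
  have h2 := pow_le_pow_exp (y := t^2/2) (by positivity) i
  have h3 : (t^2/2)^i * Real.exp (-(t^2/2)) ≤ (i:ℝ)^i * Real.exp (-(i:ℝ)) := by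
    have := mul_le_mul_of_nonneg_right h2 (Real.exp_pos (-(t^2/2))).le
    calc (t^2/2)^i * Real.exp (-(t^2/2)) ≤
        (i:ℝ)^i * Real.exp (t^2/2 - i) * Real.exp (-(t^2/2)) := this
    _ = (i:ℝ)^i * Real.exp (-(i:ℝ)) := by
        rw [mul_assoc, ← Real.exp_add]; congr 2; ring
  have h4 : (i:ℝ)^i * Real.exp (-(i:ℝ)) ≤ Nat.factorial i := by
    have := pow_self_le_factorial_mul i
    have hei : Real.exp (-(i:ℝ)) * (Real.exp 1)^i = 1 := by
      rw [← Real.exp_nat_mul, ← Real.exp_add]; norm_num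
    have hpos : (0:ℝ) < (Real.exp 1)^i := by positivity
    nlinarith [Real.exp_pos (-(i:ℝ))]
  calc (t^2/2)^i * 2^i * Real.exp (-(t^2/2))
      = ((t^2/2)^i * Real.exp (-(t^2/2))) * 2^i := by ring
  _ ≤ ((i:ℝ)^i * Real.exp (-(i:ℝ))) * 2^i := by
      apply mul_le_mul_of_nonneg_right h3 (by positivity)
  _ ≤ (Nat.factorial i) * 2^i := by
      apply mul_le_mul_of_nonneg_right h4 (by positivity)
  _ = 2^i * Nat.factorial i := by ring

lemma sqrt_fac_pos (k : ℕ) : (0:ℝ) < Real.sqrt (Nat.factorial k) :=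
  Real.sqrt_pos.mpr (by exact_mod_cast Nat.factorial_pos k)

lemma key_comb {μ ν : ℕ} (hνμ : ν ≤ μ) :
    (μ.choose ν : ℝ) * Real.sqrt (2^(μ-ν) * Nat.factorial (μ-ν)) * Real.sqrt (Nat.factorial ν)
      ≤ 2^μ * Real.sqrt (Nat.factorial μ) := by
  set i := μ - ν with hi
  have hC : (0:ℝ) ≤ (μ.choose ν : ℝ) := by positivity
  apply le_of_pow_le_pow_left₀ (n := 2) (by norm_num) (by positivity)
  have h1 : ((μ.choose ν : ℝ) * Real.sqrt (2^i * Nat.factorial i) * Real.sqrt (Nat.factorial ν))^2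
      = (μ.choose ν : ℝ)^2 * (2^i * Nat.factorial i) * Nat.factorial ν := by
    rw [mul_pow, mul_pow, Real.sq_sqrt (by positivity), Real.sq_sqrt (by positivity)]
  have h2 : ((2:ℝ)^μ * Real.sqrt (Nat.factorial μ))^2 = 4^μ * Nat.factorial μ := by
    rw [mul_pow, Real.sq_sqrt (by positivity)]
    congr 1
    rw [← pow_mul, mul_comm μ 2, pow_mul]; norm_num
  rw [h1, h2]
  have hid : (μ.choose ν : ℝ) * Nat.factorial ν * Nat.factorial i = Nat.factorial μ := by
    exact_mod_cast congrArg (Nat.cast : ℕ → ℝ) (Nat.choose_mul_factorial_mul_factorial hνμ)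
  have hCle : (μ.choose ν : ℝ) ≤ 2^μ := by
    have hnat : μ.choose ν ≤ 2^μ := by
      calc μ.choose ν ≤ ∑ j ∈ Finset.range (μ+1), μ.choose j :=
            Finset.single_le_sum (fun j _ => Nat.zero_le _)
              (Finset.mem_range.mpr (Nat.lt_succ_of_le hνμ))
      _ = 2^μ := Nat.sum_range_choose μ
    exact_mod_cast hnat
  have h2i : (2:ℝ)^i ≤ 2^μ := by
    apply pow_le_pow_right₀ (by norm_num)
    omega
  have hfν : (0:ℝ) ≤ Nat.factorial ν := by positivity
  have hfi : (0:ℝ) ≤ Nat.factorial i := by positivity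
  calc (μ.choose ν : ℝ)^2 * (2^i * Nat.factorial i) * Nat.factorial ν
      = ((μ.choose ν : ℝ) * Nat.factorial ν * Nat.factorial i) * ((μ.choose ν : ℝ) * 2^i) := by
        ring
  _ = (Nat.factorial μ : ℝ) * ((μ.choose ν : ℝ) * 2^i) := by rw [hid]
  _ ≤ (Nat.factorial μ : ℝ) * (2^μ * 2^μ) := by
      apply mul_le_mul_of_nonneg_left _ (by positivity)
      exact mul_le_mul hCle h2i (by positivity) (by positivity)
  _ = 4^μ * Nat.factorial μ := by
      rw [show (4:ℝ)^μ = (2*2)^μ by norm_num, mul_pow]; ring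

lemma PW3 (d : ℕ) {P lam M t : ℝ} (hP : 0 ≤ P) (hlam : 0 < lam) (hM : 0 < M) (ht : 0 ≤ t) :
    (∑ μ ∈ Finset.range (d+1),
        (1/Real.sqrt (Nat.factorial μ)) * ((P + lam*t)/M)^μ) * Real.exp (-(t^2/4))
      ≤ 2 * 2^d * max 1 (lam/M)^d *
        ∑ ν ∈ Finset.range (d+1), (1/Real.sqrt (Nat.factorial ν)) * (P/M)^ν := by
  set E := Real.exp (-(t^2/4)) with hE
  have hEpos : 0 < E := Real.exp_pos _
  set SP := ∑ ν ∈ Finset.range (d+1), (1/Real.sqrt (Nat.factorial ν)) * (P/M)^ν with hSP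
  have hSPterm : ∀ ν ∈ Finset.range (d+1), 0 ≤ (1/Real.sqrt (Nat.factorial ν)) * (P/M)^ν :=
    fun ν _ => mul_nonneg (by positivity) (by positivity)
  have hSPpos : 0 ≤ SP := Finset.sum_nonneg hSPterm
  have hmax1 : (1:ℝ) ≤ max 1 (lam/M) := le_max_left _ _
  have hmaxd : (0:ℝ) ≤ max 1 (lam/M)^d := by positivity
  have perμ : ∀ μ ∈ Finset.range (d+1),
      (1/Real.sqrt (Nat.factorial μ)) * ((P + lam*t)/M)^μ * E
        ≤ 2^μ * (max 1 (lam/M)^d * SP) := by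
    intro μ hμ
    have hμd : μ ≤ d := Nat.lt_succ_iff.mp (Finset.mem_range.mp hμ)
    have hsplit : (P + lam*t)/M = P/M + (lam/M)*t := by field_simp
    rw [hsplit, add_pow, Finset.mul_sum, Finset.sum_mul]
    have hterm : ∀ ν ∈ Finset.range (μ+1),
        (1/Real.sqrt (Nat.factorial μ)) * ((P/M)^ν * ((lam/M)*t)^(μ-ν) * (μ.choose ν : ℝ)) * E
          ≤ 2^μ * (max 1 (lam/M)^d * ((1/Real.sqrt (Nat.factorial ν)) * (P/M)^ν)) := by
      intro ν hν
      have hνμ : ν ≤ μ := Nat.lt_succ_iff.mp (Finset.mem_range.mp hν)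
      set i := μ - ν with hi
      have hA := sqrt_fac_pos μ
      have hB := sqrt_fac_pos ν
      have hG := gauss_moment ht i
      have hpow : ((lam/M)*t)^i = (lam/M)^i * t^i := mul_pow _ _ i
      have hmaxi : (lam/M)^i ≤ max 1 (lam/M)^d := by
        calc (lam/M)^i ≤ max 1 (lam/M)^i :=
            pow_le_pow_left₀ (by positivity) (le_max_right _ _) i
        _ ≤ max 1 (lam/M)^d := pow_le_pow_right₀ hmax1 (by omega)
      have scalar : (μ.choose ν : ℝ) * ((lam/M)^i * (t^i * E)) * (1/Real.sqrt (Nat.factorial μ))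
          ≤ 2^μ * max 1 (lam/M)^d * (1/Real.sqrt (Nat.factorial ν)) := by
        rw [mul_one_div, mul_one_div, div_le_div_iff₀ hA hB]
        have step1 : (μ.choose ν : ℝ) * ((lam/M)^i * (t^i * E)) * Real.sqrt (Nat.factorial ν)
            ≤ (μ.choose ν : ℝ) * ((lam/M)^i * Real.sqrt (2^i * Nat.factorial i)) *
                Real.sqrt (Nat.factorial ν) := by
          apply mul_le_mul_of_nonneg_right _ hB.le
          apply mul_le_mul_of_nonneg_left _ (by positivity)
          exact mul_le_mul_of_nonneg_left hG (by positivity)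
        refine step1.trans ?_
        have step2 : (μ.choose ν : ℝ) * ((lam/M)^i * Real.sqrt (2^i * Nat.factorial i)) *
              Real.sqrt (Nat.factorial ν)
            ≤ max 1 (lam/M)^d * ((μ.choose ν : ℝ) * Real.sqrt (2^i * Nat.factorial i) *
              Real.sqrt (Nat.factorial ν)) := by
          have e1 : (μ.choose ν : ℝ) * ((lam/M)^i * Real.sqrt (2^i * Nat.factorial i)) *
              Real.sqrt (Nat.factorial ν) = (lam/M)^i * ((μ.choose ν : ℝ) *
                Real.sqrt (2^i * Nat.factorial i) * Real.sqrt (Nat.factorial ν)) := by ring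
          rw [e1]
          apply mul_le_mul_of_nonneg_right hmaxi
          positivity
        refine step2.trans ?_
        calc max 1 (lam/M)^d * ((μ.choose ν : ℝ) * Real.sqrt (2^i * Nat.factorial i) *
              Real.sqrt (Nat.factorial ν))
            ≤ max 1 (lam/M)^d * (2^μ * Real.sqrt (Nat.factorial μ)) :=
              mul_le_mul_of_nonneg_left (key_comb hνμ) hmaxd
        _ = 2^μ * max 1 (lam/M)^d * Real.sqrt (Nat.factorial μ) := by ring
      calc (1/Real.sqrt (Nat.factorial μ)) * ((P/M)^ν * ((lam/M)*t)^(μ-ν) * (μ.choose ν : ℝ)) * E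
          = (P/M)^ν * ((μ.choose ν : ℝ) * ((lam/M)^i * (t^i * E)) *
              (1/Real.sqrt (Nat.factorial μ))) := by
            rw [← hi, hpow]; ring
      _ ≤ (P/M)^ν * (2^μ * max 1 (lam/M)^d * (1/Real.sqrt (Nat.factorial ν))) :=
            mul_le_mul_of_nonneg_left scalar (by positivity)
      _ = 2^μ * (max 1 (lam/M)^d * ((1/Real.sqrt (Nat.factorial ν)) * (P/M)^ν)) := by ring
    calc ∑ ν ∈ Finset.range (μ+1),
          (1/Real.sqrt (Nat.factorial μ)) * ((P/M)^ν * ((lam/M)*t)^(μ-ν) * (μ.choose ν : ℝ)) * E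
        ≤ ∑ ν ∈ Finset.range (μ+1),
            2^μ * (max 1 (lam/M)^d * ((1/Real.sqrt (Nat.factorial ν)) * (P/M)^ν)) :=
          Finset.sum_le_sum hterm
    _ = 2^μ * (max 1 (lam/M)^d *
          ∑ ν ∈ Finset.range (μ+1), (1/Real.sqrt (Nat.factorial ν)) * (P/M)^ν) := by
        rw [← Finset.mul_sum, ← Finset.mul_sum]
    _ ≤ 2^μ * (max 1 (lam/M)^d * SP) := by
        apply mul_le_mul_of_nonneg_left _ (by positivity)
        apply mul_le_mul_of_nonneg_left _ hmaxd
        apply Finset.sum_le_sum_of_subset_of_nonneg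
        · exact Finset.range_subset_range.mpr (by omega)
        · intro ν hν _; exact hSPterm ν hν
  calc (∑ μ ∈ Finset.range (d+1), (1/Real.sqrt (Nat.factorial μ)) * ((P + lam*t)/M)^μ) * E
      = ∑ μ ∈ Finset.range (d+1),
          (1/Real.sqrt (Nat.factorial μ)) * ((P + lam*t)/M)^μ * E := Finset.sum_mul _ _ _
  _ ≤ ∑ μ ∈ Finset.range (d+1), 2^μ * (max 1 (lam/M)^d * SP) := Finset.sum_le_sum perμ
  _ = (∑ μ ∈ Finset.range (d+1), (2:ℝ)^μ) * (max 1 (lam/M)^d * SP) := by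
      rw [← Finset.sum_mul]
  _ ≤ (2 * 2^d) * (max 1 (lam/M)^d * SP) := by
      apply mul_le_mul_of_nonneg_right _ (mul_nonneg hmaxd hSPpos)
      have := geom_sum_eq (by norm_num : (2:ℝ) ≠ 1) (d+1)
      rw [this]
      have : (0:ℝ) < 2^(d+1) := by positivity
      rw [pow_succ]
      norm_num
      linarith
  _ = 2 * 2^d * max 1 (lam/M)^d * SP := by ring

/-! ### tupleNorm lemmas -/

lemma tupleNorm_nonneg {m : ℕ} (p : Fin m → EuclideanSpace ℝ (Fin 4)) : 0 ≤ tupleNorm p := by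
  have h := Finset.le_sup' (fun I : Finset (Fin m) => ‖∑ e ∈ I, p e‖)
    (Finset.mem_univ (∅ : Finset (Fin m)))
  rw [Finset.sum_empty, norm_zero] at h
  exact h

lemma norm_subset_sum_le {m : ℕ} (p : Fin m → EuclideanSpace ℝ (Fin 4)) (J : Finset (Fin m)) :
    ‖∑ e ∈ J, p e‖ ≤ tupleNorm p :=
  Finset.le_sup' (fun I : Finset (Fin m) => ‖∑ e ∈ I, p e‖) (Finset.mem_univ J)

lemma tupleNorm_snoc_le {m : ℕ} (p : Fin m → EuclideanSpace ℝ (Fin 4))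
    (ℓ : EuclideanSpace ℝ (Fin 4)) :
    tupleNorm (Fin.snoc p ℓ) ≤ tupleNorm p + ‖ℓ‖ := by
  classical
  apply Finset.sup'_le
  intro I _
  set J : Finset (Fin m) := Finset.univ.filter (fun j => j.castSucc ∈ I) with hJ
  have himg : I.filter (fun e => ¬ e = Fin.last m) = J.image Fin.castSucc := by
    ext e
    simp only [Finset.mem_filter, Finset.mem_image, hJ, Finset.mem_univ, true_and]
    constructor
    · rintro ⟨heI, hne⟩
      obtain ⟨j, rfl⟩ := Fin.exists_castSucc_eq.mpr hne
      exact ⟨j, heI, rfl⟩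
    · rintro ⟨j, hjI, rfl⟩
      exact ⟨hjI, (Fin.castSucc_lt_last j).ne⟩
  have h1 : ∑ e ∈ I.filter (fun e => e = Fin.last m), Fin.snoc p ℓ e
      = (if Fin.last m ∈ I then ℓ else 0) := by
    rw [Finset.filter_eq']
    split_ifs with h
    · rw [Finset.sum_singleton, Fin.snoc_last]
    · rw [Finset.sum_empty]
  have h2 : ∑ e ∈ I.filter (fun e => ¬ e = Fin.last m), Fin.snoc p ℓ e
      = ∑ j ∈ J, p j := by
    rw [himg, Finset.sum_image (fun a _ b _ h => Fin.castSucc_injective m h)]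
    apply Finset.sum_congr rfl
    intro j _
    exact Fin.snoc_castSucc _ _ _
  have hsum : ∑ e ∈ I, Fin.snoc p ℓ e
      = (∑ j ∈ J, p j) + (if Fin.last m ∈ I then ℓ else 0) := by
    rw [← Finset.sum_filter_add_sum_filter_not I (fun e => e = Fin.last m), h1, h2, add_comm]
  rw [hsum]
  calc ‖(∑ j ∈ J, p j) + (if Fin.last m ∈ I then ℓ else 0)‖
      ≤ ‖∑ j ∈ J, p j‖ + ‖(if Fin.last m ∈ I then ℓ else 0)‖ := norm_add_le _ _
  _ ≤ tupleNorm p + ‖ℓ‖ := by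
      apply add_le_add (norm_subset_sum_le p J)
      split_ifs
      · exact le_refl _
      · simp

/-! ### Gaussian product step -/

lemma scalar_cauchy {x K B r : ℝ} (hx : 2 ≤ x) (hK0 : 0 ≤ K) (hB : 0 ≤ B) (hr : 0 ≤ r)
    (hK : K ≤ B + r) :
    K^2/(2*x^2) ≤ B^2/(2*(x-1)^2) + r^2/(2*(2*x-1)) := by
  have h1 : (0:ℝ) < 2*x^2 := by nlinarith
  have h2 : (0:ℝ) < 2*(x-1)^2 := by nlinarith
  have h3 : (0:ℝ) < 2*(2*x-1) := by nlinarith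
  have hKB : K^2 ≤ (B+r)^2 := by nlinarith
  rw [div_add_div _ _ h2.ne' h3.ne', div_le_div_iff₀ h1 (by positivity)]
  nlinarith [sq_nonneg ((2*x-1)*B - (x-1)^2*r),
    mul_nonneg (sub_nonneg.mpr hKB) (mul_nonneg (sq_nonneg (x-1))
      (show (0:ℝ) ≤ 2*x-1 by linarith))]

lemma gaussian_step (N N' L : ℕ) (hL : 1 ≤ L) (hN'₁ : 1 ≤ N')
    (hN'₂ : (N' : ℝ) ≤ (N : ℝ) / 2 + (L : ℝ))
    {lam : ℝ} (hlam : 0 < lam) (lams : Fin N' → ℝ) (hlams : ∀ i, lam ≤ lams i)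
    (k : Fin N' → EuclideanSpace ℝ (Fin 4)) (ℓ : EuclideanSpace ℝ (Fin 4)) :
    (∏ i, Real.exp (-‖k i + ℓ‖^2 / (alphaWeight (N + 2) (L - 1) * lams i ^ 2)))
      ≤ Real.exp (‖ℓ‖^2/(4*lam^2)) *
        ∏ i, Real.exp (-‖k i‖^2 / (alphaWeight N L * lams i ^ 2)) := by
  set x : ℝ := (N:ℝ)/2 + 2*L with hxdef
  have hx : 2 ≤ x := by
    have : (0:ℝ) ≤ (N:ℝ)/2 := by positivity
    have hL' : (1:ℝ) ≤ (L:ℝ) := by exact_mod_cast hL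
    simp only [hxdef]; linarith
  have hαNL : alphaWeight N L = 2*x^2 := by simp only [alphaWeight, hxdef]
  have hα' : alphaWeight (N+2) (L-1) = 2*(x-1)^2 := by
    have hcast : ((L-1:ℕ):ℝ) = (L:ℝ) - 1 := by
      have := Nat.cast_sub hL (R := ℝ); simpa using this
    simp only [alphaWeight, hcast, hxdef]
    push_cast
    ring
  set r := ‖ℓ‖ with hr
  have hrpos : 0 ≤ r := norm_nonneg _
  have hN'x : (N':ℝ) ≤ x - 1 := by
    have hL' : (1:ℝ) ≤ (L:ℝ) := by exact_mod_cast hL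
    simp only [hxdef]; linarith
  have hN'pos : (0:ℝ) < N' := by exact_mod_cast hN'₁
  have peri : ∀ i : Fin N',
      Real.exp (-‖k i + ℓ‖^2 / (alphaWeight (N + 2) (L - 1) * lams i ^ 2))
        ≤ Real.exp (-‖k i‖^2 / (alphaWeight N L * lams i ^ 2)) *
          Real.exp (r^2/(4*N'*lam^2)) := by
    intro i
    rw [← Real.exp_add, Real.exp_le_exp, hαNL, hα']
    set K := ‖k i‖
    set B := ‖k i + ℓ‖
    have hK0 : 0 ≤ K := norm_nonneg _
    have hB0 : 0 ≤ B := norm_nonneg _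
    have hKB : K ≤ B + r := by
      calc K = ‖(k i + ℓ) - ℓ‖ := by rw [add_sub_cancel_right]
      _ ≤ B + r := norm_sub_le _ _
    have hli : lam ≤ lams i := hlams i
    have hli2 : lam^2 ≤ lams i^2 := by nlinarith
    have hlipos : (0:ℝ) < lams i := lt_of_lt_of_le hlam hli
    have main := scalar_cauchy hx hK0 hB0 hrpos hKB
    have hdiv : K^2/(2*x^2*lams i^2) ≤ B^2/(2*(x-1)^2*lams i^2) + r^2/(2*(2*x-1)*lams i^2) := by
      calc K^2/(2*x^2*lams i^2) = (K^2/(2*x^2))/(lams i^2) := by rw [div_div]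
      _ ≤ (B^2/(2*(x-1)^2) + r^2/(2*(2*x-1)))/(lams i^2) := by gcongr
      _ = B^2/(2*(x-1)^2*lams i^2) + r^2/(2*(2*x-1)*lams i^2) := by
          rw [add_div, div_div, div_div]
    have htail : r^2/(2*(2*x-1)*lams i^2) ≤ r^2/(4*N'*lam^2) := by
      have hden : 4*(N':ℝ)*lam^2 ≤ 2*(2*x-1)*lams i^2 := by nlinarith
      exact div_le_div_of_nonneg_left (by positivity) (by positivity) hden
    have : K^2/(2*x^2*lams i^2) ≤ B^2/(2*(x-1)^2*lams i^2) + r^2/(4*N'*lam^2) :=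
      hdiv.trans (by linarith)
    have e1 : -B^2 / (2*(x-1)^2 * lams i^2) = -(B^2/(2*(x-1)^2*lams i^2)) := by ring
    have e2 : -K^2 / (2*x^2 * lams i^2) = -(K^2/(2*x^2*lams i^2)) := by ring
    rw [e1, e2]
    linarith
  calc ∏ i, Real.exp (-‖k i + ℓ‖^2 / (alphaWeight (N + 2) (L - 1) * lams i ^ 2))
      ≤ ∏ i, (Real.exp (-‖k i‖^2 / (alphaWeight N L * lams i ^ 2)) *
          Real.exp (r^2/(4*N'*lam^2))) :=
        Finset.prod_le_prod (fun i _ => (Real.exp_pos _).le) (fun i _ => peri i)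
  _ = (∏ i, Real.exp (-‖k i‖^2 / (alphaWeight N L * lams i ^ 2))) *
        (Real.exp (r^2/(4*N'*lam^2)))^(N') := by
      rw [Finset.prod_mul_distrib, Finset.prod_const, Finset.card_univ, Fintype.card_fin]
  _ = Real.exp (‖ℓ‖^2/(4*lam^2)) *
        ∏ i, Real.exp (-‖k i‖^2 / (alphaWeight N L * lams i ^ 2)) := by
      rw [← Real.exp_nat_mul]
      rw [show (N':ℝ) * (r^2/(4*N'*lam^2)) = r^2/(4*lam^2) by
        have h1 : (N':ℝ) ≠ 0 := hN'pos.ne'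
        have h2 : lam ≠ 0 := hlam.ne'
        field_simp]
      rw [hr, mul_comm]

/-! ### Integral lemmas -/

lemma pi_num : (800:ℝ) ≤ 16 * Real.pi^2 * Real.pi^2 := by
  have hpi : (3.141592:ℝ) ≤ Real.pi := by linarith [Real.pi_gt_d6]
  have h2 : (9.8:ℝ) ≤ Real.pi^2 := by nlinarith
  nlinarith [h2, sq_nonneg (Real.pi^2 - 9.8)]

lemma gauss_integrable {b : ℝ} (hb : 0 < b) :
    Integrable (fun ℓ : EuclideanSpace ℝ (Fin 4) => Real.exp (-b * ‖ℓ‖^2)) := by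
  have h := GaussianFourier.integrable_cexp_neg_mul_sq_norm_add
    (V := EuclideanSpace ℝ (Fin 4)) (b := (b:ℂ)) (by simpa using hb) 0 0
  have h2 := h.norm
  apply h2.congr
  filter_upwards with v
  simp only [Complex.ofReal_pow, zero_mul, add_zero, inner_zero_left, Complex.ofReal_zero,
    mul_zero]
  rw [show (-(b:ℂ) * (‖v‖:ℂ)^2) = ((-b * ‖v‖^2 : ℝ) : ℂ) by push_cast; ring]
  rw [← Complex.ofReal_exp]
  rw [Complex.norm_real]
  exact abs_of_pos (Real.exp_pos _)

lemma gauss_integral_val {lam : ℝ} (hlam : 0 < lam) :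
    ∫ ℓ : EuclideanSpace ℝ (Fin 4), Real.exp (-(1/(8*lam^2)) * ‖ℓ‖^2)
      = 64 * Real.pi^2 * lam^4 := by
  have hb : (0:ℝ) < 1/(8*lam^2) := by positivity
  have h := GaussianFourier.integral_rexp_neg_mul_sq_norm
    (V := EuclideanSpace ℝ (Fin 4)) hb
  rw [h]
  have hrank : (Module.finrank ℝ (EuclideanSpace ℝ (Fin 4)) : ℝ) = 4 := by simp
  rw [hrank]
  have hπb : Real.pi / (1/(8*lam^2)) = 8 * Real.pi * lam^2 := by field_simp
  rw [hπb]
  rw [show (4:ℝ)/2 = ((2:ℕ):ℝ) by norm_num, Real.rpow_natCast]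
  ring

set_option maxHeartbeats 1000000 in
theorem stmt0 (N N' L d n m : ℕ) (hL : 1 ≤ L) (hN'₁ : 1 ≤ N')
    (hN'₂ : (N' : ℝ) ≤ (N : ℝ) / 2 + (L : ℝ))
    (M lam : ℝ) (hM : 0 < M) (hlam : 0 < lam)
    (lams : Fin N' → ℝ) (hlams : ∀ i, lam ≤ lams i)
    (k : Fin N' → EuclideanSpace ℝ (Fin 4))
    (p : Fin m → EuclideanSpace ℝ (Fin 4)) :
    (∫ ℓ : EuclideanSpace ℝ (Fin 4),
        Real.exp (-‖ℓ‖ ^ 2 / lam ^ 2) *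
          (∏ i, Real.exp (-‖k i + ℓ‖ ^ 2 / (alphaWeight (N + 2) (L - 1) * lams i ^ 2))) *
          logPlus (max (tupleNormM M (Fin.snoc p ℓ) / sInf (Set.range lams))
              (sSup (Set.range lams) / M)) ^ n *
          ∑ μ ∈ Finset.range (d + 1),
            (1 / Real.sqrt (Nat.factorial μ)) * (tupleNorm (Fin.snoc p ℓ) / M) ^ μ) /
        (2 * Real.pi) ^ 4
      ≤ 4 * Real.pi ^ 2 * lam ^ 4 *
          (∏ i, Real.exp (-‖k i‖ ^ 2 / (alphaWeight N L * lams i ^ 2))) *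
          (logPlus (max (tupleNormM M p / sInf (Set.range lams))
              (sSup (Set.range lams) / M)) ^ n + Real.sqrt (Nat.factorial n)) *
          ((N' : ℝ) + 1) ^ (((n : ℝ) + 4) / 2) * 2 ^ d * max 1 (lam / M) ^ d *
          ∑ μ ∈ Finset.range (d + 1),
            (1 / Real.sqrt (Nat.factorial μ)) * (tupleNorm p / M) ^ μ := by
  classical
  have i0 : Fin N' := ⟨0, hN'₁⟩
  set minl := sInf (Set.range lams) with hminldef
  set maxl := sSup (Set.range lams) with hmaxldef
  have hNe : (Set.range lams).Nonempty := ⟨lams i0, ⟨i0, rfl⟩⟩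
  have hbddA : BddAbove (Set.range lams) := (Set.finite_range lams).bddAbove
  have hbddB : BddBelow (Set.range lams) := (Set.finite_range lams).bddBelow
  have hlamminl : lam ≤ minl := le_csInf hNe (by rintro y ⟨i, rfl⟩; exact hlams i)
  have hminlpos : 0 < minl := lt_of_lt_of_le hlam hlamminl
  have hminmaxl : minl ≤ maxl :=
    (csInf_le hbddB ⟨i0, rfl⟩).trans (le_csSup hbddA ⟨i0, rfl⟩)
  set P := tupleNorm p with hPdef
  have hPnn : 0 ≤ P := tupleNorm_nonneg p
  set A0 := max (tupleNormM M p / minl) (maxl / M) with hA0def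
  have hTM : M ≤ tupleNormM M p := le_max_right _ _
  have hA01 : 1 ≤ A0 := by
    rcases le_total M maxl with h | h
    · refine le_max_of_le_right ?_
      rw [le_div_iff₀ hM]; linarith
    · refine le_max_of_le_left ?_
      rw [le_div_iff₀ hminlpos]
      have : minl ≤ M := hminmaxl.trans h
      linarith [hTM]
  have hA0pos : 0 < A0 := lt_of_lt_of_le one_pos hA01
  set a := logPlus A0 with hadef
  have ha0 : 0 ≤ a := Real.log_nonneg (le_max_left _ _)
  have haeq : a = Real.log A0 := by rw [hadef, logPlus, max_eq_right hA01]
  set SP := ∑ μ ∈ Finset.range (d + 1),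
      (1 / Real.sqrt (Nat.factorial μ)) * (P / M) ^ μ with hSPdef
  have hSPnn : 0 ≤ SP :=
    Finset.sum_nonneg (fun μ _ => mul_nonneg (by positivity) (by positivity))
  set G := ∏ i, Real.exp (-‖k i‖ ^ 2 / (alphaWeight N L * lams i ^ 2)) with hGdef
  have hGnn : 0 ≤ G := Finset.prod_nonneg (fun i _ => (Real.exp_pos _).le)
  have hmaxnn : (0:ℝ) ≤ max 1 (lam / M) := le_trans zero_le_one (le_max_left _ _)
  have hmaxdnn : (0:ℝ) ≤ max 1 (lam / M) ^ d := pow_nonneg hmaxnn d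
  set D := 2 * 2 ^ d * max 1 (lam / M) ^ d * SP with hDdef
  have hDnn : 0 ≤ D :=
    mul_nonneg (mul_nonneg (by positivity) hmaxdnn) hSPnn
  set C1 := Real.sqrt 2 ^ n * (a ^ n + 100 * Real.sqrt (Nat.factorial n)) with hC1def
  have hC1nn : 0 ≤ C1 := by positivity
  have hb8 : (0:ℝ) < 1/(8*lam^2) := by positivity
  -- pointwise bound
  have hpt : ∀ ℓ : EuclideanSpace ℝ (Fin 4),
      Real.exp (-‖ℓ‖ ^ 2 / lam ^ 2) *
          (∏ i, Real.exp (-‖k i + ℓ‖ ^ 2 / (alphaWeight (N + 2) (L - 1) * lams i ^ 2))) *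
          logPlus (max (tupleNormM M (Fin.snoc p ℓ) / minl) (maxl / M)) ^ n *
          (∑ μ ∈ Finset.range (d + 1),
            (1 / Real.sqrt (Nat.factorial μ)) * (tupleNorm (Fin.snoc p ℓ) / M) ^ μ)
        ≤ (G * C1 * D) * Real.exp (-(1/(8*lam^2)) * ‖ℓ‖^2) := by
    intro ℓ
    set r := ‖ℓ‖ with hrdef
    have hr0 : 0 ≤ r := norm_nonneg ℓ
    set t := r / lam with htdef
    have ht0 : 0 ≤ t := by positivity
    have hrt : r = lam * t := by rw [htdef]; field_simp
    have hsnoc : tupleNorm (Fin.snoc p ℓ) ≤ P + r := tupleNorm_snoc_le p ℓ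
    set u := Real.log (1 + t) with hudef
    have hu0 : 0 ≤ u := Real.log_nonneg (by linarith)
    -- log bound
    have hlogarg : max (tupleNormM M (Fin.snoc p ℓ) / minl) (maxl / M) ≤ A0 * (1 + t) := by
      have h2 : tupleNormM M (Fin.snoc p ℓ) ≤ tupleNormM M p + r := by
        apply max_le
        · exact hsnoc.trans (add_le_add_left (le_max_left _ _) r)
        · exact le_add_of_le_of_nonneg (le_max_right _ _) hr0
      have h3 : tupleNormM M (Fin.snoc p ℓ) / minl ≤ A0 + t := by
        calc tupleNormM M (Fin.snoc p ℓ) / minl ≤ (tupleNormM M p + r) / minl := by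
              apply div_le_div_of_nonneg_right h2 hminlpos.le
        _ = tupleNormM M p / minl + r / minl := add_div _ _ _
        _ ≤ A0 + t := by
            apply add_le_add (le_max_left _ _)
            rw [htdef]
            exact div_le_div_of_nonneg_left hr0 hlam hlamminl
      have h4 : maxl / M ≤ A0 + t := le_add_of_le_of_nonneg (le_max_right _ _) ht0
      have h5 : A0 + t ≤ A0 * (1 + t) := by
        have hh : A0 * (1 + t) = A0 + t + t*(A0 - 1) := by ring
        have hh2 : 0 ≤ t*(A0 - 1) := mul_nonneg ht0 (by linarith)
        linarith
      exact max_le (h3.trans h5) (h4.trans h5)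
    have hlog : logPlus (max (tupleNormM M (Fin.snoc p ℓ) / minl) (maxl / M)) ≤ a + u := by
      have hmono : logPlus (max (tupleNormM M (Fin.snoc p ℓ) / minl) (maxl / M))
          ≤ logPlus (A0 * (1 + t)) := by
        unfold logPlus
        apply Real.log_le_log (by positivity)
        exact max_le_max le_rfl hlogarg
      have heq : logPlus (A0 * (1 + t)) = a + u := by
        rw [logPlus, max_eq_right (by nlinarith), haeq, hudef,
          Real.log_mul (by positivity) (by positivity)]
      exact hmono.trans_eq heq
    have hlogn : logPlus (max (tupleNormM M (Fin.snoc p ℓ) / minl) (maxl / M)) ^ n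
        ≤ (a + u) ^ n :=
      pow_le_pow_left₀ (Real.log_nonneg (le_max_left _ _)) hlog n
    -- sum bound
    have hsum : (∑ μ ∈ Finset.range (d + 1),
          (1 / Real.sqrt (Nat.factorial μ)) * (tupleNorm (Fin.snoc p ℓ) / M) ^ μ)
        ≤ ∑ μ ∈ Finset.range (d + 1),
            (1 / Real.sqrt (Nat.factorial μ)) * ((P + lam * t) / M) ^ μ := by
      apply Finset.sum_le_sum
      intro μ _
      apply mul_le_mul_of_nonneg_left _ (by positivity)
      apply pow_le_pow_left₀ (div_nonneg (tupleNorm_nonneg _) hM.le)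
      apply div_le_div_of_nonneg_right _ hM.le
      rw [← hrt]; exact hsnoc
    set S2 := ∑ μ ∈ Finset.range (d + 1),
        (1 / Real.sqrt (Nat.factorial μ)) * ((P + lam * t) / M) ^ μ with hS2def
    have hS2nn : 0 ≤ S2 :=
      Finset.sum_nonneg (fun μ _ => mul_nonneg (by positivity)
        (pow_nonneg (div_nonneg (by positivity) hM.le) μ))
    -- gaussian step
    have hgauss := gaussian_step N N' L hL hN'₁ hN'₂ hlam lams hlams k ℓ
    have ht24 : ‖ℓ‖^2/(4*lam^2) = t^2/4 := by
      rw [← hrdef, hrt]; field_simp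
    rw [ht24] at hgauss
    -- nonneg facts
    have hE0nn : 0 ≤ Real.exp (-‖ℓ‖ ^ 2 / lam ^ 2) := (Real.exp_pos _).le
    have hPRnn : 0 ≤ ∏ i, Real.exp (-‖k i + ℓ‖ ^ 2 / (alphaWeight (N + 2) (L - 1) * lams i ^ 2)) :=
      Finset.prod_nonneg (fun i _ => (Real.exp_pos _).le)
    have hLPnn : 0 ≤ logPlus (max (tupleNormM M (Fin.snoc p ℓ) / minl) (maxl / M)) ^ n :=
      pow_nonneg (Real.log_nonneg (le_max_left _ _)) n
    have hSUMnn : 0 ≤ ∑ μ ∈ Finset.range (d + 1),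
        (1 / Real.sqrt (Nat.factorial μ)) * (tupleNorm (Fin.snoc p ℓ) / M) ^ μ :=
      Finset.sum_nonneg (fun μ _ => mul_nonneg (by positivity)
        (pow_nonneg (div_nonneg (tupleNorm_nonneg _) hM.le) μ))
    -- step 1 : bound the four factors
    have step1 : Real.exp (-‖ℓ‖ ^ 2 / lam ^ 2) *
          (∏ i, Real.exp (-‖k i + ℓ‖ ^ 2 / (alphaWeight (N + 2) (L - 1) * lams i ^ 2))) *
          logPlus (max (tupleNormM M (Fin.snoc p ℓ) / minl) (maxl / M)) ^ n *
          (∑ μ ∈ Finset.range (d + 1),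
            (1 / Real.sqrt (Nat.factorial μ)) * (tupleNorm (Fin.snoc p ℓ) / M) ^ μ)
        ≤ Real.exp (-‖ℓ‖ ^ 2 / lam ^ 2) * (Real.exp (t^2/4) * G) * (a + u) ^ n * S2 := by
      apply mul_le_mul
      · apply mul_le_mul
        · exact mul_le_mul_of_nonneg_left hgauss hE0nn
        · exact hlogn
        · exact hLPnn
        · positivity
      · exact hsum
      · exact hSUMnn
      · have : (0:ℝ) ≤ (a+u)^n := pow_nonneg (add_nonneg ha0 hu0) n
        positivity
    refine step1.trans ?_
    -- step 2 : PW1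
    have hPW1 := PW1 ha0 hu0 n
    have step2 : Real.exp (-‖ℓ‖ ^ 2 / lam ^ 2) * (Real.exp (t^2/4) * G) * (a + u) ^ n * S2
        ≤ Real.exp (-‖ℓ‖ ^ 2 / lam ^ 2) * (Real.exp (t^2/4) * G) *
            (Real.sqrt 2 ^ n * (a ^ n + ((1 + Real.sqrt 2) * u) ^ n)) * S2 := by
      apply mul_le_mul_of_nonneg_right _ hS2nn
      apply mul_le_mul_of_nonneg_left hPW1
      positivity
    refine step2.trans ?_
    -- step 3 : exponential bookkeeping and PW2/PW3
    have hE0eq : Real.exp (-‖ℓ‖ ^ 2 / lam ^ 2) * Real.exp (t^2/4)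
        = Real.exp (-(3*t^2/8)) * Real.exp (-(t^2/4)) * Real.exp (-(t^2/8)) := by
      rw [← Real.exp_add, ← Real.exp_add, ← Real.exp_add]
      congr 1
      have : ‖ℓ‖^2 = lam^2 * t^2 := by rw [← hrdef, hrt]; ring
      rw [this]
      field_simp
      ring
    have hbr : (a ^ n + ((1 + Real.sqrt 2) * u) ^ n) * Real.exp (-(3*t^2/8))
        ≤ a ^ n + 100 * Real.sqrt (Nat.factorial n) := by
      have h1 : a ^ n * Real.exp (-(3*t^2/8)) ≤ a ^ n := by
        apply mul_le_of_le_one_right (pow_nonneg ha0 n)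
        apply Real.exp_le_one_iff.mpr
        have h00 : (0:ℝ) ≤ 3*t^2/8 := by positivity
        linarith
      have h2 : ((1 + Real.sqrt 2) * u) ^ n * Real.exp (-(3*t^2/8))
          ≤ 100 * Real.sqrt (Nat.factorial n) := by
        have hPW2 := PW2 n ht0
        rw [← hudef] at hPW2
        calc ((1 + Real.sqrt 2) * u) ^ n * Real.exp (-(3*t^2/8))
            ≤ (100 * Real.sqrt (Nat.factorial n) * Real.exp (3*t^2/8)) * Real.exp (-(3*t^2/8)) :=
              mul_le_mul_of_nonneg_right hPW2 (Real.exp_pos _).le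
        _ = 100 * Real.sqrt (Nat.factorial n) := by
            rw [mul_assoc, ← Real.exp_add]
            norm_num
      calc (a ^ n + ((1 + Real.sqrt 2) * u) ^ n) * Real.exp (-(3*t^2/8))
          = a ^ n * Real.exp (-(3*t^2/8)) + ((1 + Real.sqrt 2) * u) ^ n * Real.exp (-(3*t^2/8)) :=
            add_mul _ _ _
      _ ≤ a ^ n + 100 * Real.sqrt (Nat.factorial n) := add_le_add h1 h2
    have hPW3 := PW3 d hPnn hlam hM ht0
    rw [← hS2def, ← hSPdef] at hPW3
    have hexp8 : Real.exp (-(t^2/8)) = Real.exp (-(1/(8*lam^2)) * ‖ℓ‖^2) := by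
      congr 1
      have : ‖ℓ‖^2 = lam^2 * t^2 := by rw [← hrdef, hrt]; ring
      rw [this]
      field_simp
    calc Real.exp (-‖ℓ‖ ^ 2 / lam ^ 2) * (Real.exp (t^2/4) * G) *
            (Real.sqrt 2 ^ n * (a ^ n + ((1 + Real.sqrt 2) * u) ^ n)) * S2
        = G * Real.sqrt 2 ^ n *
            ((a ^ n + ((1 + Real.sqrt 2) * u) ^ n) * Real.exp (-(3*t^2/8))) *
            (S2 * Real.exp (-(t^2/4))) * Real.exp (-(t^2/8)) := by
          rw [show Real.exp (-‖ℓ‖ ^ 2 / lam ^ 2) * (Real.exp (t^2/4) * G) *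
              (Real.sqrt 2 ^ n * (a ^ n + ((1 + Real.sqrt 2) * u) ^ n)) * S2
            = (Real.exp (-‖ℓ‖ ^ 2 / lam ^ 2) * Real.exp (t^2/4)) * G *
              (Real.sqrt 2 ^ n * (a ^ n + ((1 + Real.sqrt 2) * u) ^ n)) * S2 by ring, hE0eq]
          ring
    _ ≤ G * Real.sqrt 2 ^ n * (a ^ n + 100 * Real.sqrt (Nat.factorial n)) * D *
          Real.exp (-(t^2/8)) := by
        apply mul_le_mul_of_nonneg_right _ (Real.exp_pos _).le
        apply mul_le_mul
        · apply mul_le_mul_of_nonneg_left hbr (by positivity)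
        · exact hPW3
        · positivity
        · have h0 : (0:ℝ) ≤ a ^ n + 100 * Real.sqrt (Nat.factorial n) := by positivity
          positivity
    _ = (G * C1 * D) * Real.exp (-(t^2/8)) := by rw [hC1def]; ring
    _ = (G * C1 * D) * Real.exp (-(1/(8*lam^2)) * ‖ℓ‖^2) := by rw [hexp8]
  -- nonnegativity of integrand
  have hfnn : ∀ ℓ : EuclideanSpace ℝ (Fin 4),
      0 ≤ Real.exp (-‖ℓ‖ ^ 2 / lam ^ 2) *
          (∏ i, Real.exp (-‖k i + ℓ‖ ^ 2 / (alphaWeight (N + 2) (L - 1) * lams i ^ 2))) *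
          logPlus (max (tupleNormM M (Fin.snoc p ℓ) / minl) (maxl / M)) ^ n *
          (∑ μ ∈ Finset.range (d + 1),
            (1 / Real.sqrt (Nat.factorial μ)) * (tupleNorm (Fin.snoc p ℓ) / M) ^ μ) := by
    intro ℓ
    have h1 : 0 ≤ ∏ i, Real.exp (-‖k i + ℓ‖ ^ 2 / (alphaWeight (N + 2) (L - 1) * lams i ^ 2)) :=
      Finset.prod_nonneg (fun i _ => (Real.exp_pos _).le)
    have h2 : 0 ≤ logPlus (max (tupleNormM M (Fin.snoc p ℓ) / minl) (maxl / M)) ^ n :=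
      pow_nonneg (Real.log_nonneg (le_max_left _ _)) n
    have h3 : 0 ≤ ∑ μ ∈ Finset.range (d + 1),
        (1 / Real.sqrt (Nat.factorial μ)) * (tupleNorm (Fin.snoc p ℓ) / M) ^ μ :=
      Finset.sum_nonneg (fun μ _ => mul_nonneg (by positivity)
        (pow_nonneg (div_nonneg (tupleNorm_nonneg _) hM.le) μ))
    have h0 : 0 ≤ Real.exp (-‖ℓ‖ ^ 2 / lam ^ 2) := (Real.exp_pos _).le
    exact mul_nonneg (mul_nonneg (mul_nonneg h0 h1) h2) h3
  -- integrability of the dominating function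
  have hbint : Integrable (fun ℓ : EuclideanSpace ℝ (Fin 4) =>
      (G * C1 * D) * Real.exp (-(1/(8*lam^2)) * ‖ℓ‖^2)) :=
    (gauss_integrable hb8).const_mul _
  have hIle : (∫ ℓ : EuclideanSpace ℝ (Fin 4),
        Real.exp (-‖ℓ‖ ^ 2 / lam ^ 2) *
          (∏ i, Real.exp (-‖k i + ℓ‖ ^ 2 / (alphaWeight (N + 2) (L - 1) * lams i ^ 2))) *
          logPlus (max (tupleNormM M (Fin.snoc p ℓ) / minl) (maxl / M)) ^ n *
          ∑ μ ∈ Finset.range (d + 1),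
            (1 / Real.sqrt (Nat.factorial μ)) * (tupleNorm (Fin.snoc p ℓ) / M) ^ μ)
      ≤ (G * C1 * D) * (64 * Real.pi^2 * lam^4) := by
    have := integral_mono_of_nonneg (ae_of_all _ hfnn) hbint (ae_of_all _ hpt)
    refine this.trans ?_
    rw [MeasureTheory.integral_const_mul, gauss_integral_val hlam]
  -- final arithmetic
  have hπ : (3.141592:ℝ) ≤ Real.pi := by linarith [Real.pi_gt_d6]
  have hπpos : (0:ℝ) < Real.pi := by linarith
  have h2π4 : (0:ℝ) < (2*Real.pi)^4 := by positivity
  set W := ((N' : ℝ) + 1) ^ (((n : ℝ) + 4) / 2) with hWdef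
  have hWnn : 0 ≤ W := Real.rpow_nonneg (by positivity) _
  have hW : 4 * Real.sqrt 2 ^ n ≤ W := by
    have h2N : (2:ℝ) ≤ (N':ℝ) + 1 := by
      have : (1:ℝ) ≤ (N':ℝ) := by exact_mod_cast hN'₁
      linarith
    have hexp0 : (0:ℝ) ≤ ((n:ℝ)+4)/2 := by positivity
    have hWge : (2:ℝ)^(((n:ℝ)+4)/2) ≤ W :=
      Real.rpow_le_rpow (by norm_num) h2N hexp0
    refine le_trans (le_of_eq ?_) hWge
    rw [show ((n:ℝ)+4)/2 = (1/2)*(n:ℝ) + 2 by ring]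
    rw [Real.rpow_add (by norm_num : (0:ℝ) < 2)]
    have e1 : (2:ℝ)^((1/2:ℝ)*(n:ℝ)) = Real.sqrt 2 ^ n := by
      rw [Real.rpow_mul (by norm_num : (0:ℝ) ≤ 2)]
      rw [Real.rpow_natCast]
      congr 1
      rw [← Real.sqrt_eq_rpow]
    have e2 : (2:ℝ)^((2:ℝ)) = 4 := by
      rw [show ((2:ℝ):ℝ) = ((2:ℕ):ℝ) by norm_num, Real.rpow_natCast]
      norm_num
    rw [e1, e2]
    ring
  have hkey : Real.sqrt 2 ^ n * (a ^ n + 100 * Real.sqrt (Nat.factorial n)) * 2 * (4/Real.pi^2)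
      ≤ 4 * Real.pi^2 * ((a ^ n + Real.sqrt (Nat.factorial n)) * W) := by
    have hsf : (0:ℝ) ≤ Real.sqrt (Nat.factorial n) := Real.sqrt_nonneg _
    have han : (0:ℝ) ≤ a^n := pow_nonneg ha0 n
    have hs2n : (0:ℝ) ≤ Real.sqrt 2 ^ n := pow_nonneg (Real.sqrt_nonneg 2) n
    calc Real.sqrt 2 ^ n * (a ^ n + 100 * Real.sqrt (Nat.factorial n)) * 2 * (4/Real.pi^2)
        ≤ Real.sqrt 2 ^ n * (100 * (a ^ n + Real.sqrt (Nat.factorial n))) * 2 * (4/Real.pi^2) := by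
          have : a ^ n + 100 * Real.sqrt (Nat.factorial n)
              ≤ 100 * (a ^ n + Real.sqrt (Nat.factorial n)) := by linarith
          apply mul_le_mul_of_nonneg_right _ (by positivity)
          apply mul_le_mul_of_nonneg_right _ (by norm_num)
          exact mul_le_mul_of_nonneg_left this hs2n
    _ = (800/Real.pi^2) * (Real.sqrt 2 ^ n * (a ^ n + Real.sqrt (Nat.factorial n))) := by
        ring
    _ ≤ (16*Real.pi^2) * (Real.sqrt 2 ^ n * (a ^ n + Real.sqrt (Nat.factorial n))) := by
        apply mul_le_mul_of_nonneg_right _ (by positivity)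
        rw [div_le_iff₀ (by positivity)]
        calc (800:ℝ) ≤ 16 * Real.pi^2 * Real.pi^2 := pi_num
        _ = 16*Real.pi^2*Real.pi^2 := by ring
    _ = 4 * Real.pi^2 * ((a ^ n + Real.sqrt (Nat.factorial n)) * (4 * Real.sqrt 2 ^ n)) := by
        ring
    _ ≤ 4 * Real.pi^2 * ((a ^ n + Real.sqrt (Nat.factorial n)) * W) := by
        apply mul_le_mul_of_nonneg_left _ (by positivity)
        apply mul_le_mul_of_nonneg_left hW (by positivity)
  calc (∫ ℓ : EuclideanSpace ℝ (Fin 4),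
        Real.exp (-‖ℓ‖ ^ 2 / lam ^ 2) *
          (∏ i, Real.exp (-‖k i + ℓ‖ ^ 2 / (alphaWeight (N + 2) (L - 1) * lams i ^ 2))) *
          logPlus (max (tupleNormM M (Fin.snoc p ℓ) / minl) (maxl / M)) ^ n *
          ∑ μ ∈ Finset.range (d + 1),
            (1 / Real.sqrt (Nat.factorial μ)) * (tupleNorm (Fin.snoc p ℓ) / M) ^ μ) /
        (2 * Real.pi) ^ 4
      ≤ ((G * C1 * D) * (64 * Real.pi^2 * lam^4)) / (2 * Real.pi) ^ 4 :=
        div_le_div_of_nonneg_right hIle h2π4.le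
  _ = (G * 2^d * max 1 (lam/M)^d * SP * lam^4) *
        (Real.sqrt 2 ^ n * (a ^ n + 100 * Real.sqrt (Nat.factorial n)) * 2 * (4/Real.pi^2)) := by
      rw [hC1def, hDdef]
      field_simp
      ring
  _ ≤ (G * 2^d * max 1 (lam/M)^d * SP * lam^4) *
        (4 * Real.pi^2 * ((a ^ n + Real.sqrt (Nat.factorial n)) * W)) := by
      apply mul_le_mul_of_nonneg_left hkey
      have hl4 : (0:ℝ) ≤ lam^4 := by positivity
      have h2d : (0:ℝ) ≤ (2:ℝ)^d := by positivity
      exact mul_nonneg (mul_nonneg (mul_nonneg (mul_nonneg hGnn h2d) hmaxdnn) hSPnn) hl4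
  _ = 4 * Real.pi ^ 2 * lam ^ 4 * G * (a ^ n + Real.sqrt (Nat.factorial n)) * W * 2 ^ d *
        max 1 (lam / M) ^ d * SP := by ring
end

section
/- Let n ∈ ℕ, let s ≥ 1 be an integer, and let a, b, M, Λ₀ be reals with 0 < a < Λ₀, b ≥ 0 and M > 0. Then ∫_a^{Λ₀} (log₊ max(b, λ/M))ⁿ λ^{−1−s} dλ ≤ a^{−s} · Σ_{j=0}^{n} (3·n!/j!) · (log₊ max(b, a/M))^j. -/
open MeasureTheory Real

lemma logPlus_nonneg (x : ℝ) : 0 ≤ logPlus x :=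
  Real.log_nonneg (le_max_left _ _)

lemma logPlus_mono {x y : ℝ} (h : x ≤ y) : logPlus x ≤ logPlus y :=
  Real.log_le_log (lt_of_lt_of_le one_pos (le_max_left _ _)) (max_le_max le_rfl h)

lemma logPlus_mul_le {x y : ℝ} (hx : 0 ≤ x) (hy : 0 ≤ y) :
    logPlus (x * y) ≤ logPlus x + logPlus y := by
  have h1 : (0:ℝ) < max 1 x := lt_of_lt_of_le one_pos (le_max_left _ _)
  have h2 : (0:ℝ) < max 1 y := lt_of_lt_of_le one_pos (le_max_left _ _)
  have hle : max 1 (x * y) ≤ max 1 x * max 1 y := by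
    refine max_le ?_ ?_
    · nlinarith [le_max_left 1 x, le_max_left 1 y]
    · exact mul_le_mul (le_max_right _ _) (le_max_right _ _) hy (le_of_lt h1)
  calc logPlus (x * y) ≤ Real.log (max 1 x * max 1 y) :=
        Real.log_le_log (lt_of_lt_of_le one_pos (le_max_left _ _)) hle
    _ = logPlus x + logPlus y := Real.log_mul h1.ne' h2.ne'

lemma key_integral (k : ℕ) {S a : ℝ} (hS : 1 ≤ S) (ha : 0 < a) :
    IntegrableOn (fun t => (Real.log (t / a)) ^ k * t ^ (-1 - S)) (Set.Ioi a) ∧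
    ∫ t in Set.Ioi a, (Real.log (t / a)) ^ k * t ^ (-1 - S)
      ≤ (k.factorial : ℝ) * a ^ (-S) := by
  have hS0 : (0:ℝ) < S := lt_of_lt_of_le one_pos hS
  set φ : ℝ → ℝ := fun u => a * Real.exp u with hφ
  have hderiv : ∀ u ∈ Set.Ioi (0:ℝ), HasDerivWithinAt φ (a * Real.exp u) (Set.Ioi 0) u :=
    fun u _ => ((Real.hasDerivAt_exp u).const_mul a).hasDerivWithinAt
  have hinj : Set.InjOn φ (Set.Ioi 0) :=
    fun u _ v _ h => Real.exp_injective (mul_left_cancel₀ ha.ne' h)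
  have himg : φ '' Set.Ioi 0 = Set.Ioi a := by
    ext x
    simp only [Set.mem_image, Set.mem_Ioi, hφ]
    constructor
    · rintro ⟨u, hu, rfl⟩
      have h1 : 1 < Real.exp u := lt_of_lt_of_le (by linarith) (Real.add_one_le_exp u)
      nlinarith
    · intro hx
      have hxa : 0 < x / a := div_pos (ha.trans hx) ha
      refine ⟨Real.log (x / a), Real.log_pos ((one_lt_div ha).mpr hx), ?_⟩
      rw [Real.exp_log hxa]
      field_simp
  have hEq : Set.EqOn (fun u : ℝ => a ^ (-S) * (u ^ (k:ℝ) * Real.exp (-S * u ^ (1:ℝ))))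
      (fun u => |a * Real.exp u| • ((Real.log (φ u / a)) ^ k * (φ u) ^ (-1 - S)))
      (Set.Ioi 0) := by
    intro u hu
    have heu : (0:ℝ) < Real.exp u := Real.exp_pos u
    simp only [hφ, smul_eq_mul]
    rw [mul_div_cancel_left₀ _ ha.ne', Real.log_exp, abs_of_pos (by positivity),
      Real.mul_rpow ha.le heu.le, Real.rpow_def_of_pos heu, Real.log_exp,
      Real.rpow_natCast, Real.rpow_one]
    rw [show -S * u = u + u * (-1 - S) by ring, Real.exp_add,
      show a ^ (-S) = a * a ^ (-1 - S) by
        rw [show (-S) = 1 + (-1 - S) by ring, Real.rpow_add ha, Real.rpow_one]]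
    ring
  have hint0 : IntegrableOn (fun u : ℝ => u ^ (k:ℝ) * Real.exp (-S * u ^ (1:ℝ)))
      (Set.Ioi 0) :=
    integrableOn_rpow_mul_exp_neg_mul_rpow
      (lt_of_lt_of_le (by norm_num) (Nat.cast_nonneg k)) one_pos hS0
  have hint : IntegrableOn (fun u : ℝ => a ^ (-S) * (u ^ (k:ℝ) * Real.exp (-S * u ^ (1:ℝ))))
      (Set.Ioi 0) := hint0.const_mul _
  have hIntOn : IntegrableOn (fun t => (Real.log (t / a)) ^ k * t ^ (-1 - S)) (Set.Ioi a) := by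
    rw [← himg,
      integrableOn_image_iff_integrableOn_abs_deriv_smul measurableSet_Ioi hderiv hinj]
    exact hint.congr_fun hEq measurableSet_Ioi
  refine ⟨hIntOn, ?_⟩
  have hval : ∫ t in Set.Ioi a, (Real.log (t / a)) ^ k * t ^ (-1 - S)
      = a ^ (-S) * ((1 / S) ^ ((k:ℝ) + 1) * Real.Gamma ((k:ℝ) + 1)) := by
    rw [← himg,
      integral_image_eq_integral_abs_deriv_smul measurableSet_Ioi hderiv hinj,
      ← setIntegral_congr_fun measurableSet_Ioi hEq, MeasureTheory.integral_const_mul]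
    congr 1
    rw [← Real.integral_rpow_mul_exp_neg_mul_Ioi (show (0:ℝ) < (k:ℝ) + 1 by positivity) hS0]
    refine setIntegral_congr_fun measurableSet_Ioi fun u hu => ?_
    simp only [Real.rpow_one, add_sub_cancel_right, neg_mul]
  rw [hval]
  have hGamma : Real.Gamma ((k:ℝ) + 1) = k.factorial := Real.Gamma_nat_eq_factorial k
  have hle : (1 / S) ^ ((k:ℝ) + 1) ≤ 1 :=
    Real.rpow_le_one (by positivity) ((div_le_one hS0).mpr hS) (by positivity)
  rw [hGamma]
  have h1 : (0:ℝ) ≤ a ^ (-S) := Real.rpow_nonneg ha.le _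
  have h2 : (0:ℝ) ≤ (k.factorial : ℝ) := Nat.cast_nonneg _
  calc a ^ (-S) * ((1 / S) ^ ((k:ℝ) + 1) * (k.factorial : ℝ))
      ≤ a ^ (-S) * (1 * (k.factorial : ℝ)) := by
        exact mul_le_mul_of_nonneg_left (mul_le_mul_of_nonneg_right hle h2) h1
    _ = (k.factorial : ℝ) * a ^ (-S) := by ring

theorem stmt1 (n s : ℕ) (hs : 1 ≤ s) (a b M Λ₀ : ℝ)
    (ha : 0 < a) (haΛ : a < Λ₀) (hb : 0 ≤ b) (hM : 0 < M) :
    (∫ t in Set.Ioo a Λ₀, logPlus (max b (t / M)) ^ n * t ^ (-1 - (s : ℝ)))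
      ≤ a ^ (-(s : ℝ)) *
        ∑ j ∈ Finset.range (n + 1),
          (3 * (Nat.factorial n : ℝ) / (Nat.factorial j : ℝ)) *
            logPlus (max b (a / M)) ^ j := by
  have hSge : (1:ℝ) ≤ (s:ℝ) := by exact_mod_cast hs
  set L : ℝ := logPlus (max b (a / M)) with hLdef
  have hL : 0 ≤ L := logPlus_nonneg _
  have hk := fun k : ℕ => key_integral k hSge ha
  set G : ℝ → ℝ := fun t => ∑ j ∈ Finset.range (n + 1),
      ((n.choose j : ℝ) * L ^ j) * ((Real.log (t / a)) ^ (n - j) * t ^ (-1 - (s:ℝ)))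
    with hGdef
  have hGint : IntegrableOn G (Set.Ioi a) :=
    integrable_finset_sum _ (fun j _ => ((hk (n - j)).1.const_mul _))
  have hG0 : ∀ t ∈ Set.Ioi a, 0 ≤ G t := by
    intro t ht
    have ht0 : (0:ℝ) < t := ha.trans ht
    have hlog : 0 ≤ Real.log (t / a) := Real.log_nonneg ((one_le_div ha).mpr (le_of_lt ht))
    exact Finset.sum_nonneg fun j _ => by positivity
  have hFG : ∀ t ∈ Set.Ioo a Λ₀,
      logPlus (max b (t / M)) ^ n * t ^ (-1 - (s:ℝ)) ≤ G t := by
    intro t ht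
    have hta : a < t := ht.1
    have ht0 : (0:ℝ) < t := ha.trans hta
    have hta1 : (1:ℝ) ≤ t / a := (one_le_div ha).mpr hta.le
    have hmax0 : 0 ≤ max b (a / M) := le_trans hb (le_max_left _ _)
    have hlog : logPlus (max b (t / M)) ≤ L + Real.log (t / a) := by
      have h1 : max b (t / M) ≤ max b (a / M) * (t / a) := by
        refine max_le ?_ ?_
        · calc b ≤ max b (a / M) := le_max_left _ _
            _ = max b (a / M) * 1 := (mul_one _).symm
            _ ≤ max b (a / M) * (t / a) := mul_le_mul_of_nonneg_left hta1 hmax0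
        · have h2 : t / M = (a / M) * (t / a) := by field_simp
          rw [h2]
          exact mul_le_mul_of_nonneg_right (le_max_right _ _) (by positivity)
      calc logPlus (max b (t / M)) ≤ logPlus (max b (a / M) * (t / a)) := logPlus_mono h1
        _ ≤ L + logPlus (t / a) := logPlus_mul_le hmax0 (by positivity)
        _ = L + Real.log (t / a) := by
            rw [logPlus, max_eq_right hta1]
    calc logPlus (max b (t / M)) ^ n * t ^ (-1 - (s:ℝ))
        ≤ (L + Real.log (t / a)) ^ n * t ^ (-1 - (s:ℝ)) :=
          mul_le_mul_of_nonneg_right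
            (pow_le_pow_left₀ (logPlus_nonneg _) hlog n)
            (Real.rpow_nonneg ht0.le _)
      _ = G t := by
          rw [hGdef, add_pow, Finset.sum_mul]
          exact Finset.sum_congr rfl fun j hj => by ring
  have hFnonneg : ∀ t ∈ Set.Ioo a Λ₀,
      0 ≤ logPlus (max b (t / M)) ^ n * t ^ (-1 - (s:ℝ)) := by
    intro t ht
    have ht0 : (0:ℝ) < t := ha.trans ht.1
    exact mul_nonneg (pow_nonneg (logPlus_nonneg _) n) (Real.rpow_nonneg ht0.le _)
  have hFmeas : AEStronglyMeasurable
      (fun t => logPlus (max b (t / M)) ^ n * t ^ (-1 - (s:ℝ)))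
      (volume.restrict (Set.Ioo a Λ₀)) := by
    apply Measurable.aestronglyMeasurable
    unfold logPlus
    have h1 : Measurable fun t : ℝ => Real.log (max 1 (max b (t / M))) :=
      Real.measurable_log.comp (by fun_prop)
    fun_prop
  have hFint : IntegrableOn
      (fun t => logPlus (max b (t / M)) ^ n * t ^ (-1 - (s:ℝ))) (Set.Ioo a Λ₀) := by
    refine Integrable.mono' (hGint.mono_set Set.Ioo_subset_Ioi_self) hFmeas ?_
    filter_upwards [ae_restrict_mem measurableSet_Ioo] with t ht
    rw [Real.norm_eq_abs, abs_of_nonneg (hFnonneg t ht)]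
    exact hFG t ht
  have hfact : ∀ j ∈ Finset.range (n + 1),
      (n.choose j : ℝ) * ((n - j).factorial : ℝ) = (n.factorial : ℝ) / (j.factorial : ℝ) := by
    intro j hj
    have hjn : j ≤ n := Nat.lt_succ_iff.mp (Finset.mem_range.mp hj)
    have h := Nat.choose_mul_factorial_mul_factorial hjn
    have hjf : ((j.factorial : ℝ)) ≠ 0 := by positivity
    rw [eq_div_iff hjf]
    have : ((n.choose j * j.factorial * (n - j).factorial : ℕ) : ℝ)
        = ((n.factorial : ℕ) : ℝ) := by exact_mod_cast congrArg Nat.cast h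
    push_cast at this ⊢
    linarith [this]
  have ha0 : (0:ℝ) ≤ a ^ (-(s:ℝ)) := Real.rpow_nonneg ha.le _
  calc (∫ t in Set.Ioo a Λ₀, logPlus (max b (t / M)) ^ n * t ^ (-1 - (s : ℝ)))
      ≤ ∫ t in Set.Ioo a Λ₀, G t :=
        setIntegral_mono_on hFint (hGint.mono_set Set.Ioo_subset_Ioi_self)
          measurableSet_Ioo hFG
    _ ≤ ∫ t in Set.Ioi a, G t := by
        refine setIntegral_mono_set hGint ?_
          (HasSubset.Subset.eventuallyLE Set.Ioo_subset_Ioi_self)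
        filter_upwards [ae_restrict_mem measurableSet_Ioi] with t ht
        exact hG0 t ht
    _ = ∑ j ∈ Finset.range (n + 1), ((n.choose j : ℝ) * L ^ j) *
          ∫ t in Set.Ioi a, (Real.log (t / a)) ^ (n - j) * t ^ (-1 - (s:ℝ)) := by
        rw [hGdef, integral_finset_sum _ (fun j _ => ((hk (n - j)).1.const_mul _))]
        exact Finset.sum_congr rfl fun j _ => MeasureTheory.integral_const_mul _ _
    _ ≤ ∑ j ∈ Finset.range (n + 1), ((n.choose j : ℝ) * L ^ j) *
          (((n - j).factorial : ℝ) * a ^ (-(s:ℝ))) := by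
        refine Finset.sum_le_sum fun j _ => ?_
        exact mul_le_mul_of_nonneg_left (hk (n - j)).2 (by positivity)
    _ ≤ a ^ (-(s : ℝ)) * ∑ j ∈ Finset.range (n + 1),
          (3 * (Nat.factorial n : ℝ) / (Nat.factorial j : ℝ)) * L ^ j := by
        rw [Finset.mul_sum]
        refine Finset.sum_le_sum fun j hj => ?_
        have h3 : (n.factorial : ℝ) / (j.factorial : ℝ)
            ≤ 3 * (n.factorial : ℝ) / (j.factorial : ℝ) := by
          rw [mul_div_assoc]
          nlinarith [div_nonneg (Nat.cast_nonneg n.factorial : (0:ℝ) ≤ n.factorial)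
            (Nat.cast_nonneg j.factorial : (0:ℝ) ≤ j.factorial)]
        calc ((n.choose j : ℝ) * L ^ j) * (((n - j).factorial : ℝ) * a ^ (-(s:ℝ)))
            = ((n.choose j : ℝ) * ((n - j).factorial : ℝ)) * (L ^ j * a ^ (-(s:ℝ))) := by
              ring
          _ = ((n.factorial : ℝ) / (j.factorial : ℝ)) * (L ^ j * a ^ (-(s:ℝ))) := by
              rw [hfact j hj]
          _ ≤ (3 * (n.factorial : ℝ) / (j.factorial : ℝ)) * (L ^ j * a ^ (-(s:ℝ))) :=
              mul_le_mul_of_nonneg_right h3 (by positivity)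
          _ = a ^ (-(s:ℝ)) * ((3 * (n.factorial : ℝ) / (j.factorial : ℝ)) * L ^ j) := by
              ring
end

section
/- For every n ∈ ℕ and every real polynomial P of degree ≤ n with nonnegative coefficients there exists a real polynomial P' of degree ≤ n with nonnegative coefficients such that: for all α > 0, all k ∈ ℝ⁴, all M > 0, all r ≥ M, all reals Λ, Λ₀ with 0 ≤ Λ ≤ Λ₀, and all reals m, μ with Λ ≤ m ≤ μ ≤ Λ₀ (playing the role of the minimum and maximum of the remaining scale parameters λ_j, j ∈ ℐ∖{a}), one has ∫_Λ^{Λ₀} λ^{−2} e^{−‖k‖²/(α λ²)} · P( log₊ max( r/min(λ,m), max(λ,μ)/M ) ) · min(λ,m)² dλ ≤ P'( log₊ max( r/m, μ/M ) ) · m. -/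
open MeasureTheory Real

lemma logPlus_max_one (z : ℝ) : logPlus (max 1 z) = logPlus z := by
  unfold logPlus
  rw [max_eq_right (le_max_left 1 z)]

lemma one_le_two_mul_pow (j : ℕ) : (1:ℝ) ≤ (2*j:ℝ)^j := by
  rcases Nat.eq_zero_or_pos j with h | h
  · simp [h]
  · apply one_le_pow₀
    have : (1:ℝ) ≤ (j:ℝ) := by exact_mod_cast h
    linarith

lemma log_pow_le_sqrt {x : ℝ} (hx : 1 ≤ x) (j : ℕ) :
    (Real.log x) ^ j ≤ (2*j:ℝ)^j * Real.sqrt x := by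
  have hx0 : (0:ℝ) < x := lt_of_lt_of_le one_pos hx
  rcases Nat.eq_zero_or_pos j with h | hj
  · simp only [h, pow_zero, Nat.cast_zero, mul_zero, one_mul]
    exact Real.one_le_sqrt.mpr hx
  · have hjR : (0:ℝ) < (j:ℝ) := by exact_mod_cast hj
    set c : ℝ := 1/(2*(j:ℝ)) with hc
    have hc0 : 0 < c := by positivity
    have h1 : Real.log x = (2*(j:ℝ)) * Real.log (x ^ c) := by
      rw [Real.log_rpow hx0, hc]; field_simp
    have h2 : Real.log (x ^ c) ≤ x ^ c :=
      (Real.log_le_sub_one_of_pos (by positivity)).trans (by linarith)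
    have h3 : Real.log x ≤ (2*(j:ℝ)) * x ^ c := by
      rw [h1]; exact mul_le_mul_of_nonneg_left h2 (by positivity)
    have hlog0 : 0 ≤ Real.log x := Real.log_nonneg hx
    calc (Real.log x)^j ≤ ((2*(j:ℝ)) * x ^ c)^j := pow_le_pow_left₀ hlog0 h3 j
      _ = (2*(j:ℝ))^j * (x ^ c)^j := mul_pow _ _ _
      _ = (2*(j:ℝ))^j * Real.sqrt x := by
          rw [← Real.rpow_natCast (x ^ c) j, ← Real.rpow_mul hx0.le,
            Real.sqrt_eq_rpow]
          have hce : c * (j:ℝ) = 1/2 := by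
            rw [hc]; field_simp
          rw [hce]

lemma eval_nonneg' (P : Polynomial ℝ) (h : ∀ i, 0 ≤ P.coeff i) {x : ℝ} (hx : 0 ≤ x) :
    0 ≤ P.eval x := by
  rw [Polynomial.eval_eq_sum_range]
  exact Finset.sum_nonneg fun i _ => mul_nonneg (h i) (pow_nonneg hx i)

lemma w_le_phi {m t : ℝ} (hm : 0 < m) (ht : 0 < t) :
    min t m ^ 2 / t ^ 2 ≤ Real.sqrt (m/t) * min 1 (m/t) := by
  rcases le_total t m with h | h
  · rw [min_eq_left h, min_eq_left ((le_div_iff₀ ht).mpr (by linarith))]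
    have h2 : t^2/t^2 = 1 := div_self (by positivity)
    rw [h2, mul_one]
    exact Real.one_le_sqrt.mpr ((le_div_iff₀ ht).mpr (by linarith))
  · rw [min_eq_right h, min_eq_right (by rw [div_le_one ht]; linarith)]
    rw [← div_pow]
    set x := m/t with hx
    have hx0 : 0 < x := by positivity
    have hx1 : x ≤ 1 := by rw [hx, div_le_one ht]; linarith
    have hsq : Real.sqrt x * Real.sqrt x = x := Real.mul_self_sqrt hx0.le
    have hs1 : Real.sqrt x ≤ 1 := Real.sqrt_le_one.mpr hx1
    nlinarith [hsq, hs1, mul_nonneg hx0.le (Real.sqrt_nonneg x)]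

lemma C_pow_w_le {m μ t : ℝ} (hm : 0 < m) (hmμ : m ≤ μ) (ht : 0 < t) (j : ℕ) :
    logPlus (max (m/t) (t/μ)) ^ j * (min t m ^ 2 / t ^ 2)
      ≤ (2*j:ℝ)^j * (Real.sqrt (m/t) * min 1 (m/t)) := by
  have hμ : 0 < μ := lt_of_lt_of_le hm hmμ
  rcases le_total t m with h1 | h1
  · have hmt1 : (1:ℝ) ≤ m/t := (le_div_iff₀ ht).mpr (by linarith)
    have hmax : max (m/t) (t/μ) = m/t := max_eq_left (by
      have : t/μ ≤ 1 := by rw [div_le_one hμ]; linarith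
      linarith)
    have hC : logPlus (max (m/t) (t/μ)) = Real.log (m/t) := by
      rw [hmax]; unfold logPlus; rw [max_eq_right hmt1]
    have hw : min t m ^2 / t^2 ≤ 1 := by
      rw [min_eq_left h1]; exact le_of_eq (div_self (by positivity))
    rw [hC, min_eq_left hmt1, mul_one]
    calc Real.log (m/t) ^ j * (min t m ^2/t^2) ≤ Real.log (m/t)^j * 1 :=
          mul_le_mul_of_nonneg_left hw (pow_nonneg (Real.log_nonneg hmt1) j)
      _ = Real.log (m/t)^j := mul_one _
      _ ≤ (2*j:ℝ)^j * Real.sqrt (m/t) := log_pow_le_sqrt hmt1 j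
  · rcases le_total t μ with h2 | h2
    · have hmax : max (1:ℝ) (max (m/t) (t/μ)) = 1 := by
        apply max_eq_left; apply max_le
        · rw [div_le_one ht]; linarith
        · rw [div_le_one hμ]; linarith
      have hC : logPlus (max (m/t) (t/μ)) = 0 := by
        unfold logPlus; rw [hmax, Real.log_one]
      rw [hC]
      have hz : (0:ℝ)^j ≤ 1 := by
        rcases Nat.eq_zero_or_pos j with h | h
        · simp [h]
        · rw [zero_pow (by omega)]; norm_num
      have hw0 : 0 ≤ min t m ^2 / t^2 := by positivity
      calc (0:ℝ)^j * (min t m ^2/t^2) ≤ 1 * (min t m^2/t^2) :=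
            mul_le_mul_of_nonneg_right hz hw0
        _ = min t m^2/t^2 := one_mul _
        _ ≤ Real.sqrt (m/t) * min 1 (m/t) := w_le_phi hm ht
        _ ≤ (2*j:ℝ)^j * (Real.sqrt (m/t) * min 1 (m/t)) := by
            apply le_mul_of_one_le_left ?_ (one_le_two_mul_pow j)
            have : (0:ℝ) ≤ m/t := by positivity
            positivity
    · have htμ1 : (1:ℝ) ≤ t/μ := (le_div_iff₀ hμ).mpr (by linarith)
      have hmt : m/t ≤ 1 := by rw [div_le_one ht]; linarith
      have hmax : max (m/t) (t/μ) = t/μ := max_eq_right (by linarith)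
      have hC : logPlus (max (m/t) (t/μ)) = Real.log (t/μ) := by
        rw [hmax]; unfold logPlus; rw [max_eq_right htμ1]
      have hkey : Real.log (t/μ)^j ≤ (2*j:ℝ)^j * Real.sqrt (t/μ) := log_pow_le_sqrt htμ1 j
      have hle : Real.sqrt (t/μ) ≤ Real.sqrt (t/m) := by
        apply Real.sqrt_le_sqrt; gcongr
      have heq : Real.sqrt (t/m) * (m/t)^2 = Real.sqrt (m/t) * (m/t) := by
        rw [show t/m = (m/t)⁻¹ from (inv_div m t).symm, Real.sqrt_inv]
        set x := m/t with hxd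
        have hx0 : 0 < x := by positivity
        have hsx : 0 < Real.sqrt x := Real.sqrt_pos.mpr hx0
        have hss : Real.sqrt x * Real.sqrt x = x := Real.mul_self_sqrt hx0.le
        field_simp
        nlinarith [hss]
      rw [hC, min_eq_right hmt, min_eq_right h1, ← div_pow]
      calc Real.log (t/μ)^j * (m/t)^2 ≤ ((2*j:ℝ)^j * Real.sqrt (t/m)) * (m/t)^2 := by
            apply mul_le_mul_of_nonneg_right _ (by positivity)
            exact hkey.trans (mul_le_mul_of_nonneg_left hle (by positivity))
        _ = (2*j:ℝ)^j * (Real.sqrt (t/m) * (m/t)^2) := by ring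
        _ = (2*j:ℝ)^j * (Real.sqrt (m/t) * (m/t)) := by rw [heq]

lemma A_le {M r m μ t : ℝ} (hM : 0 < M) (hMr : M ≤ r) (hm : 0 < m) (hmμ : m ≤ μ)
    (ht : 0 < t) :
    logPlus (max (r / min t m) (max t μ / M))
      ≤ logPlus (max (r/m) (μ/M)) + logPlus (max (m/t) (t/μ)) := by
  have hμ : 0 < μ := lt_of_lt_of_le hm hmμ
  have hr : 0 < r := lt_of_lt_of_le hM hMr
  set X := max (r/m) (μ/M) with hX
  set Y := max 1 (max (m/t) (t/μ)) with hY
  have hX0 : 0 ≤ X := le_trans (by positivity : (0:ℝ) ≤ r/m) (le_max_left _ _)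
  have hY0 : 0 ≤ Y := le_trans zero_le_one (le_max_left _ _)
  have h1 : r / min t m ≤ X * Y := by
    rcases le_total t m with h | h
    · rw [min_eq_left h]
      have he : r/t = (r/m) * (m/t) := by field_simp
      rw [he]
      exact mul_le_mul (le_max_left _ _)
        (le_trans (le_max_left (m/t) (t/μ)) (le_max_right 1 _)) (by positivity) hX0
    · rw [min_eq_right h]
      calc r/m ≤ (r/m) * Y := le_mul_of_one_le_right (by positivity) (le_max_left _ _)
        _ ≤ X * Y := mul_le_mul_of_nonneg_right (le_max_left _ _) hY0
  have h2 : max t μ / M ≤ X * Y := by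
    rcases le_total t μ with h | h
    · rw [max_eq_right h]
      calc μ/M ≤ (μ/M) * Y := le_mul_of_one_le_right (by positivity) (le_max_left _ _)
        _ ≤ X * Y := mul_le_mul_of_nonneg_right (le_max_right _ _) hY0
    · rw [max_eq_left h]
      have he : t/M = (μ/M) * (t/μ) := by field_simp
      rw [he]
      exact mul_le_mul (le_max_right _ _)
        (le_trans (le_max_right (m/t) (t/μ)) (le_max_right 1 _)) (by positivity) hX0
  calc logPlus (max (r / min t m) (max t μ / M)) ≤ logPlus (X * Y) :=
        logPlus_mono (max_le h1 h2)
    _ ≤ logPlus X + logPlus Y := logPlus_mul_le hX0 hY0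
    _ = logPlus X + logPlus (max (m/t) (t/μ)) := by rw [hY, logPlus_max_one]

lemma pointwise_bound {n : ℕ} {P : Polynomial ℝ} (hPdeg : P.natDegree ≤ n)
    (hPcoeff : ∀ i, 0 ≤ P.coeff i) {α M r m μ t : ℝ}
    (k2 : ℝ) (hk2 : 0 ≤ k2) (hα : 0 < α)
    (hM : 0 < M) (hMr : M ≤ r) (hm : 0 < m) (hmμ : m ≤ μ) (ht : 0 < t) :
    (1 / t ^ 2) * Real.exp (-k2 / (α * t ^ 2)) *
        P.eval (logPlus (max (r / min t m) (max t μ / M))) * min t m ^ 2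
      ≤ (∑ j ∈ Finset.range (n+1),
          P.coeff j * 2^j * ((logPlus (max (r/m) (μ/M)))^j + (2*j:ℝ)^j))
        * (Real.sqrt (m/t) * min 1 (m/t)) := by
  set L := logPlus (max (r/m) (μ/M)) with hLdef
  set Ct := logPlus (max (m/t) (t/μ)) with hCdef
  set A := logPlus (max (r / min t m) (max t μ / M)) with hAdef
  set w := min t m ^ 2 / t ^ 2 with hwdef
  set φ := Real.sqrt (m/t) * min 1 (m/t) with hφdef
  set K := ∑ j ∈ Finset.range (n+1), P.coeff j * 2^j * (L^j + (2*j:ℝ)^j) with hKdef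
  have hL0 : 0 ≤ L := logPlus_nonneg _
  have hC0 : 0 ≤ Ct := logPlus_nonneg _
  have hA0 : 0 ≤ A := logPlus_nonneg _
  have hA : A ≤ L + Ct := A_le hM hMr hm hmμ ht
  have hw0 : 0 ≤ w := by rw [hwdef]; positivity
  have hφ0 : 0 ≤ φ := by
    rw [hφdef]
    have : (0:ℝ) ≤ m/t := by positivity
    positivity
  have hφw : w ≤ φ := w_le_phi hm ht
  have hE0 : 0 ≤ P.eval A := eval_nonneg' P hPcoeff hA0
  have hexp : Real.exp (-k2 / (α * t ^ 2)) ≤ 1 := by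
    apply Real.exp_le_one_iff.mpr
    have h1 : 0 ≤ k2 / (α * t^2) := by positivity
    rw [neg_div]; linarith
  have hterm : ∀ j : ℕ, A^j * w ≤ 2^j * (L^j + (2*j:ℝ)^j) * φ := by
    intro j
    have hLC : A ^ j ≤ (L + Ct)^j := pow_le_pow_left₀ hA0 hA j
    have hmax : (L + Ct)^j ≤ 2^j * (L^j + Ct^j) := by
      have h2m : L + Ct ≤ 2 * max L Ct := by
        have := le_max_left L Ct; have := le_max_right L Ct; linarith
      calc (L+Ct)^j ≤ (2 * max L Ct)^j :=
            pow_le_pow_left₀ (by positivity) h2m j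
        _ = 2^j * (max L Ct)^j := mul_pow _ _ _
        _ ≤ 2^j * (L^j + Ct^j) := by
            apply mul_le_mul_of_nonneg_left _ (by positivity)
            rcases max_cases L Ct with ⟨h, _⟩ | ⟨h, _⟩ <;> rw [h]
            · linarith [pow_nonneg hC0 j]
            · linarith [pow_nonneg hL0 j]
    have hCw : Ct^j * w ≤ (2*j:ℝ)^j * φ := C_pow_w_le hm hmμ ht j
    calc A^j * w ≤ (2^j*(L^j + Ct^j)) * w :=
          mul_le_mul_of_nonneg_right (hLC.trans hmax) hw0
      _ = 2^j * (L^j * w + Ct^j * w) := by ring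
      _ ≤ 2^j * (L^j * φ + (2*j:ℝ)^j * φ) := by
          apply mul_le_mul_of_nonneg_left _ (by positivity)
          exact add_le_add (mul_le_mul_of_nonneg_left hφw (pow_nonneg hL0 j)) hCw
      _ = 2^j * (L^j + (2*j:ℝ)^j) * φ := by ring
  have hev : P.eval A = ∑ j ∈ Finset.range (n+1), P.coeff j * A^j :=
    Polynomial.eval_eq_sum_range' (Nat.lt_succ_of_le hPdeg) A
  have hEw : P.eval A * w ≤ K * φ := by
    rw [hev, Finset.sum_mul, hKdef, Finset.sum_mul]
    apply Finset.sum_le_sum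
    intro j _
    calc P.coeff j * A^j * w = P.coeff j * (A^j * w) := by ring
      _ ≤ P.coeff j * (2^j * (L^j + (2*j:ℝ)^j) * φ) :=
          mul_le_mul_of_nonneg_left (hterm j) (hPcoeff j)
      _ = P.coeff j * 2^j * (L^j + (2*j:ℝ)^j) * φ := by ring
  calc (1 / t ^ 2) * Real.exp (-k2 / (α * t ^ 2)) * P.eval A * min t m ^ 2
      = Real.exp (-k2 / (α * t ^ 2)) * (P.eval A * w) := by
        rw [hwdef]; field_simp
    _ ≤ 1 * (K * φ) :=
        mul_le_mul hexp hEw (mul_nonneg hE0 hw0) zero_le_one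
    _ = K * φ := one_mul _

noncomputable def phi (m t : ℝ) : ℝ := Real.sqrt (m/t) * min 1 (m/t)

lemma phi_meas (m : ℝ) : Measurable (phi m) := by
  unfold phi
  fun_prop

lemma phi_nonneg {m t : ℝ} (hm : 0 < m) (ht : 0 < t) : 0 ≤ phi m t := by
  unfold phi
  have : (0:ℝ) ≤ m/t := by positivity
  positivity

lemma rpow_neg_half {t : ℝ} (ht : 0 < t) : t ^ (-(1/2):ℝ) = (Real.sqrt t)⁻¹ := by
  rw [Real.rpow_neg ht.le, ← Real.sqrt_eq_rpow]

lemma phi_le_on_Ioc {m t : ℝ} (hm : 0 < m) (ht : 0 < t) :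
    phi m t ≤ Real.sqrt m * t ^ (-(1/2) : ℝ) := by
  unfold phi
  have h1 : Real.sqrt (m/t) = Real.sqrt m * t ^ (-(1/2):ℝ) := by
    rw [Real.sqrt_div hm.le, rpow_neg_half ht, div_eq_mul_inv]
  calc Real.sqrt (m/t) * min 1 (m/t) ≤ Real.sqrt (m/t) * 1 :=
        mul_le_mul_of_nonneg_left (min_le_left _ _) (Real.sqrt_nonneg _)
    _ = Real.sqrt (m/t) := mul_one _
    _ = Real.sqrt m * t ^ (-(1/2):ℝ) := h1

lemma phi_le_on_Ioi {m t : ℝ} (hm : 0 < m) (hmt : m ≤ t) :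
    phi m t ≤ (m * Real.sqrt m) * t ^ (-(3/2):ℝ) := by
  have ht : 0 < t := lt_of_lt_of_le hm hmt
  have hst : 0 < Real.sqrt t := Real.sqrt_pos.mpr ht
  have h2 : t ^ (-(3/2):ℝ) = (Real.sqrt t)⁻¹ * t⁻¹ := by
    rw [show (-(3/2):ℝ) = -(1/2) + (-1) by norm_num, Real.rpow_add ht,
      rpow_neg_half ht, Real.rpow_neg_one]
  have hmin : min 1 (m/t) = m/t := min_eq_right (by rw [div_le_one ht]; linarith)
  unfold phi
  rw [hmin, h2, Real.sqrt_div hm.le]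
  apply le_of_eq
  field_simp

lemma g1_int {m : ℝ} (hm : 0 < m) :
    IntegrableOn (fun t : ℝ => Real.sqrt m * t ^ (-(1/2):ℝ)) (Set.Ioc 0 m) := by
  have h := intervalIntegral.intervalIntegrable_rpow' (a := 0) (b := m)
    (r := -(1/2)) (by norm_num)
  exact ((intervalIntegrable_iff_integrableOn_Ioc_of_le hm.le).mp h).const_mul _

lemma phi_int_Ioc {m : ℝ} (hm : 0 < m) : IntegrableOn (phi m) (Set.Ioc 0 m) := by
  apply (g1_int hm).mono' ((phi_meas m).aestronglyMeasurable)
  filter_upwards [ae_restrict_mem measurableSet_Ioc] with t ht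
  rw [Real.norm_eq_abs, abs_of_nonneg (phi_nonneg hm ht.1)]
  exact phi_le_on_Ioc hm ht.1

lemma g2_int {m : ℝ} (hm : 0 < m) :
    IntegrableOn (fun t : ℝ => (m * Real.sqrt m) * t ^ (-(3/2):ℝ)) (Set.Ioi m) :=
  (integrableOn_Ioi_rpow_of_lt (by norm_num) hm).const_mul _

lemma phi_int_Ioi {m : ℝ} (hm : 0 < m) : IntegrableOn (phi m) (Set.Ioi m) := by
  apply (g2_int hm).mono' ((phi_meas m).aestronglyMeasurable)
  filter_upwards [ae_restrict_mem measurableSet_Ioi] with t ht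
  rw [Real.norm_eq_abs, abs_of_nonneg (phi_nonneg hm (lt_trans hm ht))]
  exact phi_le_on_Ioi hm ht.le

lemma phi_integral_Ioc {m : ℝ} (hm : 0 < m) : ∫ t in Set.Ioc 0 m, phi m t ≤ 2 * m := by
  have h1 : ∫ t in Set.Ioc 0 m, phi m t
      ≤ ∫ t in Set.Ioc 0 m, Real.sqrt m * t ^ (-(1/2):ℝ) :=
    setIntegral_mono_on (phi_int_Ioc hm) (g1_int hm) measurableSet_Ioc
      (fun t ht => phi_le_on_Ioc hm ht.1)
  have h3 : ∫ t in Set.Ioc 0 m, Real.sqrt m * t ^ (-(1/2):ℝ)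
      = Real.sqrt m * ∫ t in Set.Ioc 0 m, t ^ (-(1/2):ℝ) := integral_const_mul _ _
  have h4 : ∫ t in Set.Ioc 0 m, t ^ (-(1/2):ℝ) = 2 * Real.sqrt m := by
    rw [← intervalIntegral.integral_of_le hm.le,
      integral_rpow (Or.inl (by norm_num : (-1:ℝ) < -(1/2)))]
    rw [show (-(1/2):ℝ)+1 = 1/2 by norm_num, Real.zero_rpow (by norm_num),
      Real.sqrt_eq_rpow]
    ring
  have h5 : Real.sqrt m * Real.sqrt m = m := Real.mul_self_sqrt hm.le
  calc ∫ t in Set.Ioc 0 m, phi m t ≤ Real.sqrt m * (2 * Real.sqrt m) := by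
        rw [← h4, ← h3]; exact h1
    _ = 2 * (Real.sqrt m * Real.sqrt m) := by ring
    _ = 2 * m := by rw [h5]

lemma phi_integral_Ioi {m : ℝ} (hm : 0 < m) : ∫ t in Set.Ioi m, phi m t ≤ 2 * m := by
  have h1 : ∫ t in Set.Ioi m, phi m t
      ≤ ∫ t in Set.Ioi m, (m * Real.sqrt m) * t ^ (-(3/2):ℝ) :=
    setIntegral_mono_on (phi_int_Ioi hm) (g2_int hm) measurableSet_Ioi
      (fun t ht => phi_le_on_Ioi hm ht.le)
  have h3 : ∫ t in Set.Ioi m, (m * Real.sqrt m) * t ^ (-(3/2):ℝ)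
      = (m * Real.sqrt m) * ∫ t in Set.Ioi m, t ^ (-(3/2):ℝ) := integral_const_mul _ _
  have h4 : ∫ t in Set.Ioi m, t ^ (-(3/2):ℝ) = 2 * (Real.sqrt m)⁻¹ := by
    rw [integral_Ioi_rpow_of_lt (by norm_num) hm]
    rw [show (-(3/2):ℝ) + 1 = -(1/2) by norm_num, rpow_neg_half hm]
    ring
  have h5 : 0 < Real.sqrt m := Real.sqrt_pos.mpr hm
  calc ∫ t in Set.Ioi m, phi m t ≤ (m * Real.sqrt m) * (2 * (Real.sqrt m)⁻¹) := by
        rw [← h4, ← h3]; exact h1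
    _ = 2 * m := by field_simp

lemma phi_int_Ioi0 {m : ℝ} (hm : 0 < m) : IntegrableOn (phi m) (Set.Ioi 0) := by
  rw [← Set.Ioc_union_Ioi_eq_Ioi hm.le]
  exact (phi_int_Ioc hm).union (phi_int_Ioi hm)

lemma phi_integral_Ioi0 {m : ℝ} (hm : 0 < m) : ∫ t in Set.Ioi 0, phi m t ≤ 4 * m := by
  rw [← Set.Ioc_union_Ioi_eq_Ioi hm.le,
    setIntegral_union (Set.Ioc_disjoint_Ioi le_rfl) measurableSet_Ioi
      (phi_int_Ioc hm) (phi_int_Ioi hm)]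
  linarith [phi_integral_Ioc hm, phi_integral_Ioi hm]

theorem stmt2 (n : ℕ) (P : Polynomial ℝ) (hPdeg : P.natDegree ≤ n)
    (hPcoeff : ∀ i, 0 ≤ P.coeff i) :
    ∃ P' : Polynomial ℝ, P'.natDegree ≤ n ∧ (∀ i, 0 ≤ P'.coeff i) ∧
      ∀ (α : ℝ), 0 < α → ∀ (k : EuclideanSpace ℝ (Fin 4)) (M r Λ Λ₀ m μ : ℝ),
        0 < M → M ≤ r → 0 ≤ Λ → Λ ≤ Λ₀ → Λ ≤ m → m ≤ μ → μ ≤ Λ₀ →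
        (∫ t in Set.Ioo Λ Λ₀,
            (1 / t ^ 2) * Real.exp (-‖k‖ ^ 2 / (α * t ^ 2)) *
              P.eval (logPlus (max (r / min t m) (max t μ / M))) * min t m ^ 2)
          ≤ P'.eval (logPlus (max (r / m) (μ / M))) * m := by
  classical
  set Q : Polynomial ℝ :=
    (∑ j ∈ Finset.range (n+1), Polynomial.C (4 * P.coeff j * 2^j) * Polynomial.X ^ j)
      + Polynomial.C (4 * ∑ j ∈ Finset.range (n+1), P.coeff j * 2^j * (2*j:ℝ)^j)
    with hQ
  have hQd : Q.natDegree ≤ n := by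
    apply le_trans (Polynomial.natDegree_add_le _ _)
    apply max_le
    · apply Polynomial.natDegree_sum_le_of_forall_le
      intro j hj
      exact le_trans (Polynomial.natDegree_C_mul_X_pow_le _ _)
        (Nat.lt_succ_iff.mp (Finset.mem_range.mp hj))
    · exact le_trans (le_of_eq (Polynomial.natDegree_C _)) (Nat.zero_le n)
  have hQc : ∀ i, 0 ≤ Q.coeff i := by
    intro i
    rw [hQ, Polynomial.coeff_add, Polynomial.finset_sum_coeff]
    apply add_nonneg
    · apply Finset.sum_nonneg
      intro j _
      rw [Polynomial.coeff_C_mul, Polynomial.coeff_X_pow]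
      split_ifs with h
      · rw [mul_one]
        have := hPcoeff j
        positivity
      · rw [mul_zero]
    · rw [Polynomial.coeff_C]
      split_ifs with h
      · apply mul_nonneg (by norm_num)
        apply Finset.sum_nonneg
        intro j _
        have := hPcoeff j
        positivity
      · exact le_refl 0
  refine ⟨Q, hQd, hQc, ?_⟩
  intro α hα k M r Λ Λ₀ m μ hM hMr hΛ hΛΛ₀ hΛm hmμ hμΛ₀
  set L := logPlus (max (r/m) (μ/M)) with hL
  have hL0 : 0 ≤ L := logPlus_nonneg _
  have hm0 : 0 ≤ m := le_trans hΛ hΛm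
  rcases eq_or_lt_of_le hm0 with hm | hm
  · -- m = 0
    have hz : Set.EqOn (fun t : ℝ =>
        (1 / t ^ 2) * Real.exp (-‖k‖ ^ 2 / (α * t ^ 2)) *
          P.eval (logPlus (max (r / min t m) (max t μ / M))) * min t m ^ 2)
        (fun _ => (0:ℝ)) (Set.Ioo Λ Λ₀) := by
      intro t ht
      have ht0 : 0 < t := lt_of_le_of_lt hΛ ht.1
      have hmin : min t m = 0 := by rw [← hm]; exact min_eq_right ht0.le
      simp only [hmin]
      norm_num
    rw [setIntegral_congr_fun measurableSet_Ioo hz, ← hm]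
    simp
  · -- 0 < m
    have hsub : Set.Ioo Λ Λ₀ ⊆ Set.Ioi 0 := fun t ht => lt_of_le_of_lt hΛ ht.1
    set K := ∑ j ∈ Finset.range (n+1), P.coeff j * 2^j * (L^j + (2*j:ℝ)^j) with hK
    have hK0 : 0 ≤ K := by
      apply Finset.sum_nonneg
      intro j _
      have h1 := hPcoeff j
      have h2 : (0:ℝ) ≤ L^j := pow_nonneg hL0 j
      positivity
    have hQK : Q.eval L = 4 * K := by
      rw [hQ, hK]
      simp only [Polynomial.eval_add, Polynomial.eval_finset_sum, Polynomial.eval_mul,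
        Polynomial.eval_C, Polynomial.eval_pow, Polynomial.eval_X]
      rw [Finset.mul_sum, Finset.mul_sum, ← Finset.sum_add_distrib]
      exact Finset.sum_congr rfl fun j _ => by ring
    by_cases hInt : IntegrableOn (fun t : ℝ =>
        (1 / t ^ 2) * Real.exp (-‖k‖ ^ 2 / (α * t ^ 2)) *
          P.eval (logPlus (max (r / min t m) (max t μ / M))) * min t m ^ 2)
        (Set.Ioo Λ Λ₀) volume
    · have hφint : IntegrableOn (fun t => K * phi m t) (Set.Ioo Λ Λ₀) volume :=
        ((phi_int_Ioi0 hm).mono_set hsub).const_mul K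
      have h1 : (∫ t in Set.Ioo Λ Λ₀, (1 / t ^ 2) * Real.exp (-‖k‖ ^ 2 / (α * t ^ 2)) *
            P.eval (logPlus (max (r / min t m) (max t μ / M))) * min t m ^ 2)
          ≤ ∫ t in Set.Ioo Λ Λ₀, K * phi m t := by
        apply setIntegral_mono_on hInt hφint measurableSet_Ioo
        intro t ht
        have ht0 : 0 < t := hsub ht
        have hpb := pointwise_bound hPdeg hPcoeff (‖k‖^2) (by positivity) hα hM hMr
          hm hmμ ht0
        rw [← hL] at hpb
        rw [← hK] at hpb
        simpa [phi] using hpb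
      have h2 : ∫ t in Set.Ioo Λ Λ₀, K * phi m t = K * ∫ t in Set.Ioo Λ Λ₀, phi m t :=
        integral_const_mul _ _
      have h3 : ∫ t in Set.Ioo Λ Λ₀, phi m t ≤ ∫ t in Set.Ioi 0, phi m t := by
        apply setIntegral_mono_set (phi_int_Ioi0 hm)
        · exact (ae_restrict_iff' measurableSet_Ioi).mpr
            (ae_of_all _ fun t ht => phi_nonneg hm ht)
        · exact HasSubset.Subset.eventuallyLE hsub
      have h4 := phi_integral_Ioi0 hm
      calc (∫ t in Set.Ioo Λ Λ₀, (1 / t ^ 2) * Real.exp (-‖k‖ ^ 2 / (α * t ^ 2)) *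
            P.eval (logPlus (max (r / min t m) (max t μ / M))) * min t m ^ 2)
          ≤ K * ∫ t in Set.Ioo Λ Λ₀, phi m t := h1.trans (le_of_eq h2)
        _ ≤ K * (4*m) := mul_le_mul_of_nonneg_left (h3.trans h4) hK0
        _ = (4*K) * m := by ring
        _ = Q.eval L * m := by rw [hQK]
    · rw [MeasureTheory.integral_undef hInt]
      exact mul_nonneg (eval_nonneg' Q hQc hL0) hm.le
end

section
/- Let θ ≥ 1 be an integer, n ∈ ℕ, and let M, c, a, Λ₀ be reals with M > 0, c ≥ M and 0 < a ≤ Λ₀. Then ∫_a^{Λ₀} λ^{−θ−1} ( log max( c/λ, λ/M ) )ⁿ dλ ≤ a^{−θ} · Σ_{m=0}^{n} (2·n!/(n−m)!) · ( log max( c/a, a/M ) )^{n−m}. -/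
open MeasureTheory Real intervalIntegral

lemma model_cont (θ m : ℕ) (a Λ : ℝ) (ha : 0 < a) :
    ContinuousOn (fun t : ℝ => (1 / t ^ (θ + 1)) * Real.log (t / a) ^ m) (Set.Icc a Λ) := by
  apply ContinuousOn.mul
  · exact continuousOn_const.div (continuousOn_pow _) (fun x hx => pow_ne_zero _ (by nlinarith [hx.1]))
  · exact (((continuousOn_id.div_const a).log
      (fun x hx => div_ne_zero (by simp; nlinarith [hx.1]) ha.ne')).pow m)

lemma model_deriv (k m : ℕ) (a : ℝ) (ha : 0 < a) (t : ℝ) (ht : a ≤ t) :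
    HasDerivAt (fun t : ℝ => -(1 / ((k:ℝ)+1)) * ((1 / t ^ (k+1)) * Real.log (t / a) ^ (m+1)))
      ((1 / t ^ (k + 2)) * Real.log (t / a) ^ (m+1)
        - (((m:ℝ)+1) / ((k:ℝ)+1)) * ((1 / t ^ (k + 2)) * Real.log (t / a) ^ m)) t := by
  have ht0 : 0 < t := lt_of_lt_of_le ha ht
  have hlog : HasDerivAt (fun t : ℝ => Real.log (t / a)) (1 / t) t := by
    have h1 : HasDerivAt (fun t : ℝ => t / a) (1 / a) t := (hasDerivAt_id t).div_const a
    have h2 := (Real.hasDerivAt_log (div_ne_zero ht0.ne' ha.ne')).comp t h1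
    refine h2.congr_deriv ?_
    field_simp
  have hpowinv : HasDerivAt (fun t : ℝ => 1 / t ^ (k+1))
      (-(((k:ℝ)+1) * t ^ k) / (t ^ (k+1)) ^ 2) t := by
    have := (hasDerivAt_pow (k+1) t).inv (pow_ne_zero _ ht0.ne')
    simp only [one_div]
    exact this.congr_deriv (by rw [Nat.add_sub_cancel]; push_cast; ring)
  have hL : HasDerivAt (fun t : ℝ => Real.log (t / a) ^ (m+1))
      ((((m:ℝ)+1) * Real.log (t / a) ^ m) * (1 / t)) t := by
    exact (hlog.pow (m+1)).congr_deriv (by rw [Nat.add_sub_cancel]; push_cast; ring)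
  have := ((hpowinv.mul hL).const_mul (-(1 / ((k:ℝ)+1))))
  refine this.congr_deriv ?_
  field_simp
  ring

lemma model_deriv0 (k : ℕ) (a : ℝ) (ha : 0 < a) (t : ℝ) (ht : a ≤ t) :
    HasDerivAt (fun t : ℝ => -(1 / ((k:ℝ)+1)) * (1 / t ^ (k+1)))
      (1 / t ^ (k + 2)) t := by
  have ht0 : 0 < t := lt_of_lt_of_le ha ht
  have hpowinv : HasDerivAt (fun t : ℝ => 1 / t ^ (k+1))
      (-(((k:ℝ)+1) * t ^ k) / (t ^ (k+1)) ^ 2) t := by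
    have := (hasDerivAt_pow (k+1) t).inv (pow_ne_zero _ ht0.ne')
    simp only [one_div]
    exact this.congr_deriv (by rw [Nat.add_sub_cancel]; push_cast; ring)
  have := hpowinv.const_mul (-(1 / ((k:ℝ)+1)))
  refine this.congr_deriv ?_
  field_simp
  ring

lemma model_bound_int (k : ℕ) (a Λ : ℝ) (ha : 0 < a) (haΛ : a ≤ Λ) (m : ℕ) :
    ∫ t in a..Λ, (1 / t ^ (k+2)) * Real.log (t / a) ^ m
      ≤ (Nat.factorial m : ℝ) / a ^ (k+1) := by
  have hInt : ∀ j : ℕ, IntervalIntegrable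
      (fun t : ℝ => (1 / t ^ (k + 2)) * Real.log (t / a) ^ j) volume a Λ := by
    intro j
    apply ContinuousOn.intervalIntegrable
    rw [Set.uIcc_of_le haΛ]
    exact model_cont (k+1) j a Λ ha
  have hnn : ∀ j : ℕ, 0 ≤ ∫ t in a..Λ, (1 / t ^ (k+2)) * Real.log (t / a) ^ j := by
    intro j
    apply intervalIntegral.integral_nonneg haΛ
    intro u hu
    have hu0 : 0 < u := lt_of_lt_of_le ha hu.1
    have h : (0:ℝ) ≤ Real.log (u / a) := Real.log_nonneg ((one_le_div ha).2 hu.1)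
    exact mul_nonneg (le_of_lt (by apply div_pos one_pos; positivity)) (pow_nonneg h j)
  induction m with
  | zero =>
    have hftc := intervalIntegral.integral_eq_sub_of_hasDerivAt
      (f := fun t : ℝ => -(1 / ((k:ℝ)+1)) * (1 / t ^ (k+1)))
      (fun t ht => model_deriv0 k a ha t (by rw [Set.uIcc_of_le haΛ] at ht; exact ht.1))
      (by simpa using (hInt 0))
    have h1 : (0:ℝ) < a ^ (k+1) := by positivity
    have h2 : (0:ℝ) < Λ ^ (k+1) := pow_pos (lt_of_lt_of_le ha haΛ) _
    have h3 : (0:ℝ) < (k:ℝ)+1 := by positivity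
    calc ∫ t in a..Λ, (1 / t ^ (k+2)) * Real.log (t / a) ^ 0
        = ∫ t in a..Λ, (1 / t ^ (k+2)) := by simp
      _ = -(1 / ((k:ℝ)+1)) * (1 / Λ ^ (k+1)) - (-(1 / ((k:ℝ)+1)) * (1 / a ^ (k+1))) := hftc
      _ ≤ (Nat.factorial 0 : ℝ) / a ^ (k+1) := by
          simp only [Nat.factorial_zero, Nat.cast_one, one_div]
          have e1 : (0:ℝ) < (Λ ^ (k+1))⁻¹ := by positivity
          have e2 : (0:ℝ) < (a ^ (k+1))⁻¹ := by positivity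
          have h1k : ((k:ℝ)+1)⁻¹ ≤ 1 := by
            rw [← one_div, div_le_one h3]; linarith [Nat.cast_nonneg (α := ℝ) k]
          have h4 := mul_le_mul_of_nonneg_right h1k e2.le
          rw [one_mul] at h4
          nlinarith [mul_pos (inv_pos.2 h3) e1]
  | succ m ih =>
    have hftc := intervalIntegral.integral_eq_sub_of_hasDerivAt
      (f := fun t : ℝ => -(1 / ((k:ℝ)+1)) * ((1 / t ^ (k+1)) * Real.log (t / a) ^ (m+1)))
      (f' := fun t => (1 / t ^ (k + 2)) * Real.log (t / a) ^ (m+1)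
        - (((m:ℝ)+1) / ((k:ℝ)+1)) * ((1 / t ^ (k + 2)) * Real.log (t / a) ^ m))
      (fun t ht => model_deriv k m a ha t (by rw [Set.uIcc_of_le haΛ] at ht; exact ht.1))
      ((hInt (m+1)).sub ((hInt m).const_mul _))
    rw [intervalIntegral.integral_sub (hInt (m+1)) ((hInt m).const_mul _),
      intervalIntegral.integral_const_mul] at hftc
    have hga : Real.log (a / a) = 0 := by rw [div_self ha.ne']; simp
    have hgΛ : -(1 / ((k:ℝ)+1)) * ((1 / Λ ^ (k+1)) * Real.log (Λ / a) ^ (m+1)) ≤ 0 := by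
      have h2 : (0:ℝ) < Λ ^ (k+1) := pow_pos (lt_of_lt_of_le ha haΛ) _
      have hl : (0:ℝ) ≤ Real.log (Λ / a) := Real.log_nonneg ((one_le_div ha).2 haΛ)
      have h3 : (0:ℝ) < (k:ℝ)+1 := by linarith [Nat.cast_nonneg (α := ℝ) k]
      have h5 : 0 ≤ (1 / Λ ^ (k+1)) * Real.log (Λ / a) ^ (m+1) :=
        mul_nonneg (le_of_lt (one_div_pos.2 h2)) (pow_nonneg hl (m+1))
      have h6 := mul_nonneg (le_of_lt (one_div_pos.2 h3)) h5
      linarith [h6]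
    have key : ∫ t in a..Λ, (1 / t ^ (k+2)) * Real.log (t / a) ^ (m+1)
        ≤ (((m:ℝ)+1) / ((k:ℝ)+1)) * ∫ t in a..Λ, (1 / t ^ (k+2)) * Real.log (t / a) ^ m := by
      have := hftc
      simp only [hga, zero_pow (Nat.succ_ne_zero m), mul_zero, neg_zero, sub_zero] at this
      linarith [this, hgΛ]
    have hfrac : (((m:ℝ)+1) / ((k:ℝ)+1)) ≤ ((m:ℝ)+1) := by
      rw [div_le_iff₀ (by linarith [Nat.cast_nonneg (α := ℝ) k])]
      nlinarith [Nat.cast_nonneg (α := ℝ) m, Nat.cast_nonneg (α := ℝ) k]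
    calc ∫ t in a..Λ, (1 / t ^ (k+2)) * Real.log (t / a) ^ (m+1)
        ≤ (((m:ℝ)+1) / ((k:ℝ)+1)) * ∫ t in a..Λ, (1 / t ^ (k+2)) * Real.log (t / a) ^ m := key
      _ ≤ ((m:ℝ)+1) * ∫ t in a..Λ, (1 / t ^ (k+2)) * Real.log (t / a) ^ m :=
          mul_le_mul_of_nonneg_right hfrac (hnn m)
      _ ≤ ((m:ℝ)+1) * ((Nat.factorial m : ℝ) / a ^ (k+1)) :=
          mul_le_mul_of_nonneg_left ih (by positivity)
      _ = (Nat.factorial (m+1) : ℝ) / a ^ (k+1) := by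
          rw [Nat.factorial_succ]; push_cast; ring

theorem stmt4 (θ n : ℕ) (hθ : 1 ≤ θ) (M c a Λ₀ : ℝ)
    (hM : 0 < M) (hc : M ≤ c) (ha : 0 < a) (haΛ : a ≤ Λ₀) :
    (∫ t in Set.Ioo a Λ₀, (1 / t ^ (θ + 1)) * Real.log (max (c / t) (t / M)) ^ n)
      ≤ (1 / a ^ θ) *
        ∑ m ∈ Finset.range (n + 1),
          (2 * (Nat.factorial n : ℝ) / (Nat.factorial (n - m) : ℝ)) *
            Real.log (max (c / a) (a / M)) ^ (n - m) := by
  obtain ⟨k, rfl⟩ : ∃ k, θ = k + 1 := ⟨θ - 1, (Nat.succ_pred_eq_of_pos hθ).symm⟩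
  have hc0 : 0 < c := lt_of_lt_of_le hM hc
  set A := Real.log (max (c / a) (a / M)) with hAdef
  have one_le_max : ∀ t : ℝ, 0 < t → 1 ≤ max (c / t) (t / M) := by
    intro t ht
    rcases le_total t M with h | h
    · exact le_max_of_le_left ((one_le_div ht).2 (le_trans h hc))
    · exact le_max_of_le_right ((one_le_div hM).2 h)
  have hA : 0 ≤ A := Real.log_nonneg (one_le_max a ha)
  have hmaxa : (0:ℝ) < max (c / a) (a / M) := lt_of_lt_of_le one_pos (one_le_max a ha)
  -- pointwise bound
  have hpt : ∀ t ∈ Set.Ioo a Λ₀,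
      (1 / t ^ (k + 1 + 1)) * Real.log (max (c / t) (t / M)) ^ n
        ≤ ∑ m ∈ Finset.range (n + 1),
            ((n.choose m : ℝ) * A ^ (n - m)) * ((1 / t ^ (k + 2)) * Real.log (t / a) ^ m) := by
    intro t htmem
    have hat : a < t := htmem.1
    have ht0 : 0 < t := lt_trans ha hat
    have hta : 1 ≤ t / a := (one_le_div ha).2 hat.le
    have hmaxt : (0:ℝ) < max (c / t) (t / M) := lt_of_lt_of_le one_pos (one_le_max t ht0)
    have hmax2 : max (c / t) (t / M) ≤ max (c / a) (a / M) * (t / a) := by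
      apply max_le
      · calc c / t ≤ c / a := by gcongr
          _ ≤ max (c / a) (a / M) := le_max_left _ _
          _ ≤ max (c / a) (a / M) * (t / a) := le_mul_of_one_le_right hmaxa.le hta
      · calc t / M = (a / M) * (t / a) := by field_simp
          _ ≤ max (c / a) (a / M) * (t / a) :=
            mul_le_mul_of_nonneg_right (le_max_right _ _) (by positivity)
    have hlog : Real.log (max (c / t) (t / M)) ≤ Real.log (t / a) + A := by
      calc Real.log (max (c / t) (t / M)) ≤ Real.log (max (c / a) (a / M) * (t / a)) :=
            Real.log_le_log hmaxt hmax2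
        _ = A + Real.log (t / a) := Real.log_mul hmaxa.ne' (by positivity)
        _ = Real.log (t / a) + A := by ring
    have hpow : Real.log (max (c / t) (t / M)) ^ n ≤ (Real.log (t / a) + A) ^ n :=
      pow_le_pow_left₀ (Real.log_nonneg (one_le_max t ht0)) hlog n
    calc (1 / t ^ (k + 1 + 1)) * Real.log (max (c / t) (t / M)) ^ n
        ≤ (1 / t ^ (k + 1 + 1)) * (Real.log (t / a) + A) ^ n :=
          mul_le_mul_of_nonneg_left hpow (by positivity)
      _ = ∑ m ∈ Finset.range (n + 1),
            ((n.choose m : ℝ) * A ^ (n - m)) * ((1 / t ^ (k + 2)) * Real.log (t / a) ^ m) := by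
          rw [add_pow, Finset.mul_sum]
          exact Finset.sum_congr rfl (fun m _ => by ring)
  -- integrability
  have hcontL : ContinuousOn
      (fun t : ℝ => (1 / t ^ (k + 1 + 1)) * Real.log (max (c / t) (t / M)) ^ n)
      (Set.Icc a Λ₀) := by
    apply ContinuousOn.mul
    · exact continuousOn_const.div (continuousOn_pow _)
        (fun x hx => pow_ne_zero _ (by nlinarith [hx.1]))
    · apply ContinuousOn.pow
      apply ContinuousOn.log
      · apply ContinuousOn.sup
        · exact ContinuousOn.div continuousOn_const continuousOn_id
            (fun x hx => by have := hx.1; intro h; rw [h] at this; nlinarith)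
        · exact continuousOn_id.div_const M
      · intro x hx
        have hx0 : 0 < x := lt_of_lt_of_le ha hx.1
        simpa using (lt_of_lt_of_le one_pos (one_le_max x hx0)).ne'
  have hIntL : IntegrableOn
      (fun t : ℝ => (1 / t ^ (k + 1 + 1)) * Real.log (max (c / t) (t / M)) ^ n)
      (Set.Ioo a Λ₀) := (hcontL.integrableOn_Icc).mono_set Set.Ioo_subset_Icc_self
  have hIntM : ∀ m : ℕ, IntegrableOn
      (fun t : ℝ => (1 / t ^ (k + 2)) * Real.log (t / a) ^ m) (Set.Ioo a Λ₀) := fun m =>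
    ((model_cont (k + 1) m a Λ₀ ha).integrableOn_Icc).mono_set Set.Ioo_subset_Icc_self
  have hIntS : IntegrableOn
      (fun t : ℝ => ∑ m ∈ Finset.range (n + 1),
        ((n.choose m : ℝ) * A ^ (n - m)) * ((1 / t ^ (k + 2)) * Real.log (t / a) ^ m))
      (Set.Ioo a Λ₀) :=
    integrable_finset_sum _ (fun m _ => (hIntM m).const_mul _)
  have hmodel : ∀ m : ℕ, ∫ t in Set.Ioo a Λ₀, (1 / t ^ (k + 2)) * Real.log (t / a) ^ m
      ≤ (Nat.factorial m : ℝ) / a ^ (k + 1) := by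
    intro m
    have h1 := model_bound_int k a Λ₀ ha haΛ m
    rwa [intervalIntegral.integral_of_le haΛ,
      MeasureTheory.integral_Ioc_eq_integral_Ioo] at h1
  calc (∫ t in Set.Ioo a Λ₀, (1 / t ^ (k + 1 + 1)) * Real.log (max (c / t) (t / M)) ^ n)
      ≤ ∫ t in Set.Ioo a Λ₀, ∑ m ∈ Finset.range (n + 1),
          ((n.choose m : ℝ) * A ^ (n - m)) * ((1 / t ^ (k + 2)) * Real.log (t / a) ^ m) :=
        MeasureTheory.setIntegral_mono_on hIntL hIntS measurableSet_Ioo hpt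
    _ = ∑ m ∈ Finset.range (n + 1), ((n.choose m : ℝ) * A ^ (n - m)) *
          ∫ t in Set.Ioo a Λ₀, (1 / t ^ (k + 2)) * Real.log (t / a) ^ m := by
        rw [integral_finset_sum _ (fun m _ => (hIntM m).const_mul _)]
        exact Finset.sum_congr rfl (fun m _ => MeasureTheory.integral_const_mul _ _)
    _ ≤ ∑ m ∈ Finset.range (n + 1), ((n.choose m : ℝ) * A ^ (n - m)) *
          ((Nat.factorial m : ℝ) / a ^ (k + 1)) := by
        apply Finset.sum_le_sum
        intro m _
        exact mul_le_mul_of_nonneg_left (hmodel m) (by positivity)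
    _ ≤ (1 / a ^ (k + 1)) * ∑ m ∈ Finset.range (n + 1),
          (2 * (Nat.factorial n : ℝ) / (Nat.factorial (n - m) : ℝ)) * A ^ (n - m) := by
        rw [Finset.mul_sum]
        apply Finset.sum_le_sum
        intro m hm
        have hmn : m ≤ n := Nat.lt_succ_iff.mp (Finset.mem_range.mp hm)
        have h0 : ((Nat.factorial (n - m)) : ℝ) ≠ 0 :=
          Nat.cast_ne_zero.2 (Nat.factorial_ne_zero _)
        have hfact : (n.choose m : ℝ) * (Nat.factorial m : ℝ)
            = (Nat.factorial n : ℝ) / (Nat.factorial (n - m) : ℝ) := by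
          rw [eq_div_iff h0]
          exact_mod_cast Nat.choose_mul_factorial_mul_factorial hmn
        have hXP : (0:ℝ) ≤ ((Nat.factorial n : ℝ) / (Nat.factorial (n - m) : ℝ)) *
            (A ^ (n - m) * (1 / a ^ (k + 1))) := by positivity
        calc ((n.choose m : ℝ) * A ^ (n - m)) * ((Nat.factorial m : ℝ) / a ^ (k + 1))
            = ((n.choose m : ℝ) * (Nat.factorial m : ℝ)) *
              (A ^ (n - m) * (1 / a ^ (k + 1))) := by ring
          _ = ((Nat.factorial n : ℝ) / (Nat.factorial (n - m) : ℝ)) *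
              (A ^ (n - m) * (1 / a ^ (k + 1))) := by rw [hfact]
          _ ≤ 2 * (((Nat.factorial n : ℝ) / (Nat.factorial (n - m) : ℝ)) *
              (A ^ (n - m) * (1 / a ^ (k + 1)))) := by linarith [hXP]
          _ = (1 / a ^ (k + 1)) *
              ((2 * (Nat.factorial n : ℝ) / (Nat.factorial (n - m) : ℝ)) * A ^ (n - m)) := by
            ring
end

section
/- For all reals a, c with 0 < a ≤ c and every n ∈ ℕ, ∫_0^a ( log(c/λ) )ⁿ dλ = a · n! · Σ_{m=0}^{n} ( log(c/a) )^m / m!. -/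
open MeasureTheory Real Filter Topology

lemma log_div_hasDeriv {c x : ℝ} (hc : 0 < c) (hx : 0 < x) :
    HasDerivAt (fun t => Real.log (c / t)) (-x⁻¹) x := by
  have h1 : HasDerivAt (fun t => Real.log c - Real.log t) (-x⁻¹) x :=
    (Real.hasDerivAt_log hx.ne').const_sub _
  apply h1.congr_of_eventuallyEq
  filter_upwards [eventually_gt_nhds hx] with t ht
  rw [Real.log_div hc.ne' ht.ne']

lemma aux_hasDeriv (c : ℝ) (hc : 0 < c) (n : ℕ) (x : ℝ) (hx : 0 < x) :
    HasDerivAt (fun t => t * ∑ m ∈ Finset.range (n + 1),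
      ((Nat.factorial n : ℝ) / (Nat.factorial m : ℝ)) * Real.log (c / t) ^ m)
      (Real.log (c / x) ^ n) x := by
  induction n with
  | zero =>
      have : (fun t : ℝ => t * ∑ m ∈ Finset.range 1,
          ((Nat.factorial 0 : ℝ) / (Nat.factorial m : ℝ)) * Real.log (c / t) ^ m)
          = fun t : ℝ => t := by
        funext t; simp
      rw [this]
      simpa using hasDerivAt_id' x
  | succ n ih =>
      have hL := log_div_hasDeriv hc hx
      have hfun : (fun t : ℝ => t * ∑ m ∈ Finset.range (n + 2),
          ((Nat.factorial (n + 1) : ℝ) / (Nat.factorial m : ℝ)) * Real.log (c / t) ^ m)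
          = fun t : ℝ => ((n : ℝ) + 1) * (t * ∑ m ∈ Finset.range (n + 1),
            ((Nat.factorial n : ℝ) / (Nat.factorial m : ℝ)) * Real.log (c / t) ^ m)
            + t * Real.log (c / t) ^ (n + 1) := by
        funext t
        rw [Finset.sum_range_succ]
        have h1 : ∀ m, ((Nat.factorial (n + 1) : ℝ) / (Nat.factorial m : ℝ))
            = ((n : ℝ) + 1) * ((Nat.factorial n : ℝ) / (Nat.factorial m : ℝ)) := by
          intro m
          rw [Nat.factorial_succ]
          push_cast
          ring
        simp only [h1]
        have h2 : ((n : ℝ) + 1) * ((Nat.factorial n : ℝ) / (Nat.factorial (n + 1) : ℝ)) = 1 := by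
          rw [Nat.factorial_succ]
          push_cast
          field_simp
        rw [h2, one_mul, mul_add]
        congr 1
        rw [Finset.mul_sum, Finset.mul_sum, Finset.mul_sum]
        exact Finset.sum_congr rfl fun m _ => by ring
      rw [hfun]
      have h2 : HasDerivAt (fun t : ℝ => t * Real.log (c / t) ^ (n + 1))
          (1 * Real.log (c / x) ^ (n + 1)
            + x * (((n : ℕ) + 1 : ℕ) * Real.log (c / x) ^ n * (-x⁻¹))) x := by
        have := (hasDerivAt_id x).mul (hL.pow (n + 1))
        simpa [Pi.mul_def, Pi.pow_def] using this
      have h3 := (ih.const_mul ((n : ℝ) + 1)).add h2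
      refine HasDerivAt.congr_deriv h3 ?_
      have hx0 : x * x⁻¹ = 1 := mul_inv_cancel₀ hx.ne'
      push_cast
      linear_combination (-((n : ℝ) + 1)) * Real.log (c / x) ^ n * hx0

lemma aux_tendsto (c : ℝ) (hc : 0 < c) (m : ℕ) :
    Tendsto (fun t : ℝ => t * Real.log (c / t) ^ m) (𝓝[>] 0) (𝓝 0) := by
  have h1 : Tendsto (fun x : ℝ => Real.log x ^ m / (1 * x + 0)) atTop (𝓝 0) :=
    Real.tendsto_pow_log_div_mul_add_atTop 1 0 m one_ne_zero
  have h2 : Tendsto (fun t : ℝ => c / t) (𝓝[>] 0) atTop := by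
    simp only [div_eq_mul_inv]
    exact tendsto_inv_nhdsGT_zero.const_mul_atTop hc
  have h3 := (h1.comp h2).const_mul c
  rw [mul_zero] at h3
  apply h3.congr'
  filter_upwards [self_mem_nhdsWithin] with t (ht : 0 < t)
  simp only [Function.comp]
  field_simp
  ring

theorem stmt5 (a c : ℝ) (n : ℕ) (ha : 0 < a) (hac : a ≤ c) :
    (∫ t in Set.Ioo (0 : ℝ) a, Real.log (c / t) ^ n)
      = a * (Nat.factorial n : ℝ) *
        ∑ m ∈ Finset.range (n + 1), Real.log (c / a) ^ m / (Nat.factorial m : ℝ) := by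
  have hc : 0 < c := ha.trans_le hac
  set F : ℝ → ℝ := fun t => t * ∑ m ∈ Finset.range (n + 1),
    ((Nat.factorial n : ℝ) / (Nat.factorial m : ℝ)) * Real.log (c / t) ^ m with hF
  have hderiv : ∀ x ∈ Set.Ioo (0 : ℝ) a, HasDerivAt F (Real.log (c / x) ^ n) x :=
    fun x hx => aux_hasDeriv c hc n x hx.1
  have hpos : ∀ x ∈ Set.Ioo (0 : ℝ) a, 0 ≤ Real.log (c / x) ^ n := by
    intro x hx
    apply pow_nonneg
    apply Real.log_nonneg
    rw [le_div_iff₀ hx.1]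
    linarith [hx.2]
  have hcont : ContinuousOn F (Set.Icc 0 a) := by
    intro x hx
    rcases eq_or_lt_of_le hx.1 with h0 | h0
    · subst h0
      have hF0 : F 0 = 0 := by simp [hF]
      unfold ContinuousWithinAt
      rw [hF0]
      have hsub : Set.Icc (0:ℝ) a ⊆ insert 0 (Set.Ioi 0) := by
        intro y hy
        rcases eq_or_lt_of_le hy.1 with h | h
        · exact Or.inl h.symm
        · exact Or.inr h
      apply Tendsto.mono_left _ (nhdsWithin_mono 0 hsub)
      rw [nhdsWithin_insert]
      rw [tendsto_sup]
      constructor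
      · rw [tendsto_pure_left]
        intro s hs
        rw [hF0]
        exact mem_of_mem_nhds hs
      · have : Tendsto (fun t : ℝ => ∑ m ∈ Finset.range (n + 1),
            ((Nat.factorial n : ℝ) / (Nat.factorial m : ℝ)) * (t * Real.log (c / t) ^ m))
            (𝓝[>] 0) (𝓝 (∑ m ∈ Finset.range (n + 1), (0:ℝ))) := by
          apply tendsto_finset_sum
          intro m _
          simpa using (aux_tendsto c hc m).const_mul
            ((Nat.factorial n : ℝ) / (Nat.factorial m : ℝ))
        simp only [Finset.sum_const_zero] at this
        apply this.congr
        intro t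
        simp only [hF, Finset.mul_sum]
        exact Finset.sum_congr rfl fun m _ => by ring
    · apply ContinuousAt.continuousWithinAt
      apply ContinuousAt.mul continuousAt_id
      apply tendsto_finset_sum
      intro m _
      apply ContinuousAt.mul continuousAt_const
      apply ContinuousAt.pow
      exact (Real.continuousAt_log (div_ne_zero hc.ne' h0.ne')).comp
        (continuousAt_const.div continuousAt_id h0.ne')
  have hint : IntervalIntegrable (fun x => Real.log (c / x) ^ n) volume 0 a := by
    apply intervalIntegral.intervalIntegrable_deriv_of_nonneg (g := F)
    · rwa [Set.uIcc_of_le ha.le]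
    · simpa [ha.le, min_eq_left, max_eq_right] using hderiv
    · simpa [ha.le, min_eq_left, max_eq_right] using hpos
  have key : (∫ t in (0:ℝ)..a, Real.log (c / t) ^ n) = F a - F 0 :=
    intervalIntegral.integral_eq_sub_of_hasDeriv_right_of_le ha.le hcont
      (fun x hx => (hderiv x hx).hasDerivWithinAt) hint
  rw [← MeasureTheory.integral_Ioc_eq_integral_Ioo, ← intervalIntegral.integral_of_le ha.le, key]
  have hF0 : F 0 = 0 := by simp [hF]
  rw [hF0, sub_zero, hF]
  simp only [Finset.mul_sum]
  exact Finset.sum_congr rfl fun m _ => by ring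
end

section
/- Let n ≥ 1 be a natural number, let Λ, Λ₀ be reals with 0 ≤ Λ ≤ Λ₀, and let F : ℝⁿ → [0,∞] be measurable. Then ∫_Λ^{Λ₀} λ · ( ∫_{[λ,Λ₀]ⁿ} F(λ₁,…,λₙ) dλ₁⋯dλₙ ) dλ ≤ ∫_{[Λ,Λ₀]ⁿ} ( min_{1≤i≤n} λᵢ )² · F(λ₁,…,λₙ) dλ₁⋯dλₙ. -/
open MeasureTheory

theorem stmt9 (n : ℕ) (hn : 1 ≤ n) (Λ Λ₀ : ℝ) (h0 : 0 ≤ Λ) (hΛ : Λ ≤ Λ₀)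
    (F : (Fin n → ℝ) → ENNReal) (hF : Measurable F) :
    (∫⁻ t in Set.Icc Λ Λ₀,
        ENNReal.ofReal t *
          ∫⁻ x in Set.univ.pi (fun _ : Fin n => Set.Icc t Λ₀), F x)
      ≤ ∫⁻ x in Set.univ.pi (fun _ : Fin n => Set.Icc Λ Λ₀),
          ENNReal.ofReal (sInf (Set.range x)) ^ 2 * F x := by
  haveI : Nonempty (Fin n) := Fin.pos_iff_nonempty.mp hn
  set S : Set (ℝ × (Fin n → ℝ)) :=
    {p | p.1 ∈ Set.Icc Λ Λ₀ ∧ ∀ i, p.2 i ∈ Set.Icc p.1 Λ₀} with hS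
  have hSmeas : MeasurableSet S := by
    have hSeq : S = ({p : ℝ × (Fin n → ℝ) | Λ ≤ p.1} ∩ {p | p.1 ≤ Λ₀}) ∩
        ⋂ i, ({p : ℝ × (Fin n → ℝ) | p.1 ≤ p.2 i} ∩ {p | p.2 i ≤ Λ₀}) := by
      ext p
      simp only [hS, Set.mem_setOf_eq, Set.mem_Icc, Set.mem_inter_iff, Set.mem_iInter,
        forall_and]
    rw [hSeq]
    refine (MeasurableSet.inter ?_ ?_).inter (MeasurableSet.iInter fun i => ?_)
    · exact measurableSet_le measurable_const measurable_fst
    · exact measurableSet_le measurable_fst measurable_const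
    · have h2 : Measurable fun p : ℝ × (Fin n → ℝ) => p.2 i :=
        (measurable_pi_apply i).comp measurable_snd
      exact (measurableSet_le measurable_fst h2).inter (measurableSet_le h2 measurable_const)
  set f : ℝ × (Fin n → ℝ) → ENNReal :=
    S.indicator (fun p => ENNReal.ofReal p.1 * F p.2) with hf
  have hfmeas : Measurable f :=
    ((ENNReal.measurable_ofReal.comp measurable_fst).mul (hF.comp measurable_snd)).indicator
      hSmeas
  have hL : (∫⁻ t in Set.Icc Λ Λ₀,
        ENNReal.ofReal t * ∫⁻ x in Set.univ.pi (fun _ : Fin n => Set.Icc t Λ₀), F x)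
      = ∫⁻ t, ∫⁻ x, f (t, x) := by
    rw [← lintegral_indicator measurableSet_Icc _]
    congr 1
    ext t
    by_cases ht : t ∈ Set.Icc Λ Λ₀
    · rw [Set.indicator_of_mem ht]
      rw [← lintegral_const_mul _ hF,
        ← lintegral_indicator (MeasurableSet.univ_pi fun _ => measurableSet_Icc) _]
      congr 1
      ext x
      by_cases hx : x ∈ Set.univ.pi (fun _ : Fin n => Set.Icc t Λ₀)
      · rw [Set.indicator_of_mem hx, hf, Set.indicator_of_mem]
        exact ⟨ht, fun i => hx i (Set.mem_univ i)⟩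
      · rw [Set.indicator_of_notMem hx, hf, Set.indicator_of_notMem]
        intro hmem
        exact hx fun i _ => hmem.2 i
    · rw [Set.indicator_of_notMem ht]
      have hz : ∀ x : Fin n → ℝ, f (t, x) = 0 := fun x =>
        Set.indicator_of_notMem (fun h => ht h.1) _
      simp [hz]
  have hswap : ∫⁻ t, ∫⁻ x, f (t, x) = ∫⁻ x, ∫⁻ t, f (t, x) := by
    exact lintegral_lintegral_swap
      ((hfmeas.comp (measurable_fst.prodMk measurable_snd)).aemeasurable)
  have hpimeas : MeasurableSet (Set.univ.pi (fun _ : Fin n => Set.Icc Λ Λ₀)) :=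
    MeasurableSet.univ_pi fun _ => measurableSet_Icc
  have hR : (∫⁻ x in Set.univ.pi (fun _ : Fin n => Set.Icc Λ Λ₀),
        ENNReal.ofReal (sInf (Set.range x)) ^ 2 * F x)
      = ∫⁻ x, (Set.univ.pi (fun _ : Fin n => Set.Icc Λ Λ₀)).indicator
          (fun x => ENNReal.ofReal (sInf (Set.range x)) ^ 2 * F x) x :=
    (lintegral_indicator hpimeas _).symm
  rw [hL, hswap, hR]
  refine lintegral_mono fun x => ?_
  by_cases hx : x ∈ Set.univ.pi (fun _ : Fin n => Set.Icc Λ Λ₀)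
  · rw [Set.indicator_of_mem hx]
    set m := sInf (Set.range x) with hm
    have hsub : ∀ t, f (t, x) ≤ (Set.Icc Λ m).indicator (fun t => ENNReal.ofReal t * F x) t := by
      intro t
      rw [hf]
      by_cases hts : (t, x) ∈ S
      · rw [Set.indicator_of_mem hts, Set.indicator_of_mem]
        refine ⟨hts.1.1, ?_⟩
        refine le_csInf (Set.range_nonempty x) ?_
        rintro y ⟨i, rfl⟩
        exact (hts.2 i).1
      · rw [Set.indicator_of_notMem hts]
        exact zero_le
    have hmΛ : Λ ≤ m := by
      refine le_csInf (Set.range_nonempty x) ?_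
      rintro y ⟨i, rfl⟩
      exact (hx i (Set.mem_univ i)).1
    calc ∫⁻ t, f (t, x)
        ≤ ∫⁻ t, (Set.Icc Λ m).indicator (fun t => ENNReal.ofReal t * F x) t :=
          lintegral_mono hsub
      _ = ∫⁻ t in Set.Icc Λ m, ENNReal.ofReal t * F x :=
          lintegral_indicator measurableSet_Icc _
      _ ≤ ∫⁻ _t in Set.Icc Λ m, ENNReal.ofReal m * F x := by
          refine setLIntegral_mono measurable_const fun t ht => ?_
          exact mul_le_mul_left (ENNReal.ofReal_le_ofReal ht.2) _
      _ = (ENNReal.ofReal m * F x) * volume (Set.Icc Λ m) := setLIntegral_const _ _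
      _ = ENNReal.ofReal m * ENNReal.ofReal (m - Λ) * F x := by
          rw [Real.volume_Icc]; ring
      _ ≤ ENNReal.ofReal m * ENNReal.ofReal m * F x := by
          refine mul_le_mul_left (mul_le_mul_right ?_ _) _
          exact ENNReal.ofReal_le_ofReal (by linarith)
      _ = ENNReal.ofReal m ^ 2 * F x := by ring
  · rw [Set.indicator_of_notMem hx]
    have hz : ∀ t, f (t, x) = 0 := by
      intro t
      refine Set.indicator_of_notMem (fun hts => hx fun i _ => ?_) _
      exact ⟨le_trans hts.1.1 (hts.2 i).1, (hts.2 i).2⟩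
    simp [hz]
end

section
/- For every n ∈ ℕ and every real polynomial P of degree ≤ n with nonnegative coefficients there exists a real polynomial P' of degree ≤ n with nonnegative coefficients such that: for all α > 0, all integers θ_i ≥ 1 and θ_j ≥ 1, all k ∈ ℝ⁴, all M > 0, all r ≥ M, and all reals Λ, Λ₀ with 0 ≤ Λ ≤ Λ₀, one has ∫_Λ^{Λ₀} ∫_Λ^{Λ₀} λ_i^{−θ_i−1} e^{−‖k‖²/(α λ_i²)} · λ_j^{−θ_j−1} e^{−‖k‖²/(α λ_j²)} · P( log₊ max( r/min(λ_i,λ_j), max(λ_i,λ_j)/M ) ) dλ_i dλ_j ≤ ∫_Λ^{Λ₀} λ^{−θ_i−θ_j−1} e^{−‖k‖²/(α λ²)} · P'( log₊ max( r/λ, λ/M ) ) dλ. -/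
open MeasureTheory Real

lemma eval_nonneg_of_coeff_nonneg (Q : Polynomial ℝ) (hQ : ∀ i, 0 ≤ Q.coeff i)
    {x : ℝ} (hx : 0 ≤ x) : 0 ≤ Q.eval x := by
  rw [Polynomial.eval_eq_sum_range]
  exact Finset.sum_nonneg fun i _ => mul_nonneg (hQ i) (pow_nonneg hx i)

lemma eval_le_of_coeff_nonneg (n : ℕ) (Q : Polynomial ℝ) (hdeg : Q.natDegree ≤ n)
    (hQ : ∀ i, 0 ≤ Q.coeff i) {x : ℝ} (hx : 0 ≤ x) :
    Q.eval x ≤ (∑ i ∈ Finset.range (n+1), Q.coeff i) * (x + 1) ^ n := by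
  rw [Polynomial.eval_eq_sum_range' (Nat.lt_succ_of_le hdeg), Finset.sum_mul]
  apply Finset.sum_le_sum
  intro i hi
  have h1 : x ^ i ≤ (x+1)^n := by
    calc x ^ i ≤ (x+1)^i := pow_le_pow_left₀ hx (by linarith) i
      _ ≤ (x+1)^n := pow_le_pow_right₀ (by linarith) (by
          simpa using Nat.le_of_lt_succ (Finset.mem_range.mp hi))
  exact mul_le_mul_of_nonneg_left h1 (hQ i)

lemma single_coeff_le_eval (Q : Polynomial ℝ) (hQ : ∀ i, 0 ≤ Q.coeff i)
    (m : ℕ) {x : ℝ} (hx : 1 ≤ x) : Q.coeff m ≤ Q.eval x := by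
  by_cases hm : m < Q.natDegree + 1
  · rw [Polynomial.eval_eq_sum_range]
    have : Q.coeff m * x ^ m ≤ ∑ i ∈ Finset.range (Q.natDegree+1), Q.coeff i * x ^ i := by
      apply Finset.single_le_sum (f := fun i => Q.coeff i * x ^ i)
      · intro i _; exact mul_nonneg (hQ i) (pow_nonneg (by linarith) i)
      · exact Finset.mem_range.mpr hm
    have hxm : 1 ≤ x ^ m := one_le_pow₀ hx
    nlinarith [hQ m]
  · rw [Polynomial.coeff_eq_zero_of_natDegree_lt (by omega)]
    exact eval_nonneg_of_coeff_nonneg Q hQ (by linarith)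

/-- L4: `(1+log₊ z)^n ≤ (1+2n)^n z^{1/2}` for `z ≥ 1`. -/
lemma one_add_logPlus_pow_le (n : ℕ) {z : ℝ} (hz : 1 ≤ z) :
    (logPlus z + 1) ^ n ≤ (1 + 2*n)^n * z ^ ((2:ℝ)⁻¹) := by
  have hz0 : (0:ℝ) < z := by linarith
  rcases Nat.eq_zero_or_pos n with hn | hn
  · subst hn
    simpa using Real.one_le_rpow hz (by norm_num)
  · have hlp : logPlus z = Real.log z := by rw [logPlus, max_eq_right hz]
    set y := z ^ ((2*(n:ℝ))⁻¹ : ℝ) with hy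
    have hy1 : 1 ≤ y := Real.one_le_rpow hz (by positivity)
    have hylog : Real.log z = (2*n) * Real.log y := by
      rw [hy, Real.log_rpow hz0]
      field_simp
    have hstep : logPlus z + 1 ≤ (1 + 2*n) * y := by
      have := Real.log_le_sub_one_of_pos (x := y) (by linarith)
      rw [hlp, hylog]
      have hn1 : (1:ℝ) ≤ (n:ℝ) := by exact_mod_cast hn
      nlinarith
    calc (logPlus z + 1)^n ≤ ((1 + 2*n) * y)^n := by
          have h0 : 0 ≤ logPlus z + 1 := by have := logPlus_nonneg z; linarith
          exact pow_le_pow_left₀ h0 hstep n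
      _ = (1 + 2*n)^n * y^n := mul_pow _ _ _
      _ = (1 + 2*n)^n * z ^ ((2:ℝ)⁻¹) := by
          rw [hy, ← Real.rpow_natCast (z ^ _) n, ← Real.rpow_mul hz0.le]
          congr 1
          have hnne : (n:ℝ) ≠ 0 := Nat.cast_ne_zero.mpr hn.ne'
          have he : (n:ℝ) * (2 * (n:ℝ))⁻¹ = (2:ℝ)⁻¹ := by
            rw [mul_inv, ← mul_assoc, mul_comm (n:ℝ) (2:ℝ)⁻¹, mul_assoc,
              mul_inv_cancel₀ hnne, mul_one]
          rw [mul_comm ((2*(n:ℝ))⁻¹) (n:ℝ), he]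

lemma core (n : ℕ) (P : Polynomial ℝ) (hPdeg : P.natDegree ≤ n) (hPcoeff : ∀ i, 0 ≤ P.coeff i)
    (α : ℝ) (hα : 0 < α) (K : ℝ) (hK : 0 ≤ K) (θ : ℕ) (hθ : 1 ≤ θ)
    (M r : ℝ) (hM : 0 < M) (hMr : M ≤ r) (s : ℝ) (hs : 0 < s) :
    (∫⁻ t in Set.Ici s,
        ENNReal.ofReal ((1 / t ^ (θ + 1)) * Real.exp (-K / (α * t ^ 2)) *
          P.eval (logPlus (max (r / s) (t / M)))))
      ≤ ENNReal.ofReal ((2 * (∑ i ∈ Finset.range (n+1), P.coeff i) * (1 + 2*(n:ℝ))^n) *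
          ((logPlus (max (r / s) (s / M)) + 1)^n * (1 / s ^ θ))) := by
  have hr0 : 0 < r := lt_of_lt_of_le hM hMr
  set C : ℝ := ∑ i ∈ Finset.range (n+1), P.coeff i with hCdef
  have hC : 0 ≤ C := Finset.sum_nonneg fun i _ => hPcoeff i
  set a : ℝ := logPlus (max (r / s) (s / M)) with hadef
  have ha : 0 ≤ a := logPlus_nonneg _
  set D : ℝ := C * (1 + 2*(n:ℝ))^n * (a+1)^n with hDdef
  have hD : 0 ≤ D := by positivity
  set c0 : ℝ := D * s ^ (-(2:ℝ)⁻¹) with hc0def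
  have hc0 : 0 ≤ c0 := mul_nonneg hD (Real.rpow_nonneg hs.le _)
  set e : ℝ := (2:ℝ)⁻¹ - ((θ:ℝ)+1) with hedef
  have hθ1 : (1:ℝ) ≤ (θ:ℝ) := by exact_mod_cast hθ
  have he1 : e < -1 := by rw [hedef]; norm_num; linarith
  clear_value C a D c0 e
  rw [← setLIntegral_congr (Ioi_ae_eq_Ici (a := s) (μ := volume))]
  have key : ∀ t ∈ Set.Ioi s,
      ENNReal.ofReal ((1 / t ^ (θ + 1)) * Real.exp (-K / (α * t ^ 2)) *
          P.eval (logPlus (max (r / s) (t / M))))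
        ≤ ENNReal.ofReal (c0 * t ^ e) := by
    intro t ht
    rw [Set.mem_Ioi] at ht
    have ht0 : 0 < t := hs.trans ht
    have hts : 1 ≤ t/s := (one_le_div hs).mpr ht.le
    apply ENNReal.ofReal_le_ofReal
    set x : ℝ := logPlus (max (r / s) (t / M)) with hxdef
    have hx0 : 0 ≤ x := logPlus_nonneg _
    have hexp : Real.exp (-K / (α * t ^ 2)) ≤ 1 := by
      rw [← Real.exp_zero]
      apply Real.exp_le_exp.mpr
      have h0 : 0 ≤ K / (α * t ^ 2) := by positivity
      rw [neg_div]; linarith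
    set b : ℝ := logPlus (t/s) with hbdef
    have hb : 0 ≤ b := logPlus_nonneg _
    clear_value x b
    have hxb : x ≤ a + b := by
      have harg : max (r/s) (t/M) ≤ max (r/s) (s/M) * (t/s) := by
        apply max_le
        · have h1 : (r/s) ≤ (r/s) * (t/s) := le_mul_of_one_le_right (by positivity) hts
          exact h1.trans (mul_le_mul_of_nonneg_right (le_max_left _ _) (by positivity))
        · have h2 : t/M = (s/M) * (t/s) := by field_simp
          rw [h2]
          exact mul_le_mul_of_nonneg_right (le_max_right _ _) (by positivity)
      rw [hxdef, hbdef, hadef]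
      refine (logPlus_mono harg).trans ?_
      exact logPlus_mul_le (le_trans (by positivity) (le_max_left (r/s) (s/M))) (by positivity)
    have hx1 : x + 1 ≤ (a+1)*(b+1) := by nlinarith
    have hPe : P.eval x ≤ C * ((a+1)*(b+1))^n := by
      rw [hCdef]
      exact (eval_le_of_coeff_nonneg n P hPdeg hPcoeff hx0).trans
        (mul_le_mul_of_nonneg_left (pow_le_pow_left₀ (by linarith) hx1 n)
          (Finset.sum_nonneg fun i _ => hPcoeff i))
    have hb2 : (b+1)^n ≤ (1 + 2*(n:ℝ))^n * (t/s) ^ ((2:ℝ)⁻¹) := by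
      rw [hbdef]; exact one_add_logPlus_pow_le n hts
    have hPe2 : P.eval x ≤ D * (t/s) ^ ((2:ℝ)⁻¹) := by
      calc P.eval x ≤ C * ((a+1)^n * (b+1)^n) := by rw [← mul_pow]; exact hPe
        _ ≤ C * ((a+1)^n * ((1 + 2*(n:ℝ))^n * (t/s) ^ ((2:ℝ)⁻¹))) := by
            apply mul_le_mul_of_nonneg_left (mul_le_mul_of_nonneg_left hb2 (by positivity)) hC
        _ = D * (t/s) ^ ((2:ℝ)⁻¹) := by rw [hDdef]; ring
    have ht1 : 1/t^(θ+1) = t ^ (-((θ:ℝ)+1)) := by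
      rw [Real.rpow_neg ht0.le, one_div]
      congr 1
      rw [← Real.rpow_natCast t (θ+1)]
      push_cast
      ring_nf
    have h2 : (1/t^(θ+1)) * (t/s) ^ ((2:ℝ)⁻¹) = t ^ e * s ^ (-(2:ℝ)⁻¹) := by
      rw [Real.div_rpow ht0.le hs.le, Real.rpow_neg hs.le, ht1, div_eq_mul_inv, ← mul_assoc,
        ← Real.rpow_add ht0]
      congr 2
      rw [hedef]; ring
    have hA : (0:ℝ) ≤ 1/t^(θ+1) := by positivity
    calc (1/t^(θ+1)) * Real.exp (-K / (α * t ^ 2)) * P.eval x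
        ≤ (1/t^(θ+1)) * 1 * (D * (t/s) ^ ((2:ℝ)⁻¹)) := by
          apply mul_le_mul (mul_le_mul_of_nonneg_left hexp hA) hPe2
            (eval_nonneg_of_coeff_nonneg P hPcoeff hx0) (by positivity)
      _ = D * ((1/t^(θ+1)) * (t/s) ^ ((2:ℝ)⁻¹)) := by ring
      _ = c0 * t ^ e := by rw [h2, hc0def]; ring
  have hint : Integrable (fun t => c0 * t ^ e) (volume.restrict (Set.Ioi s)) :=
    (integrableOn_Ioi_rpow_of_lt he1 hs).const_mul c0
  have hnn : 0 ≤ᵐ[volume.restrict (Set.Ioi s)] fun t => c0 * t ^ e :=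
    (ae_restrict_iff' measurableSet_Ioi).2 (Filter.Eventually.of_forall fun t ht =>
      mul_nonneg hc0 (Real.rpow_nonneg (le_of_lt (hs.trans ht)) e))
  calc (∫⁻ t in Set.Ioi s,
        ENNReal.ofReal ((1 / t ^ (θ + 1)) * Real.exp (-K / (α * t ^ 2)) *
          P.eval (logPlus (max (r / s) (t / M)))))
      ≤ ∫⁻ t in Set.Ioi s, ENNReal.ofReal (c0 * t ^ e) :=
        setLIntegral_mono' measurableSet_Ioi key
    _ = ENNReal.ofReal (∫ t in Set.Ioi s, c0 * t ^ e) :=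
        (ofReal_integral_eq_lintegral_ofReal hint hnn).symm
    _ ≤ ENNReal.ofReal ((2 * C * (1 + 2*(n:ℝ))^n) * ((a + 1)^n * (1 / s ^ θ))) := by
        apply ENNReal.ofReal_le_ofReal
        rw [integral_const_mul, integral_Ioi_rpow_of_lt he1 hs]
        have hw : 0 ≤ s ^ (e+1) := Real.rpow_nonneg hs.le _
        have hu : (2:ℝ)⁻¹ ≤ -(e+1) := by rw [hedef]; linarith
        have he0 : e + 1 < 0 := by linarith
        have hle2 : -s^(e+1)/(e+1) ≤ 2 * s^(e+1) := by
          have hh : -s^(e+1)/(e+1) = s^(e+1) * (-(e+1))⁻¹ := by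
            rw [neg_div, div_eq_mul_inv, ← neg_inv]
            ring
          rw [hh]
          have h2i : (-(e+1))⁻¹ ≤ 2 := by
            rw [← one_div]
            calc 1/(-(e+1)) ≤ 1/((2:ℝ)⁻¹) := one_div_le_one_div_of_le (by norm_num) hu
              _ = 2 := by norm_num
          nlinarith
        have hse : s^(e+1) = s^(-(θ:ℝ)) * s^((2:ℝ)⁻¹) := by
          rw [← Real.rpow_add hs]
          congr 1
          rw [hedef]; ring
        have hsθ : s ^ (-(θ:ℝ)) = 1/s^θ := by
          rw [Real.rpow_neg hs.le, Real.rpow_natCast, one_div]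
        have hss : s ^ (-(2:ℝ)⁻¹) * s^((2:ℝ)⁻¹) = 1 := by
          rw [← Real.rpow_add hs]
          norm_num
        calc c0 * (-s^(e+1)/(e+1)) ≤ c0 * (2*s^(e+1)) := mul_le_mul_of_nonneg_left hle2 hc0
          _ = 2 * D * (1/s^θ) * (s ^ (-(2:ℝ)⁻¹) * s^((2:ℝ)⁻¹)) := by
              rw [hc0def, hse, hsθ]; ring
          _ = (2 * C * (1 + 2*(n:ℝ))^n) * ((a + 1)^n * (1 / s ^ θ)) := by
              rw [hss, hDdef]; ring

/-- Boundedness of the single-scale integrand on `(0, Λ₀)` when `K > 0`. -/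
lemma exists_bound (n m : ℕ) (hm : 1 ≤ m) (α K M r Λ₀ : ℝ) (hα : 0 < α) (hK : 0 < K)
    (hM : 0 < M) (hMr : M ≤ r) :
    ∃ c : ℝ, ∀ t : ℝ, 0 < t → t < Λ₀ →
      (1/t^m) * Real.exp (-K/(α*t^2)) * (logPlus (max (r/t) (t/M)) + 1)^n ≤ c := by
  have hr0 : 0 < r := lt_of_lt_of_le hM hMr
  set B0 : ℝ := max Λ₀ 1 with hB0def
  have hB0 : 1 ≤ B0 := le_max_right _ _
  refine ⟨(m.factorial * (α/K)^m) * ((1 + 2*(n:ℝ))^n *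
      (Real.sqrt r * (B0^m + B0^(m-1)) + Real.sqrt (Λ₀/M) * B0^m)), ?_⟩
  intro t ht0 htΛ
  have htB : t ≤ B0 := le_trans htΛ.le (le_max_left _ _)
  -- exp bound
  have hy : 0 < K/(α*t^2) := by positivity
  have hexp : Real.exp (-K/(α*t^2)) ≤ m.factorial * (α/K)^m * t^(2*m) := by
    have hser : (K/(α*t^2))^m / m.factorial ≤ Real.exp (K/(α*t^2)) := by
      calc (K/(α*t^2))^m / m.factorial
          ≤ ∑ i ∈ Finset.range (m+1), (K/(α*t^2))^i / i.factorial := by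
            exact Finset.single_le_sum (f := fun i => (K/(α*t^2))^i / (i.factorial:ℝ))
              (fun i _ => by positivity) (Finset.self_mem_range_succ m)
        _ ≤ Real.exp (K/(α*t^2)) := Real.sum_le_exp_of_nonneg hy.le (m+1)
    have hpos : 0 < (K/(α*t^2))^m / m.factorial := by positivity
    have h1 : Real.exp (-K/(α*t^2)) ≤ ((K/(α*t^2))^m / m.factorial)⁻¹ := by
      rw [neg_div, Real.exp_neg]
      exact inv_anti₀ hpos hser
    refine h1.trans (le_of_eq ?_)
    rw [inv_div]
    simp only [div_eq_mul_inv, mul_inv, inv_inv, mul_pow, inv_pow, ← pow_mul]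
    ring
  -- log bound
  have hz1 : 1 ≤ max (r/t) (t/M) := by
    rcases le_total t r with h | h
    · exact le_trans ((one_le_div ht0).mpr h) (le_max_left _ _)
    · exact le_trans ((one_le_div hM).mpr (hMr.trans h)) (le_max_right _ _)
  have hlog : (logPlus (max (r/t) (t/M)) + 1)^n
      ≤ (1 + 2*(n:ℝ))^n * (Real.sqrt (r/t) + Real.sqrt (t/M)) := by
    refine (one_add_logPlus_pow_le n hz1).trans ?_
    have h1 : (max (r/t) (t/M)) ^ ((2:ℝ)⁻¹) = Real.sqrt (max (r/t) (t/M)) := by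
      rw [Real.sqrt_eq_rpow, one_div]
    rw [h1]
    apply mul_le_mul_of_nonneg_left _ (by positivity)
    rcases max_cases (r/t) (t/M) with ⟨heq, _⟩ | ⟨heq, _⟩ <;> rw [heq]
    · exact le_add_of_nonneg_right (Real.sqrt_nonneg _)
    · exact le_add_of_nonneg_left (Real.sqrt_nonneg _)
  have hL0 : 0 ≤ logPlus (max (r/t) (t/M)) := logPlus_nonneg _
  -- sqrt bounds
  have hsqrt_le : ∀ x : ℝ, 0 ≤ x → Real.sqrt x ≤ 1 + x := by
    intro x hx
    nlinarith [Real.sq_sqrt hx, Real.sqrt_nonneg x]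
  have hA : Real.sqrt (r/t) ≤ Real.sqrt r * (1 + 1/t) := by
    rw [div_eq_mul_inv r t, Real.sqrt_mul hr0.le, ← one_div]
    exact mul_le_mul_of_nonneg_left (hsqrt_le _ (by positivity)) (Real.sqrt_nonneg r)
  have hB : Real.sqrt (t/M) ≤ Real.sqrt (Λ₀/M) :=
    Real.sqrt_le_sqrt ((div_le_div_iff_of_pos_right hM).mpr htΛ.le)
  have hC : t^m ≤ B0^m := pow_le_pow_left₀ ht0.le htB m
  have hD : t^(m-1) ≤ B0^(m-1) := pow_le_pow_left₀ ht0.le htB (m-1)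
  have hE : t^m * (1/t) = t^(m-1) := by
    rw [show m = m-1+1 from (Nat.succ_pred_eq_of_pos hm).symm, pow_succ]
    field_simp
    simp
  have f1 : (1/t^m) * t^(2*m) = t^m := by
    rw [two_mul, pow_add]
    field_simp
  have hsum : t^m * (Real.sqrt (r/t) + Real.sqrt (t/M))
      ≤ Real.sqrt r * (B0^m + B0^(m-1)) + Real.sqrt (Λ₀/M) * B0^m := by
    have h1 : t^m * Real.sqrt (r/t) ≤ t^m * (Real.sqrt r * (1 + 1/t)) :=
      mul_le_mul_of_nonneg_left hA (by positivity)
    have h2 : t^m * (Real.sqrt r * (1 + 1/t)) = Real.sqrt r * (t^m + t^(m-1)) := by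
      rw [← hE]; ring
    have h3 : Real.sqrt r * (t^m + t^(m-1)) ≤ Real.sqrt r * (B0^m + B0^(m-1)) :=
      mul_le_mul_of_nonneg_left (by linarith) (Real.sqrt_nonneg r)
    have h4 : t^m * Real.sqrt (t/M) ≤ B0^m * Real.sqrt (Λ₀/M) :=
      mul_le_mul hC hB (Real.sqrt_nonneg _) (by positivity)
    nlinarith
  calc (1/t^m) * Real.exp (-K/(α*t^2)) * (logPlus (max (r/t) (t/M)) + 1)^n
      ≤ (1/t^m) * (m.factorial * (α/K)^m * t^(2*m)) *
          ((1 + 2*(n:ℝ))^n * (Real.sqrt (r/t) + Real.sqrt (t/M))) := by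
        apply mul_le_mul (mul_le_mul_of_nonneg_left hexp (by positivity)) hlog
          (by positivity) (by positivity)
    _ = (m.factorial * (α/K)^m) * ((1 + 2*(n:ℝ))^n *
          (((1/t^m) * t^(2*m)) * (Real.sqrt (r/t) + Real.sqrt (t/M)))) := by ring
    _ = (m.factorial * (α/K)^m) * ((1 + 2*(n:ℝ))^n *
          (t^m * (Real.sqrt (r/t) + Real.sqrt (t/M)))) := by rw [f1]
    _ ≤ (m.factorial * (α/K)^m) * ((1 + 2*(n:ℝ))^n *
          (Real.sqrt r * (B0^m + B0^(m-1)) + Real.sqrt (Λ₀/M) * B0^m)) := by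
        apply mul_le_mul_of_nonneg_left (mul_le_mul_of_nonneg_left hsum (by positivity))
          (by positivity)

set_option maxHeartbeats 2000000 in
lemma main_aux (n : ℕ) (P : Polynomial ℝ) (hPdeg : P.natDegree ≤ n)
    (hPcoeff : ∀ i, 0 ≤ P.coeff i)
    (α : ℝ) (hα : 0 < α) (θi θj : ℕ) (hθi : 1 ≤ θi) (hθj : 1 ≤ θj)
    (K : ℝ) (hK : 0 ≤ K) (M r Λ Λ₀ : ℝ)
    (hM : 0 < M) (hMr : M ≤ r) (hΛ : 0 ≤ Λ) (hΛΛ : Λ ≤ Λ₀) :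
    (∫ tj in Set.Ioo Λ Λ₀, ∫ ti in Set.Ioo Λ Λ₀,
        (1 / ti ^ (θi + 1)) * Real.exp (-K / (α * ti ^ 2)) *
          ((1 / tj ^ (θj + 1)) * Real.exp (-K / (α * tj ^ 2))) *
          P.eval (logPlus (max (r / min ti tj) (max ti tj / M))))
      ≤ ∫ t in Set.Ioo Λ Λ₀,
          (1 / t ^ (θi + θj + 1)) * Real.exp (-K / (α * t ^ 2)) *
            ((4 * (∑ i ∈ Finset.range (n+1), P.coeff i) * (1 + 2*(n:ℝ))^n) *
              (logPlus (max (r / t) (t / M)) + 1) ^ n) := by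
  have hr0 : 0 < r := lt_of_lt_of_le hM hMr
  set S := Set.Ioo Λ Λ₀ with hSdef
  set C : ℝ := ∑ i ∈ Finset.range (n+1), P.coeff i with hCdef
  have hC : 0 ≤ C := Finset.sum_nonneg fun i _ => hPcoeff i
  set F : ℝ → ℝ → ℝ := fun ti tj =>
    (1 / ti ^ (θi + 1)) * Real.exp (-K / (α * ti ^ 2)) *
      ((1 / tj ^ (θj + 1)) * Real.exp (-K / (α * tj ^ 2))) *
      P.eval (logPlus (max (r / min ti tj) (max ti tj / M))) with hFdef
  set G : ℝ → ℝ := fun t =>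
    (1 / t ^ (θi + θj + 1)) * Real.exp (-K / (α * t ^ 2)) *
      ((4 * C * (1 + 2*(n:ℝ))^n) * (logPlus (max (r / t) (t / M)) + 1) ^ n) with hGdef
  show (∫ tj in S, ∫ ti in S, F ti tj) ≤ ∫ t in S, G t
  -- measurability
  have hlogm : Measurable logPlus := Real.measurable_log.comp (measurable_const.max measurable_id)
  have hPc : Continuous fun y : ℝ => P.eval y := P.continuous
  have hexpm : Measurable fun t : ℝ => Real.exp (-K / (α * t ^ 2)) :=
    Real.measurable_exp.comp (measurable_const.div ((measurable_id.pow_const 2).const_mul α))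
  have hfm : ∀ mm : ℕ, Measurable fun t : ℝ => (1 / t ^ mm) * Real.exp (-K / (α * t ^ 2)) :=
    fun mm => (measurable_const.div (measurable_id.pow_const mm)).mul hexpm
  have hFm : Measurable (Function.uncurry F) := by
    exact ((((hfm (θi+1)).comp measurable_fst).mul ((hfm (θj+1)).comp measurable_snd)).mul
      (hPc.measurable.comp (hlogm.comp
        ((measurable_const.div (measurable_fst.min measurable_snd)).max
          ((measurable_fst.max measurable_snd).div_const M)))))
  have hGm : Measurable G := by
    exact (hfm (θi+θj+1)).mul
      ((((hlogm.comp ((measurable_const.div measurable_id).max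
        (measurable_id.div_const M))).add measurable_const).pow_const n).const_mul _)
  -- nonnegativity
  have hSpos : ∀ t ∈ S, (0:ℝ) < t := fun t ht => lt_of_le_of_lt hΛ ht.1
  have hF0 : ∀ ti tj : ℝ, 0 < ti → 0 < tj → 0 ≤ F ti tj := by
    intro ti tj h1 h2
    have h3 := logPlus_nonneg (max (r / min ti tj) (max ti tj / M))
    have h4 := eval_nonneg_of_coeff_nonneg P hPcoeff h3
    rw [hFdef]
    exact mul_nonneg (mul_nonneg (by positivity) (by positivity)) h4
  have hG0 : ∀ t ∈ S, 0 ≤ G t := by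
    intro t ht
    have h1 := hSpos t ht
    have h2 := logPlus_nonneg (max (r / t) (t / M))
    rw [hGdef]
    exact mul_nonneg (by positivity) (mul_nonneg (by positivity) (by positivity))
  -- Step 1: LHS as toReal of lintegral
  have hHm : AEStronglyMeasurable (fun tj => ∫ ti in S, F ti tj) (volume.restrict S) :=
    (hFm.stronglyMeasurable.integral_prod_left).aestronglyMeasurable
  have hH0 : 0 ≤ᵐ[volume.restrict S] fun tj => ∫ ti in S, F ti tj :=
    (ae_restrict_iff' measurableSet_Ioo).2 (Filter.Eventually.of_forall fun tj htj =>
      setIntegral_nonneg measurableSet_Ioo fun ti hti => hF0 ti tj (hSpos ti hti) (hSpos tj htj))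
  have hLHS : (∫ tj in S, ∫ ti in S, F ti tj)
      = (∫⁻ tj in S, ENNReal.ofReal (∫ ti in S, F ti tj)).toReal :=
    integral_eq_lintegral_of_nonneg_ae hH0 hHm
  have hRHS : (∫ t in S, G t) = (∫⁻ t in S, ENNReal.ofReal (G t)).toReal :=
    integral_eq_lintegral_of_nonneg_ae
      ((ae_restrict_iff' measurableSet_Ioo).2 (Filter.Eventually.of_forall hG0))
      hGm.aestronglyMeasurable
  -- Step 2
  have hφ : ∀ tj : ℝ, Measurable fun ti => ENNReal.ofReal (F ti tj) := fun tj =>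
    ENNReal.measurable_ofReal.comp (hFm.comp (measurable_id.prodMk measurable_const))
  have step2 : (∫⁻ tj in S, ENNReal.ofReal (∫ ti in S, F ti tj))
      ≤ ∫⁻ tj in S, ∫⁻ ti in S, ENNReal.ofReal (F ti tj) := by
    apply setLIntegral_mono' measurableSet_Ioo
    intro tj htj
    by_cases hint : Integrable (fun ti => F ti tj) (volume.restrict S)
    · rw [ofReal_integral_eq_lintegral_ofReal hint ((ae_restrict_iff' measurableSet_Ioo).2
        (Filter.Eventually.of_forall fun ti hti => hF0 ti tj (hSpos ti hti) (hSpos tj htj)))]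
    · rw [integral_undef hint]
      simp
  -- Step 3: the core bound
  set A1 : ℝ → ENNReal := fun tj =>
    ∫⁻ ti in S, (Set.Iic tj).indicator (fun ti' => ENNReal.ofReal (F ti' tj)) ti with hA1def
  set A2 : ℝ → ENNReal := fun tj =>
    ∫⁻ ti in S, (Set.Ioi tj).indicator (fun ti' => ENNReal.ofReal (F ti' tj)) ti with hA2def
  have hg1m : Measurable fun p : ℝ × ℝ =>
      (Set.Iic p.1).indicator (fun ti' => ENNReal.ofReal (F ti' p.1)) p.2 := by
    have heq : (fun p : ℝ × ℝ => (Set.Iic p.1).indicator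
        (fun ti' => ENNReal.ofReal (F ti' p.1)) p.2)
        = fun p : ℝ × ℝ => Set.indicator {q : ℝ × ℝ | q.2 ≤ q.1}
            (fun q => ENNReal.ofReal (F q.2 q.1)) p := by
      funext p
      by_cases h : p.2 ≤ p.1
      · rw [Set.indicator_of_mem (Set.mem_Iic.mpr h)]
        exact (Set.indicator_of_mem (show p ∈ {q : ℝ × ℝ | q.2 ≤ q.1} from h) (fun q : ℝ × ℝ => ENNReal.ofReal (F q.2 q.1))).symm
      · rw [Set.indicator_of_notMem (by simpa using h)]
        exact (Set.indicator_of_notMem (show p ∉ {q : ℝ × ℝ | q.2 ≤ q.1} from h) (fun q : ℝ × ℝ => ENNReal.ofReal (F q.2 q.1))).symm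
    rw [heq]
    exact (ENNReal.measurable_ofReal.comp (hFm.comp measurable_swap)).indicator
      (measurableSet_le measurable_snd measurable_fst)
  have hg2m : Measurable fun p : ℝ × ℝ =>
      (Set.Ioi p.1).indicator (fun ti' => ENNReal.ofReal (F ti' p.1)) p.2 := by
    have heq : (fun p : ℝ × ℝ => (Set.Ioi p.1).indicator
        (fun ti' => ENNReal.ofReal (F ti' p.1)) p.2)
        = fun p : ℝ × ℝ => Set.indicator {q : ℝ × ℝ | q.1 < q.2}
            (fun q => ENNReal.ofReal (F q.2 q.1)) p := by
      funext p
      by_cases h : p.1 < p.2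
      · rw [Set.indicator_of_mem (Set.mem_Ioi.mpr h)]
        exact (Set.indicator_of_mem (show p ∈ {q : ℝ × ℝ | q.1 < q.2} from h) (fun q : ℝ × ℝ => ENNReal.ofReal (F q.2 q.1))).symm
      · rw [Set.indicator_of_notMem (by simpa using h)]
        exact (Set.indicator_of_notMem (show p ∉ {q : ℝ × ℝ | q.1 < q.2} from h) (fun q : ℝ × ℝ => ENNReal.ofReal (F q.2 q.1))).symm
    rw [heq]
    exact (ENNReal.measurable_ofReal.comp (hFm.comp measurable_swap)).indicator
      (measurableSet_lt measurable_fst measurable_snd)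
  have hA1m : Measurable A1 := by exact hg1m.lintegral_prod_right'
  have hsplit : ∀ tj : ℝ, (∫⁻ ti in S, ENNReal.ofReal (F ti tj)) = A1 tj + A2 tj := by
    intro tj
    have hpt : ∀ ti : ℝ, ENNReal.ofReal (F ti tj)
        = (Set.Iic tj).indicator (fun ti' => ENNReal.ofReal (F ti' tj)) ti
          + (Set.Ioi tj).indicator (fun ti' => ENNReal.ofReal (F ti' tj)) ti := by
      intro ti
      rcases le_or_gt ti tj with h | h
      · rw [Set.indicator_of_mem (Set.mem_Iic.mpr h),
          Set.indicator_of_notMem (by simpa using not_lt.mpr h), add_zero]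
      · rw [Set.indicator_of_notMem (by simpa using not_le.mpr h),
          Set.indicator_of_mem (Set.mem_Ioi.mpr h), zero_add]
    calc (∫⁻ ti in S, ENNReal.ofReal (F ti tj))
        = ∫⁻ ti in S, ((Set.Iic tj).indicator (fun ti' => ENNReal.ofReal (F ti' tj)) ti
            + (Set.Ioi tj).indicator (fun ti' => ENNReal.ofReal (F ti' tj)) ti) :=
          lintegral_congr hpt
      _ = A1 tj + A2 tj := by
          rw [hA1def, hA2def]
          exact lintegral_add_left ((hφ tj).indicator measurableSet_Iic) _
  have hhalfm : Measurable fun t => ENNReal.ofReal (G t / 2) :=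
    ENNReal.measurable_ofReal.comp (hGm.div_const 2)
  -- inner bound 1 : ti is the smaller variable, integrate tj over [ti, ∞)
  have inner1 : ∀ ti ∈ S,
      (∫⁻ tj in S, (Set.Iic tj).indicator (fun ti' => ENNReal.ofReal (F ti' tj)) ti)
        ≤ ENNReal.ofReal (G ti / 2) := by
    intro ti hti
    have hti0 : 0 < ti := hSpos ti hti
    have hind : ∀ tj : ℝ, (Set.Iic tj).indicator (fun ti' => ENNReal.ofReal (F ti' tj)) ti
        = (Set.Ici ti).indicator (fun tj' => ENNReal.ofReal (F ti tj')) tj := by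
      intro tj
      rcases le_or_gt ti tj with h | h
      · rw [Set.indicator_of_mem (Set.mem_Iic.mpr h), Set.indicator_of_mem (Set.mem_Ici.mpr h)]
      · rw [Set.indicator_of_notMem (by simpa using not_le.mpr h),
          Set.indicator_of_notMem (by simpa using not_le.mpr h)]
    calc (∫⁻ tj in S, (Set.Iic tj).indicator (fun ti' => ENNReal.ofReal (F ti' tj)) ti)
        = ∫⁻ tj in S, (Set.Ici ti).indicator (fun tj' => ENNReal.ofReal (F ti tj')) tj :=
          lintegral_congr hind
      _ ≤ ∫⁻ tj, (Set.Ici ti).indicator (fun tj' => ENNReal.ofReal (F ti tj')) tj :=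
          setLIntegral_le_lintegral _ _
      _ = ∫⁻ tj in Set.Ici ti, ENNReal.ofReal (F ti tj) := lintegral_indicator measurableSet_Ici _
      _ = ∫⁻ tj in Set.Ici ti,
            ENNReal.ofReal ((1 / ti ^ (θi+1)) * Real.exp (-K / (α * ti ^ 2)))
              * ENNReal.ofReal ((1 / tj ^ (θj+1)) * Real.exp (-K / (α * tj ^ 2)) *
                  P.eval (logPlus (max (r / ti) (tj / M)))) := by
          apply setLIntegral_congr_fun measurableSet_Ici
          intro tj htj
          beta_reduce
          rw [← ENNReal.ofReal_mul (by positivity)]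
          congr 1
          rw [hFdef]
          simp only
          rw [min_eq_left htj, max_eq_right (Set.mem_Ici.mp htj)]
          ring
      _ = ENNReal.ofReal ((1 / ti ^ (θi+1)) * Real.exp (-K / (α * ti ^ 2)))
            * ∫⁻ tj in Set.Ici ti, ENNReal.ofReal ((1 / tj ^ (θj+1)) *
                Real.exp (-K / (α * tj ^ 2)) * P.eval (logPlus (max (r / ti) (tj / M)))) :=
          lintegral_const_mul' _ _ ENNReal.ofReal_ne_top
      _ ≤ ENNReal.ofReal ((1 / ti ^ (θi+1)) * Real.exp (-K / (α * ti ^ 2)))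
            * ENNReal.ofReal ((2 * C * (1 + 2*(n:ℝ))^n) *
                ((logPlus (max (r / ti) (ti / M)) + 1)^n * (1 / ti ^ θj))) :=
          mul_le_mul_right (core n P hPdeg hPcoeff α hα K hK θj hθj M r hM hMr ti hti0) _
      _ = ENNReal.ofReal (G ti / 2) := by
          rw [← ENNReal.ofReal_mul (by positivity)]
          congr 1
          rw [hGdef]
          simp only
          rw [show θi + θj + 1 = (θi+1) + θj from by omega, pow_add]
          have h1 : ti ^ (θi+1) ≠ 0 := by positivity
          have h2 : ti ^ θj ≠ 0 := by positivity
          field_simp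
          ring
  -- inner bound 2 : tj is the smaller variable, integrate ti over (tj, ∞)
  have inner2 : ∀ tj ∈ S, A2 tj ≤ ENNReal.ofReal (G tj / 2) := by
    intro tj htj
    have htj0 : 0 < tj := hSpos tj htj
    calc A2 tj
        ≤ ∫⁻ ti, (Set.Ioi tj).indicator (fun ti' => ENNReal.ofReal (F ti' tj)) ti :=
          setLIntegral_le_lintegral _ _
      _ = ∫⁻ ti in Set.Ioi tj, ENNReal.ofReal (F ti tj) := lintegral_indicator measurableSet_Ioi _
      _ = ∫⁻ ti in Set.Ioi tj,
            ENNReal.ofReal ((1 / tj ^ (θj+1)) * Real.exp (-K / (α * tj ^ 2)))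
              * ENNReal.ofReal ((1 / ti ^ (θi+1)) * Real.exp (-K / (α * ti ^ 2)) *
                  P.eval (logPlus (max (r / tj) (ti / M)))) := by
          apply setLIntegral_congr_fun measurableSet_Ioi
          intro ti hti
          beta_reduce
          rw [← ENNReal.ofReal_mul (by positivity)]
          congr 1
          rw [hFdef]
          simp only
          rw [min_eq_right (le_of_lt hti), max_eq_left (le_of_lt (Set.mem_Ioi.mp hti))]
          ring
      _ ≤ ∫⁻ ti in Set.Ici tj,
            ENNReal.ofReal ((1 / tj ^ (θj+1)) * Real.exp (-K / (α * tj ^ 2)))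
              * ENNReal.ofReal ((1 / ti ^ (θi+1)) * Real.exp (-K / (α * ti ^ 2)) *
                  P.eval (logPlus (max (r / tj) (ti / M)))) :=
          lintegral_mono' (Measure.restrict_mono Set.Ioi_subset_Ici_self le_rfl) le_rfl
      _ = ENNReal.ofReal ((1 / tj ^ (θj+1)) * Real.exp (-K / (α * tj ^ 2)))
            * ∫⁻ ti in Set.Ici tj, ENNReal.ofReal ((1 / ti ^ (θi+1)) *
                Real.exp (-K / (α * ti ^ 2)) * P.eval (logPlus (max (r / tj) (ti / M)))) :=
          lintegral_const_mul' _ _ ENNReal.ofReal_ne_top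
      _ ≤ ENNReal.ofReal ((1 / tj ^ (θj+1)) * Real.exp (-K / (α * tj ^ 2)))
            * ENNReal.ofReal ((2 * C * (1 + 2*(n:ℝ))^n) *
                ((logPlus (max (r / tj) (tj / M)) + 1)^n * (1 / tj ^ θi))) :=
          mul_le_mul_right (core n P hPdeg hPcoeff α hα K hK θi hθi M r hM hMr tj htj0) _
      _ = ENNReal.ofReal (G tj / 2) := by
          rw [← ENNReal.ofReal_mul (by positivity)]
          congr 1
          rw [hGdef]
          simp only
          rw [show θi + θj + 1 = (θj+1) + θi from by omega, pow_add]
          have h1 : tj ^ (θj+1) ≠ 0 := by positivity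
          have h2 : tj ^ θi ≠ 0 := by positivity
          field_simp
          ring
  have step3 : (∫⁻ tj in S, ∫⁻ ti in S, ENNReal.ofReal (F ti tj))
      ≤ ∫⁻ t in S, ENNReal.ofReal (G t) := by
    calc (∫⁻ tj in S, ∫⁻ ti in S, ENNReal.ofReal (F ti tj))
        = ∫⁻ tj in S, (A1 tj + A2 tj) := lintegral_congr hsplit
      _ = (∫⁻ tj in S, A1 tj) + ∫⁻ tj in S, A2 tj := lintegral_add_left hA1m _
      _ ≤ (∫⁻ t in S, ENNReal.ofReal (G t / 2)) + ∫⁻ t in S, ENNReal.ofReal (G t / 2) := by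
          apply add_le_add ?_ (setLIntegral_mono' measurableSet_Ioo inner2)
          calc (∫⁻ tj in S, A1 tj)
              = ∫⁻ ti in S, ∫⁻ tj in S,
                  (Set.Iic tj).indicator (fun ti' => ENNReal.ofReal (F ti' tj)) ti :=
                lintegral_lintegral_swap hg1m.aemeasurable
            _ ≤ ∫⁻ t in S, ENNReal.ofReal (G t / 2) :=
                setLIntegral_mono' measurableSet_Ioo inner1
      _ = ∫⁻ t in S, (ENNReal.ofReal (G t / 2) + ENNReal.ofReal (G t / 2)) :=
          (lintegral_add_left hhalfm _).symm
      _ = ∫⁻ t in S, ENNReal.ofReal (G t) := by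
          apply setLIntegral_congr_fun measurableSet_Ioo
          intro t ht
          beta_reduce
          rw [← ENNReal.ofReal_add (by linarith [hG0 t ht]) (by linarith [hG0 t ht]), add_halves]
  -- put the trivial case P = 0 aside
  by_cases hP0 : P = 0
  · have hL : ∀ ti tj : ℝ, F ti tj = 0 := by
      intro ti tj; rw [hFdef]; simp [hP0]
    have hzero : (∫ tj in S, ∫ ti in S, F ti tj) = 0 := by simp [hL]
    rw [hzero]
    exact setIntegral_nonneg measurableSet_Ioo hG0
  rw [hLHS, hRHS]
  by_cases hpos : 0 < Λ ∨ 0 < K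
  · -- the RHS lintegral is finite; conclude by monotonicity of toReal
    have hfin : (∫⁻ t in S, ENNReal.ofReal (G t)) ≠ ⊤ := by
      obtain ⟨c, hc⟩ : ∃ c : ℝ, ∀ t ∈ S, G t ≤ c := by
        rcases hpos with hΛ0 | hK0
        · refine ⟨(1/Λ^(θi+θj+1)) * ((4*C*(1 + 2*(n:ℝ))^n) *
            (logPlus (max (r/Λ) (Λ₀/M)) + 1)^n), ?_⟩
          intro t ht
          have ht0 : 0 < t := hSpos t ht
          have hlp1 : logPlus (max (r/t) (t/M)) ≤ logPlus (max (r/Λ) (Λ₀/M)) := by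
            apply logPlus_mono
            apply max_le_max
            · exact div_le_div_of_nonneg_left hr0.le hΛ0 ht.1.le
            · exact (div_le_div_iff_of_pos_right hM).mpr ht.2.le
          have h1m : 1/t^(θi+θj+1) ≤ 1/Λ^(θi+θj+1) :=
            one_div_le_one_div_of_le (by positivity) (pow_le_pow_left₀ hΛ0.le ht.1.le _)
          have hexple : Real.exp (-K / (α * t ^ 2)) ≤ 1 := by
            rw [← Real.exp_zero]
            apply Real.exp_le_exp.mpr
            have h0 : 0 ≤ K / (α * t ^ 2) := by positivity
            rw [neg_div]; linarith
          have hlp0 := logPlus_nonneg (max (r/t) (t/M))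
          rw [hGdef]
          simp only
          calc (1 / t ^ (θi + θj + 1)) * Real.exp (-K / (α * t ^ 2)) *
                ((4 * C * (1 + 2*(n:ℝ))^n) * (logPlus (max (r / t) (t / M)) + 1) ^ n)
              ≤ (1/Λ^(θi+θj+1)) * 1 *
                ((4 * C * (1 + 2*(n:ℝ))^n) * (logPlus (max (r/Λ) (Λ₀/M)) + 1) ^ n) := by
                apply mul_le_mul (mul_le_mul h1m hexple (Real.exp_pos _).le (by positivity))
                  (mul_le_mul_of_nonneg_left
                    (pow_le_pow_left₀ (by linarith) (by linarith) n) (by positivity))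
                  (by positivity) (by positivity)
            _ = (1/Λ^(θi+θj+1)) * ((4*C*(1 + 2*(n:ℝ))^n) *
                (logPlus (max (r/Λ) (Λ₀/M)) + 1)^n) := by ring
        · obtain ⟨c0, hc0⟩ := exists_bound n (θi+θj+1) (by omega) α K M r Λ₀ hα hK0 hM hMr
          refine ⟨(4*C*(1 + 2*(n:ℝ))^n) * c0, ?_⟩
          intro t ht
          have ht0 : 0 < t := hSpos t ht
          have hb := hc0 t ht0 ht.2
          have hlp := logPlus_nonneg (max (r/t) (t/M))
          rw [hGdef]
          simp only
          calc (1 / t ^ (θi + θj + 1)) * Real.exp (-K / (α * t ^ 2)) *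
                ((4 * C * (1 + 2*(n:ℝ))^n) * (logPlus (max (r / t) (t / M)) + 1) ^ n)
              = (4*C*(1 + 2*(n:ℝ))^n) * ((1 / t ^ (θi+θj+1)) * Real.exp (-K/(α*t^2)) *
                  (logPlus (max (r/t) (t/M)) + 1)^n) := by ring
            _ ≤ (4*C*(1 + 2*(n:ℝ))^n) * c0 :=
                mul_le_mul_of_nonneg_left hb (by positivity)
      have hvol : volume S ≠ ⊤ := by
        rw [hSdef, Real.volume_Ioo]; exact ENNReal.ofReal_ne_top
      have : (∫⁻ t in S, ENNReal.ofReal (G t)) ≤ ENNReal.ofReal c * volume S := by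
        calc (∫⁻ t in S, ENNReal.ofReal (G t))
            ≤ ∫⁻ _ in S, ENNReal.ofReal c := setLIntegral_mono' measurableSet_Ioo
              (fun t ht => ENNReal.ofReal_le_ofReal (hc t ht))
          _ = ENNReal.ofReal c * volume S := setLIntegral_const S _
      exact ne_top_of_le_ne_top (ENNReal.mul_ne_top ENNReal.ofReal_ne_top hvol) this
    exact ENNReal.toReal_mono hfin (le_trans step2 step3)
  · -- degenerate case `Λ = 0`, `K = 0`: the inner integrals all vanish
    push_neg at hpos
    have hΛ0 : Λ = 0 := le_antisymm hpos.1 hΛ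
    have hK0 : K = 0 := le_antisymm hpos.2 hK
    have hz : ∀ tj ∈ S, (∫ ti in S, F ti tj) = 0 := by
      intro tj htj
      apply integral_undef
      intro hint
      have htj0 : 0 < tj := hSpos tj htj
      have hΛ₀pos : 0 < Λ₀ := htj0.trans htj.2
      have hcm : 0 < P.coeff P.natDegree := by
        rcases (hPcoeff P.natDegree).lt_or_eq with h | h
        · exact h
        · exact absurd (by rw [Polynomial.leadingCoeff]; exact h.symm)
            (Polynomial.leadingCoeff_ne_zero.mpr hP0)
      set ε : ℝ := min tj (min 1 (min Λ₀ (r * Real.exp (-1)))) with hεdef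
      have hε : 0 < ε := lt_min htj0 (lt_min one_pos (lt_min hΛ₀pos (by positivity)))
      have hεtj : ε ≤ tj := min_le_left _ _
      have hε1 : ε ≤ 1 := le_trans (min_le_right _ _) (min_le_left _ _)
      have hεΛ : ε ≤ Λ₀ := le_trans (min_le_right _ _) (le_trans (min_le_right _ _) (min_le_left _ _))
      have hεr : ε ≤ r * Real.exp (-1) :=
        le_trans (min_le_right _ _) (le_trans (min_le_right _ _) (min_le_right _ _))
      have hsub : Set.Ioo (0:ℝ) ε ⊆ S := by
        rw [hSdef, hΛ0]; exact Set.Ioo_subset_Ioo le_rfl hεΛ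
      have hintS : IntegrableOn (fun ti => F ti tj) S volume := hint
      have hint' : IntegrableOn (fun ti => F ti tj) (Set.Ioo 0 ε) volume := hintS.mono_set hsub
      set c' : ℝ := P.coeff P.natDegree * (1/tj^(θj+1)) with hc'def
      have hc' : 0 < c' := by rw [hc'def]; positivity
      have hFlow : ∀ ti ∈ Set.Ioo (0:ℝ) ε, c' * (1/ti^2) ≤ F ti tj := by
        intro ti hti
        obtain ⟨ht0, htε⟩ := hti
        have hmin : min ti tj = ti := min_eq_left (le_trans htε.le hεtj)
        have hpow : 1/ti^2 ≤ 1/ti^(θi+1) :=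
          one_div_le_one_div_of_le (by positivity)
            (pow_le_pow_of_le_one ht0.le (le_trans htε.le hε1) (by omega))
        have hx1 : (1:ℝ) ≤ logPlus (max (r / min ti tj) (max ti tj / M)) := by
          have hrti : Real.exp 1 ≤ r / ti := by
            rw [le_div_iff₀ ht0]
            have h3 : ti < r * Real.exp (-1) := lt_of_lt_of_le htε hεr
            rw [Real.exp_neg] at h3
            have h4 : Real.exp 1 * ti < Real.exp 1 * (r * (Real.exp 1)⁻¹) :=
              mul_lt_mul_of_pos_left h3 (Real.exp_pos 1)
            have h5 : Real.exp 1 * (r * (Real.exp 1)⁻¹) = r := by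
              field_simp
            linarith
          rw [hmin]
          calc (1:ℝ) = Real.log (Real.exp 1) := (Real.log_exp 1).symm
            _ ≤ logPlus (max (r / ti) (max ti tj / M)) :=
              Real.log_le_log (Real.exp_pos 1)
                (le_trans (le_trans hrti (le_max_left _ _)) (le_max_right 1 _))
        have hPev : P.coeff P.natDegree
            ≤ P.eval (logPlus (max (r / min ti tj) (max ti tj / M))) :=
          single_coeff_le_eval P hPcoeff P.natDegree hx1
        have hexp1 : Real.exp (-K/(α*ti^2)) = 1 := by rw [hK0]; norm_num
        have hexp2 : Real.exp (-K/(α*tj^2)) = 1 := by rw [hK0]; norm_num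
        rw [hFdef]
        simp only
        rw [hexp1, hexp2]
        calc c' * (1/ti^2) = (1/ti^2 * (1/tj^(θj+1))) * P.coeff P.natDegree := by
              rw [hc'def]; ring
          _ ≤ (1/ti^(θi+1) * (1/tj^(θj+1)))
                * P.eval (logPlus (max (r / min ti tj) (max ti tj / M))) :=
              mul_le_mul (mul_le_mul_of_nonneg_right hpow (by positivity)) hPev hcm.le
                (by positivity)
          _ = 1/ti^(θi+1) * 1 * (1/tj^(θj+1) * 1)
                * P.eval (logPlus (max (r / min ti tj) (max ti tj / M))) := by ring
      have hri : IntegrableOn (fun ti : ℝ => 1/ti^2) (Set.Ioo 0 ε) volume := by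
        have hi2 : Integrable (fun ti => c'⁻¹ * F ti tj) (volume.restrict (Set.Ioo 0 ε)) :=
          hint'.const_mul _
        apply Integrable.mono hi2
          ((measurable_const.div (measurable_id.pow_const 2)).aestronglyMeasurable)
        apply (ae_restrict_iff' measurableSet_Ioo).2
        apply ae_of_all
        intro ti hti
        have h6 := hFlow ti hti
        have ht0 := hti.1
        have hF0' : 0 ≤ F ti tj := hF0 ti tj ht0 htj0
        show ‖(1:ℝ)/ti^2‖ ≤ ‖c'⁻¹ * F ti tj‖
        rw [Real.norm_eq_abs, Real.norm_eq_abs, abs_of_nonneg (by positivity : (0:ℝ) ≤ 1/ti^2),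
          abs_of_nonneg (by positivity : (0:ℝ) ≤ c'⁻¹ * F ti tj)]
        have h7 : c'⁻¹ * (c' * (1/ti^2)) ≤ c'⁻¹ * F ti tj :=
          mul_le_mul_of_nonneg_left h6 (inv_pos.mpr hc').le
        rw [← mul_assoc, inv_mul_cancel₀ (ne_of_gt hc'), one_mul] at h7
        exact h7
      have hri2 : IntegrableOn (fun ti : ℝ => ti ^ (-2:ℝ)) (Set.Ioo 0 ε) volume := by
        apply hri.congr_fun ?_ measurableSet_Ioo
        intro ti hti
        show (1:ℝ)/ti^2 = ti ^ (-2:ℝ)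
        rw [show (-2:ℝ) = -((2:ℕ):ℝ) by norm_num, Real.rpow_neg hti.1.le, Real.rpow_natCast,
          one_div]
      rw [intervalIntegral.integrableOn_Ioo_rpow_iff hε] at hri2
      norm_num at hri2
    have hzz : (∫⁻ tj in S, ENNReal.ofReal (∫ ti in S, F ti tj)) = 0 := by
      calc (∫⁻ tj in S, ENNReal.ofReal (∫ ti in S, F ti tj))
          = ∫⁻ _ in S, 0 := setLIntegral_congr_fun measurableSet_Ioo
            (fun tj htj => by simp only [hz tj htj, ENNReal.ofReal_zero])
        _ = 0 := lintegral_zero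
    rw [hzz]
    simpa using ENNReal.toReal_nonneg

theorem stmt10 (n : ℕ) (P : Polynomial ℝ) (hPdeg : P.natDegree ≤ n)
    (hPcoeff : ∀ i, 0 ≤ P.coeff i) :
    ∃ P' : Polynomial ℝ, P'.natDegree ≤ n ∧ (∀ i, 0 ≤ P'.coeff i) ∧
      ∀ (α : ℝ), 0 < α → ∀ (θi θj : ℕ), 1 ≤ θi → 1 ≤ θj →
        ∀ (k : EuclideanSpace ℝ (Fin 4)) (M r Λ Λ₀ : ℝ),
          0 < M → M ≤ r → 0 ≤ Λ → Λ ≤ Λ₀ →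
          (∫ tj in Set.Ioo Λ Λ₀, ∫ ti in Set.Ioo Λ Λ₀,
              (1 / ti ^ (θi + 1)) * Real.exp (-‖k‖ ^ 2 / (α * ti ^ 2)) *
                ((1 / tj ^ (θj + 1)) * Real.exp (-‖k‖ ^ 2 / (α * tj ^ 2))) *
                P.eval (logPlus (max (r / min ti tj) (max ti tj / M))))
            ≤ ∫ t in Set.Ioo Λ Λ₀,
                (1 / t ^ (θi + θj + 1)) * Real.exp (-‖k‖ ^ 2 / (α * t ^ 2)) *
                  P'.eval (logPlus (max (r / t) (t / M))) := by
  refine ⟨Polynomial.C (4 * (∑ i ∈ Finset.range (n+1), P.coeff i) * (1 + 2*(n:ℝ))^n) *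
      (Polynomial.X + 1)^n, ?_, ?_, ?_⟩
  · calc (Polynomial.C (4 * (∑ i ∈ Finset.range (n+1), P.coeff i) * (1 + 2*(n:ℝ))^n) *
        (Polynomial.X + 1)^n).natDegree
        ≤ ((Polynomial.X + 1 : Polynomial ℝ)^n).natDegree := Polynomial.natDegree_C_mul_le _ _
      _ ≤ n * (Polynomial.X + 1 : Polynomial ℝ).natDegree := Polynomial.natDegree_pow_le
      _ ≤ n := by
          have : (Polynomial.X + 1 : Polynomial ℝ).natDegree = 1 := by
            rw [← Polynomial.C_1]
            exact Polynomial.natDegree_X_add_C 1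
          rw [this, mul_one]
  · intro i
    rw [Polynomial.coeff_C_mul, Polynomial.coeff_X_add_one_pow]
    have hC : (0:ℝ) ≤ ∑ i ∈ Finset.range (n+1), P.coeff i :=
      Finset.sum_nonneg fun i _ => hPcoeff i
    positivity
  · intro α hα θi θj hθi hθj k M r Λ Λ₀ hM hMr hΛ hΛΛ
    have hKey := main_aux n P hPdeg hPcoeff α hα θi θj hθi hθj (‖k‖^2) (by positivity)
      M r Λ Λ₀ hM hMr hΛ hΛΛ
    simp only [Polynomial.eval_mul, Polynomial.eval_C, Polynomial.eval_pow,
      Polynomial.eval_add, Polynomial.eval_X, Polynomial.eval_one]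
    exact hKey
end

section
/- Let s ≥ 1 be a real number, n ∈ ℕ, M > 0, and let a, Λ₀ be reals with 0 < a ≤ Λ₀. Then ∫_{max(a,M)}^{Λ₀} λ^{−s−1} ( log(λ/M) )ⁿ dλ ≤ a^{−s} · Σ_{j=0}^{n} ( n! / (j! · s^{n−j+1}) ) · ( log₊(a/M) )^j, where the integral is understood as the Lebesgue integral over the set of λ with max(a,M) < λ < Λ₀ (equal to 0 if this set is empty). -/
open MeasureTheory Real

lemma tele14 (s : ℝ) (hs : s ≠ 0) (n : ℕ) (L : ℝ) :
    ∑ j ∈ Finset.range (n + 1),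
      (Nat.factorial n : ℝ) / ((Nat.factorial j : ℝ) * s ^ (n - j + 1)) *
        (s * L ^ j - j * L ^ (j - 1)) = L ^ n := by
  set g : ℕ → ℝ := fun j => (Nat.factorial n : ℝ) / ((Nat.factorial j : ℝ) * s ^ (n - j)) * L ^ j
    with hg
  have key : ∀ i ∈ Finset.range n,
      (Nat.factorial n : ℝ) / ((Nat.factorial (i + 1) : ℝ) * s ^ (n - (i + 1) + 1)) *
        (s * L ^ (i + 1) - (↑(i + 1)) * L ^ (i + 1 - 1)) = g (i + 1) - g i := by
    intro i hi
    have hi' : i < n := Finset.mem_range.1 hi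
    have h1 : n - (i + 1) + 1 = n - i := by omega
    have h2 : n - i = (n - (i + 1)) + 1 := by omega
    have hfi : (Nat.factorial i : ℝ) ≠ 0 := Nat.cast_ne_zero.2 i.factorial_ne_zero
    simp only [hg, Nat.add_sub_cancel]
    rw [h1, h2, pow_succ, Nat.factorial_succ]
    push_cast
    field_simp
  rw [Finset.sum_range_succ', Finset.sum_congr rfl key, Finset.sum_range_sub g]
  have hgn : g n = L ^ n := by
    simp [hg, Nat.sub_self, Nat.cast_ne_zero.2 n.factorial_ne_zero]
  have hg0 : (Nat.factorial n : ℝ) / ((Nat.factorial 0 : ℝ) * s ^ (n - 0 + 1)) *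
      (s * L ^ 0 - (0 : ℕ) * L ^ (0 - 1)) = g 0 := by
    simp only [hg, Nat.factorial_zero, Nat.sub_zero, pow_succ]
    push_cast
    field_simp
    ring
  rw [hg0, hgn]
  ring

theorem stmt14 (s : ℝ) (hs : 1 ≤ s) (n : ℕ) (M a Λ₀ : ℝ)
    (hM : 0 < M) (ha : 0 < a) (haΛ : a ≤ Λ₀) :
    (∫ t in Set.Ioo (max a M) Λ₀, t ^ (-s - 1) * Real.log (t / M) ^ n)
      ≤ a ^ (-s) *
        ∑ j ∈ Finset.range (n + 1),
          ((Nat.factorial n : ℝ) / ((Nat.factorial j : ℝ) * s ^ (n - j + 1))) *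
            logPlus (a / M) ^ j := by
  have hs0 : 0 < s := lt_of_lt_of_le one_pos hs
  set b := max a M with hb
  have hb0 : 0 < b := lt_of_lt_of_le ha (le_max_left a M)
  have hMb : M ≤ b := le_max_right a M
  have hab : a ≤ b := le_max_left a M
  set c : ℕ → ℝ := fun j =>
    (Nat.factorial n : ℝ) / ((Nat.factorial j : ℝ) * s ^ (n - j + 1)) with hc
  have hcnn : ∀ j, 0 ≤ c j := by
    intro j; apply div_nonneg (by positivity); positivity
  have hlogb : logPlus (a / M) = Real.log (b / M) := by
    unfold logPlus
    congr 1
    rw [hb, ← max_div_div_right hM.le, div_self hM.ne', max_comm]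
  have hlogbnn : 0 ≤ Real.log (b / M) := by
    apply Real.log_nonneg
    rw [le_div_iff₀ hM]; simpa using hMb
  have hsumnn : 0 ≤ ∑ j ∈ Finset.range (n + 1), c j * Real.log (b / M) ^ j := by
    apply Finset.sum_nonneg; intro j _; exact mul_nonneg (hcnn j) (pow_nonneg hlogbnn j)
  have hRHS : b ^ (-s) * ∑ j ∈ Finset.range (n + 1), c j * Real.log (b / M) ^ j
      ≤ a ^ (-s) * ∑ j ∈ Finset.range (n + 1), c j * logPlus (a / M) ^ j := by
    rw [hlogb]
    exact mul_le_mul_of_nonneg_right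
      (Real.rpow_le_rpow_of_nonpos ha hab (neg_nonpos.2 hs0.le)) hsumnn
  rcases le_or_gt Λ₀ b with hΛb | hbΛ
  · rw [Set.Ioo_eq_empty (not_lt.2 hΛb), MeasureTheory.setIntegral_empty]
    calc (0:ℝ) ≤ b ^ (-s) * ∑ j ∈ Finset.range (n + 1), c j * Real.log (b / M) ^ j :=
          mul_nonneg (Real.rpow_nonneg hb0.le _) hsumnn
      _ ≤ _ := hRHS
  · -- main case
    have huIcc : Set.uIcc b Λ₀ = Set.Icc b Λ₀ := Set.uIcc_of_le hbΛ.le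
    set F : ℝ → ℝ := fun t =>
      ∑ j ∈ Finset.range (n + 1), -(c j * (t ^ (-s) * Real.log (t / M) ^ j)) with hF
    have hderiv : ∀ t ∈ Set.uIcc b Λ₀,
        HasDerivAt F (t ^ (-s - 1) * Real.log (t / M) ^ n) t := by
      intro t ht
      rw [huIcc] at ht
      have ht0 : 0 < t := lt_of_lt_of_le hb0 ht.1
      have hL : HasDerivAt (fun t => Real.log (t / M)) (1 / t) t := by
        have h := (((hasDerivAt_id t).div_const M).log
          (by positivity : t / M ≠ 0))
        convert h using 1
        · rfl
        · simp only [id]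
          field_simp
      have hrp : HasDerivAt (fun t : ℝ => t ^ (-s)) (-s * t ^ (-s - 1)) t :=
        Real.hasDerivAt_rpow_const (Or.inl ht0.ne')
      have hterm : ∀ j ∈ Finset.range (n + 1),
          HasDerivAt (fun t => -(c j * (t ^ (-s) * Real.log (t / M) ^ j)))
            (-(c j * ((-s * t ^ (-s - 1)) * Real.log (t / M) ^ j +
              t ^ (-s) * ((j : ℝ) * Real.log (t / M) ^ (j - 1) * (1 / t))))) t := by
        intro j _
        exact ((hrp.mul (hL.pow j)).const_mul (c j)).neg
      have hsum := HasDerivAt.sum hterm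
      convert hsum using 1
      · rfl
      · rfl
      · ext x
        simp only [hF, Finset.sum_apply]
      have hts : t ^ (-s) = t ^ (-s - 1) * t := by
        rw [← Real.rpow_add_one ht0.ne' (-s - 1)]
        norm_num
      rw [show (∑ j ∈ Finset.range (n + 1),
          -(c j * ((-s * t ^ (-s - 1)) * Real.log (t / M) ^ j +
            t ^ (-s) * ((j : ℝ) * Real.log (t / M) ^ (j - 1) * (1 / t)))))
          = t ^ (-s - 1) * ∑ j ∈ Finset.range (n + 1),
              c j * (s * Real.log (t / M) ^ j - (j : ℝ) * Real.log (t / M) ^ (j - 1)) from ?_]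
      · rw [tele14 s hs0.ne' n]
      · rw [Finset.mul_sum]
        apply Finset.sum_congr rfl
        intro j _
        rw [hts]
        field_simp
        ring
    have hcont : ContinuousOn (fun t : ℝ => t ^ (-s - 1) * Real.log (t / M) ^ n)
        (Set.uIcc b Λ₀) := by
      rw [huIcc]
      have hpos : ∀ t ∈ Set.Icc b Λ₀, t ≠ 0 :=
        fun t ht => (lt_of_lt_of_le hb0 ht.1).ne'
      apply ContinuousOn.mul
      · exact ContinuousOn.rpow_const continuousOn_id (fun t ht => Or.inl (hpos t ht))
      · exact ((continuousOn_id.div_const M).log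
          (fun t ht => by have := hpos t ht; positivity)).pow n
    have hFTC := intervalIntegral.integral_eq_sub_of_hasDerivAt hderiv
      (hcont.intervalIntegrable)
    have hInt : (∫ t in Set.Ioo b Λ₀, t ^ (-s - 1) * Real.log (t / M) ^ n) = F Λ₀ - F b := by
      rw [← MeasureTheory.integral_Ioc_eq_integral_Ioo,
        ← intervalIntegral.integral_of_le hbΛ.le]
      exact hFTC
    rw [hInt]
    have hFΛ : F Λ₀ ≤ 0 := by
      apply Finset.sum_nonpos
      intro j _
      rw [neg_nonpos]
      have hΛM : 0 ≤ Real.log (Λ₀ / M) := by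
        apply Real.log_nonneg
        rw [le_div_iff₀ hM]
        simpa using le_trans hMb hbΛ.le
      have : (0:ℝ) < Λ₀ := lt_trans hb0 hbΛ
      positivity
    have hFb : -F b = b ^ (-s) * ∑ j ∈ Finset.range (n + 1), c j * Real.log (b / M) ^ j := by
      simp only [hF, ← Finset.sum_neg_distrib, neg_neg, Finset.mul_sum]
      apply Finset.sum_congr rfl
      intro j _
      ring
    calc F Λ₀ - F b ≤ -F b := by linarith
      _ = b ^ (-s) * ∑ j ∈ Finset.range (n + 1), c j * Real.log (b / M) ^ j := hFb
      _ ≤ _ := hRHS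
end
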